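/- arXiv:1711.06963 — 6 statements merged into one kernel-verified Lean document; each statement's English description precedes it below -/
import Mathlib

section
/- Let P be a (J⁺,J⁻) sign-pattern polyhedron in ℝⁿ defined by a rational matrix A ∈ ℚ^{m×n} and rational vector b ∈ ℚ^m. Then the original 1-row closure 1-𝒜(P) is contained in 2·𝒜(P), i.e., the aggregation closure is 2-approximated by the original 1-row closure. -/
open scoped Pointwise

/-- The constraint matrix of a `(J⁺,J⁻)` sign-pattern polyhedron: the nonnegative
rational matrix `A` with the columns in `J⁻` (i.e. outside `Jp`) negated, cast to `ℝ`. -/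
noncomputable def signedRow {m n : ℕ} (A : Matrix (Fin m) (Fin n) ℚ)
    (Jp : Finset (Fin n)) (i : Fin m) (j : Fin n) : ℝ :=
  if j ∈ Jp then (A i j : ℝ) else -(A i j : ℝ)

/-- The `(J⁺,J⁻)` sign-pattern polyhedron `P = {x ≥ 0 : Σ_{j∈J⁺} A_{ij} x_j − Σ_{j∈J⁻} A_{ij} x_j ≤ b_i ∀ i}`. -/
noncomputable def signPatternPoly {m n : ℕ} (A : Matrix (Fin m) (Fin n) ℚ) (b : Fin m → ℚ)
    (Jp : Finset (Fin n)) : Set (Fin n → ℝ) :=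
  {x | (∀ j, 0 ≤ x j) ∧ ∀ i, ∑ j, signedRow A Jp i j * x j ≤ (b i : ℝ)}

/-- `P^I(λ)`: the convex hull of the nonnegative integer points satisfying the
aggregated constraint `λᵀAx ≤ λᵀb`. -/
noncomputable def aggIntHull {m n : ℕ} (A : Matrix (Fin m) (Fin n) ℚ) (b : Fin m → ℚ)
    (Jp : Finset (Fin n)) (lam : Fin m → ℝ) : Set (Fin n → ℝ) :=
  convexHull ℝ {x | (∀ j, 0 ≤ x j) ∧ (∀ j, ∃ z : ℤ, x j = (z : ℝ)) ∧
    ∑ i, lam i * ∑ j, signedRow A Jp i j * x j ≤ ∑ i, lam i * (b i : ℝ)}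

/-- The aggregation closure `𝒜(P) = ∩_{λ ≥ 0} P^I(λ)`. -/
noncomputable def aggClosure {m n : ℕ} (A : Matrix (Fin m) (Fin n) ℚ) (b : Fin m → ℚ)
    (Jp : Finset (Fin n)) : Set (Fin n → ℝ) :=
  ⋂ lam ∈ {l : Fin m → ℝ | ∀ i, 0 ≤ l i}, aggIntHull A b Jp lam

/-- The original 1-row closure `1-𝒜(P) = ∩_{i∈[m]} P^I(e_i)`. -/
noncomputable def row1Closure {m n : ℕ} (A : Matrix (Fin m) (Fin n) ℚ) (b : Fin m → ℚ)
    (Jp : Finset (Fin n)) : Set (Fin n → ℝ) :=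
  ⋂ i : Fin m, aggIntHull A b Jp (Pi.single i 1)


open Finset in
private lemma floor_bounds {c d : ℝ} (hc : 0 < c) (hcd : c ≤ d) :
    d / 2 < c * (⌊d / c⌋ : ℝ) ∧ c * (⌊d / c⌋ : ℝ) ≤ d ∧ 1 ≤ ⌊d / c⌋ := by
  have h1 : (1:ℝ) ≤ d / c := (one_le_div hc).mpr hcd
  have hN : (1:ℤ) ≤ ⌊d / c⌋ := Int.le_floor.mpr (by push_cast; linarith)
  have hfl : (⌊d / c⌋ : ℝ) ≤ d / c := Int.floor_le _
  have hub : c * (⌊d / c⌋ : ℝ) ≤ d := by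
    have := mul_le_mul_of_nonneg_left hfl hc.le
    calc c * (⌊d/c⌋:ℝ) ≤ c * (d/c) := this
    _ = d := by field_simp
  refine ⟨?_, hub, hN⟩
  by_contra h
  push_neg at h
  have h2 : ((2 * ⌊d/c⌋ : ℤ) : ℝ) ≤ d / c := by
    rw [le_div_iff₀ hc]
    push_cast
    nlinarith
  have h3 : (2 * ⌊d/c⌋ : ℤ) ≤ ⌊d/c⌋ := Int.le_floor.mpr h2
  omega


open Finset in
set_option maxHeartbeats 2000000 in
private lemma key_lemma {n : ℕ} (Jp : Finset (Fin n)) (c : Fin n → ℝ) (d : ℝ)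
    (hc : ∀ j, 0 ≤ c j) (hd : 0 ≤ d) (hcd : ∀ j ∈ Jp, c j ≤ d)
    (u : Fin n → ℝ) (hu : ∀ j, 0 ≤ u j)
    (hs : ∑ j, (if j ∈ Jp then c j else -c j) * u j ≤ d / 2) :
    u ∈ convexHull ℝ {x : Fin n → ℝ | (∀ j, 0 ≤ x j) ∧ (∀ j, ∃ z : ℤ, x j = (z : ℝ)) ∧
      ∑ j, (if j ∈ Jp then c j else -c j) * x j ≤ d} := by
  classical
  -- splitting signed sums
  have hsplit : ∀ x : Fin n → ℝ, ∑ j, (if j ∈ Jp then c j else -c j) * x j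
      = ∑ j ∈ Jp, c j * x j - ∑ j ∈ Jpᶜ, c j * x j := by
    intro x
    rw [← Finset.sum_add_sum_compl Jp (fun j => (if j ∈ Jp then c j else -c j) * x j)]
    have h1 : ∑ j ∈ Jp, (if j ∈ Jp then c j else -c j) * x j = ∑ j ∈ Jp, c j * x j :=
      Finset.sum_congr rfl (fun j hj => by rw [if_pos hj])
    have h2 : ∑ j ∈ Jpᶜ, (if j ∈ Jp then c j else -c j) * x j
        = -∑ j ∈ Jpᶜ, c j * x j := by
      rw [← Finset.sum_neg_distrib]
      exact Finset.sum_congr rfl (fun j hj => by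
        rw [if_neg (Finset.mem_compl.mp hj), neg_mul])
    rw [h1, h2]; ring
  set G := ∑ j ∈ Jp, c j * u j with hGdef
  set R := ∑ j ∈ Jpᶜ, c j * u j with hRdef
  have hG0 : 0 ≤ G := Finset.sum_nonneg fun j _ => mul_nonneg (hc j) (hu j)
  have hR0 : 0 ≤ R := Finset.sum_nonneg fun j _ => mul_nonneg (hc j) (hu j)
  have hGR : G - R ≤ d / 2 := by have h := hs; rw [hsplit u] at h; linarith
  set β := if G ≤ R then (1:ℝ) else R / G with hβdef
  have hβ0 : 0 ≤ β := by
    rw [hβdef]; split_ifs with h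
    · norm_num
    · exact div_nonneg hR0 hG0
  have hβ1 : β ≤ 1 := by
    rw [hβdef]; split_ifs with h
    · exact le_refl 1
    · exact (div_le_one (lt_of_le_of_lt hR0 (not_le.mp h))).mpr (not_le.mp h).le
  have hβG : β * G = min G R := by
    rw [hβdef]; split_ifs with h
    · rw [one_mul, min_eq_left h]
    · have hGpos : 0 < G := lt_of_le_of_lt hR0 (not_le.mp h)
      rw [div_mul_cancel₀ _ hGpos.ne', min_eq_right (le_of_lt (not_le.mp h))]
  have hβGR : β * G ≤ R := by rw [hβG]; exact min_le_right _ _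
  set q : Fin n → ℝ := fun j => if j ∈ Jp then β * u j else 0 with hqdef
  have hq0 : ∀ j, 0 ≤ q j := by
    intro j; rw [hqdef]; dsimp only; split_ifs
    · exact mul_nonneg hβ0 (hu j)
    · exact le_refl 0
  have hqu : ∀ j, q j ≤ u j := by
    intro j; rw [hqdef]; dsimp only; split_ifs
    · nlinarith [hu j]
    · exact hu j
  have hcq : ∑ j ∈ Jp, c j * q j = β * G := by
    rw [hGdef, Finset.mul_sum]
    refine Finset.sum_congr rfl fun j hj => ?_
    rw [hqdef]; dsimp only; rw [if_pos hj]; ring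
  have hρle : ∑ j ∈ Jp, c j * (u j - q j) ≤ d / 2 := by
    have he : ∑ j ∈ Jp, c j * (u j - q j) = G - β * G := by
      rw [hGdef, ← hcq, ← Finset.sum_sub_distrib]
      exact Finset.sum_congr rfl fun j hj => by ring
    rw [he, hβG]
    rcases le_total G R with h | h
    · rw [min_eq_left h]; linarith
    · rw [min_eq_right h]; linarith
  set E := ∑ j ∈ Jp, c j with hEdef
  have hE0 : 0 ≤ E := Finset.sum_nonneg fun j _ => hc j
  set U := ∑ j, u j with hUdef
  have hU0 : 0 ≤ U := Finset.sum_nonneg fun j _ => hu j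
  set B' := Jp.filter (fun j => c j ≠ 0) with hB'def
  have hcpos : ∀ j ∈ B', 0 < c j := fun j hj =>
    lt_of_le_of_ne (hc j) (Ne.symm (Finset.mem_filter.mp hj).2)
  have hB'Jp : ∀ j ∈ B', j ∈ Jp := fun j hj => (Finset.mem_filter.mp hj).1
  set m := if hB : B'.Nonempty then B'.inf' hB (fun j => c j * (⌊d / c j⌋ : ℝ)) else d + 1
    with hmdef
  have hm_half : d / 2 < m := by
    rw [hmdef]; split_ifs with hB
    · rw [Finset.lt_inf'_iff]
      intro j hj
      exact (floor_bounds (hcpos j hj) (hcd j (hB'Jp j hj))).1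
    · linarith
  have hm0 : 0 < m := lt_of_le_of_lt (by linarith : (0:ℝ) ≤ d / 2) hm_half
  have hmle : ∀ j ∈ B', m ≤ c j * (⌊d / c j⌋ : ℝ) := by
    intro j hj
    rw [hmdef, dif_pos ⟨j, hj⟩]
    exact Finset.inf'_le _ hj
  set η := 1 - d / (2 * m) with hηdef
  have hη : 0 < η := by
    rw [hηdef]
    have : d / (2 * m) < 1 := by
      rw [div_lt_one (by linarith)]
      linarith
    linarith
  set k : ℕ := ⌈U * (2 + E / m) / η⌉₊ + 1 with hkdef
  have hk0 : (0:ℝ) < (k:ℝ) := by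
    rw [hkdef]; push_cast; positivity
  have hkb : U * (2 + E / m) ≤ η * k := by
    have h1 : U * (2 + E/m) / η ≤ (⌈U * (2 + E/m) / η⌉₊ : ℝ) := Nat.le_ceil _
    have h2 : ((⌈U * (2 + E/m) / η⌉₊ : ℕ) : ℝ) ≤ (k:ℝ) := by rw [hkdef]; push_cast; linarith
    have := h1.trans h2
    calc U*(2+E/m) = (U*(2+E/m)/η)*η := by rw [div_mul_cancel₀ _ hη.ne']
    _ ≤ (k:ℝ)*η := mul_le_mul_of_nonneg_right this hη.le
    _ = η*k := mul_comm _ _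
  set Kk : Fin n → ℤ := fun j => if c j = 0 then (k:ℤ) else ⌊d / c j⌋ with hKdef
  have hK1 : ∀ j ∈ Jp, 1 ≤ Kk j := by
    intro j hj
    rw [hKdef]; dsimp only; split_ifs with h
    · exact_mod_cast Nat.one_le_iff_ne_zero.mpr (by rw [hkdef]; omega)
    · exact (floor_bounds (lt_of_le_of_ne (hc j) (Ne.symm h)) (hcd j hj)).2.2
  have hKpos : ∀ j ∈ Jp, (0:ℝ) < (Kk j : ℝ) := by
    intro j hj
    exact_mod_cast lt_of_lt_of_le zero_lt_one (by exact_mod_cast hK1 j hj)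
  have hKd : ∀ j ∈ Jp, c j * (Kk j : ℝ) ≤ d := by
    intro j hj
    rw [hKdef]; dsimp only; split_ifs with h
    · rw [h, zero_mul]; exact hd
    · exact (floor_bounds (lt_of_le_of_ne (hc j) (Ne.symm h)) (hcd j hj)).2.1
  have hKm : ∀ j ∈ B', m ≤ c j * (Kk j : ℝ) := by
    intro j hj
    rw [hKdef]; dsimp only; rw [if_neg (Finset.mem_filter.mp hj).2]
    exact hmle j hj
  set W := ∑ j ∈ Jpᶜ, u j / k with hWdef
  have hW0 : 0 ≤ W := Finset.sum_nonneg fun j _ => div_nonneg (hu j) hk0.le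
  have hWU : W ≤ U / k := by
    rw [hWdef, hUdef, Finset.sum_div]
    exact Finset.sum_le_sum_of_subset_of_nonneg (Finset.subset_univ _)
      (fun j _ _ => div_nonneg (hu j) hk0.le)
  set cov : Fin n → ℝ := fun j => ∑ j' ∈ Jpᶜ, (u j' / k) * (⌊((k:ℝ) * c j' / R) * q j⌋ : ℝ)
    with hcovdef
  have hfl0 : ∀ j' j : Fin n, (0:ℝ) ≤ (⌊((k:ℝ) * c j' / R) * q j⌋ : ℝ) := by
    intro j' j
    have harg : (0:ℝ) ≤ ((k:ℝ) * c j' / R) * q j :=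
      mul_nonneg (div_nonneg (mul_nonneg hk0.le (hc j')) hR0) (hq0 j)
    exact_mod_cast Int.floor_nonneg.mpr harg
  have hcov0 : ∀ j, 0 ≤ cov j := by
    intro j
    exact Finset.sum_nonneg fun j' _ =>
      mul_nonneg (div_nonneg (hu j') hk0.le) (hfl0 j' j)
  -- upper bound on the carrier coverage
  have hcovq : ∀ j, cov j ≤ q j := by
    intro j
    by_cases hR : R = 0
    · have hz : cov j = 0 := by
        rw [hcovdef]
        refine Finset.sum_eq_zero fun j' _ => ?_
        rw [hR, div_zero, zero_mul, Int.floor_zero]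
        simp
      rw [hz]; exact hq0 j
    · have hRpos : 0 < R := lt_of_le_of_ne hR0 (Ne.symm hR)
      have hterm : ∀ j' ∈ Jpᶜ, (u j' / k) * (⌊((k:ℝ) * c j' / R) * q j⌋ : ℝ)
          ≤ (c j' * u j') * (q j / R) := by
        intro j' _
        have hfl : (⌊((k:ℝ) * c j' / R) * q j⌋ : ℝ) ≤ ((k:ℝ) * c j' / R) * q j :=
          Int.floor_le _
        have h0 : 0 ≤ u j' / k := div_nonneg (hu j') hk0.le
        calc (u j' / k) * (⌊((k:ℝ) * c j' / R) * q j⌋ : ℝ)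
            ≤ (u j' / k) * (((k:ℝ) * c j' / R) * q j) := mul_le_mul_of_nonneg_left hfl h0
        _ = (c j' * u j') * (q j / R) := by field_simp
      calc cov j ≤ ∑ j' ∈ Jpᶜ, (c j' * u j') * (q j / R) := Finset.sum_le_sum hterm
      _ = R * (q j / R) := by rw [← Finset.sum_mul, ← hRdef]
      _ = q j := by field_simp
  have hπkey : ∀ j ∈ Jp, c j * (q j - cov j) ≤ c j * W := by
    intro j hj
    by_cases hR : R = 0
    · have hcq0 : c j * q j = 0 := by
        rw [hqdef]; dsimp only; rw [if_pos hj, hβdef]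
        split_ifs with hGle
        · have hGz : G = 0 := le_antisymm (by rw [← hR]; exact hGle) hG0
          have := (Finset.sum_eq_zero_iff_of_nonneg
            (fun j'' _ => mul_nonneg (hc j'') (hu j''))).mp hGz.symm.symm j hj
          -- this : c j * u j = 0
          calc c j * (1 * u j) = c j * u j := by ring
          _ = 0 := this
        · have hGpos : 0 < G := lt_of_le_of_lt hR0 (not_le.mp hGle)
          rw [hR, zero_div]
          ring
      have h1 : 0 ≤ c j * cov j := mul_nonneg (hc j) (hcov0 j)
      have h2 : 0 ≤ c j * W := mul_nonneg (hc j) hW0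
      nlinarith [hcq0]
    · have hRpos : 0 < R := lt_of_le_of_ne hR0 (Ne.symm hR)
      have hlow : q j - W ≤ cov j := by
        have hterm : ∀ j' ∈ Jpᶜ, (c j' * u j') * (q j / R) - u j' / k
            ≤ (u j' / k) * (⌊((k:ℝ) * c j' / R) * q j⌋ : ℝ) := by
          intro j' _
          have hfl : ((k:ℝ) * c j' / R) * q j - 1 ≤ (⌊((k:ℝ) * c j' / R) * q j⌋ : ℝ) :=
            (Int.sub_one_lt_floor _).le
          have h0 : 0 ≤ u j' / k := div_nonneg (hu j') hk0.le
          have := mul_le_mul_of_nonneg_left hfl h0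
          calc (c j' * u j') * (q j / R) - u j' / k
              = (u j' / k) * ((((k:ℝ) * c j' / R) * q j) - 1) := by field_simp
          _ ≤ _ := this
        have hsum := Finset.sum_le_sum hterm
        rw [Finset.sum_sub_distrib, ← Finset.sum_mul, ← hRdef] at hsum
        have : R * (q j / R) = q j := by field_simp
        rw [this] at hsum
        rw [hcovdef]
        exact le_trans (by rw [hWdef]) hsum
      have := mul_le_mul_of_nonneg_left (by linarith [hlow] : q j - cov j ≤ W) (hc j)
      linarith
  set π : Fin n → ℝ := fun j => u j - cov j with hπdef
  have hπ0 : ∀ j, 0 ≤ π j := by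
    intro j; rw [hπdef]; dsimp only
    linarith [hcovq j, hqu j]
  have hπu : ∀ j, π j ≤ u j := by
    intro j; rw [hπdef]; dsimp only
    linarith [hcov0 j]
  -- bound on packer weights
  have hπsum : ∑ j ∈ Jp, π j / (Kk j : ℝ) ≤ (d/2 + E*W)/m + U/(k:ℝ) := by
    rw [← Finset.sum_filter_add_sum_filter_not Jp (fun j => c j ≠ 0)]
    have hb2 : ∑ j ∈ Jp.filter (fun j => ¬ c j ≠ 0), π j / (Kk j : ℝ) ≤ U/(k:ℝ) := by
      have he : ∀ j ∈ Jp.filter (fun j => ¬ c j ≠ 0), π j / (Kk j : ℝ) = π j / (k:ℝ) := by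
        intro j hj
        have := (Finset.mem_filter.mp hj).2
        rw [hKdef]; dsimp only
        rw [if_pos (not_not.mp this)]
        norm_num
      rw [Finset.sum_congr rfl he]
      calc ∑ j ∈ Jp.filter (fun j => ¬ c j ≠ 0), π j / (k:ℝ)
          ≤ ∑ j ∈ Jp.filter (fun j => ¬ c j ≠ 0), u j / (k:ℝ) := by
            exact Finset.sum_le_sum fun j _ => (div_le_div_iff_of_pos_right hk0).mpr (hπu j)
      _ ≤ ∑ j, u j / (k:ℝ) :=
            Finset.sum_le_sum_of_subset_of_nonneg (Finset.subset_univ _)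
              (fun j _ _ => div_nonneg (hu j) hk0.le)
      _ = U/(k:ℝ) := by rw [hUdef, Finset.sum_div]
    have hb1 : ∑ j ∈ B', π j / (Kk j : ℝ) ≤ (d/2 + E*W)/m := by
      have hstep : ∀ j ∈ B', π j / (Kk j : ℝ) ≤ (c j * π j)/m := by
        intro j hj
        have hcj : 0 < c j := hcpos j hj
        have heq : π j / (Kk j : ℝ) = (c j * π j) / (c j * (Kk j:ℝ)) := by
          rw [mul_div_mul_left _ _ hcj.ne']
        rw [heq]
        exact div_le_div_of_nonneg_left (mul_nonneg hcj.le (hπ0 j)) hm0 (hKm j hj)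
      calc ∑ j ∈ B', π j / (Kk j : ℝ) ≤ ∑ j ∈ B', (c j * π j)/m :=
            Finset.sum_le_sum hstep
      _ = (∑ j ∈ B', c j * π j)/m := by rw [Finset.sum_div]
      _ ≤ (d/2 + E*W)/m := by
            refine (div_le_div_iff_of_pos_right hm0).mpr ?_
            calc ∑ j ∈ B', c j * π j ≤ ∑ j ∈ Jp, c j * π j := by
                  refine Finset.sum_le_sum_of_subset_of_nonneg
                    (Finset.filter_subset _ _) (fun j _ _ => mul_nonneg (hc j) (hπ0 j))
            _ ≤ ∑ j ∈ Jp, (c j * (u j - q j) + c j * W) := by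
                  refine Finset.sum_le_sum fun j hj => ?_
                  have h1 := hπkey j hj
                  have : c j * π j = c j * (u j - q j) + c j * (q j - cov j) := by
                    rw [hπdef]; ring
                  linarith
            _ = (∑ j ∈ Jp, c j * (u j - q j)) + E * W := by
                  rw [Finset.sum_add_distrib, hEdef, Finset.sum_mul]
            _ ≤ d/2 + E*W := by linarith [hρle]
    rw [← hB'def]
    linarith
  -- total weight is at most 1
  set wN := 1 - (W + ∑ j ∈ Jp, π j / (Kk j : ℝ)) with hwNdef
  have hwN0 : 0 ≤ wN := by
    have h4 : (U/(k:ℝ))*(2 + E/m) ≤ η := by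
      rw [div_mul_eq_mul_div, div_le_iff₀ hk0]
      calc U * (2 + E/m) ≤ η * k := hkb
      _ = η * k := rfl
    have h4' : 2*(U/(k:ℝ)) + E*(U/(k:ℝ))/m ≤ η := by
      have : (U/(k:ℝ))*(2 + E/m) = 2*(U/(k:ℝ)) + E*(U/(k:ℝ))/m := by ring
      linarith [h4, this.symm.le, this.le]
    have hB : (d/2 + E*W)/m ≤ d/(2*m) + E*(U/(k:ℝ))/m := by
      rw [add_div, div_div]
      have : E*W/m ≤ E*(U/(k:ℝ))/m :=
        (div_le_div_iff_of_pos_right hm0).mpr (mul_le_mul_of_nonneg_left hWU hE0)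
      linarith
    have hsum' : W + ∑ j ∈ Jp, π j / (Kk j : ℝ)
        ≤ d/(2*m) + 2*(U/(k:ℝ)) + E*(U/(k:ℝ))/m := by
      have := hπsum
      linarith [hWU]
    rw [hwNdef, hηdef] at *
    linarith [hsum', h4']
  -- the convex combination
  set wt : Option (Fin n) → ℝ := fun o =>
    Option.elim o wN (fun j => if j ∈ Jp then π j / (Kk j : ℝ) else u j / (k:ℝ)) with hwtdef
  set pt : Option (Fin n) → (Fin n → ℝ) := fun o =>
    Option.elim o (fun _ => (0:ℝ))
      (fun j j' => if j ∈ Jp then (if j' = j then ((Kk j : ℝ)) else 0)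
        else (if j' = j then ((k:ℕ):ℝ)
          else if j' ∈ Jp then ((⌊((k:ℝ) * c j / R) * q j'⌋ : ℤ):ℝ) else 0)) with hptdef
  have hwtnone : wt none = wN := rfl
  have hwtsome : ∀ j, wt (some j)
      = if j ∈ Jp then π j / (Kk j : ℝ) else u j / (k:ℝ) := fun j => rfl
  have hptnone : pt none = fun _ => (0:ℝ) := rfl
  have hptsome : ∀ j, pt (some j) = fun j' =>
      if j ∈ Jp then (if j' = j then ((Kk j : ℝ)) else 0)
      else (if j' = j then ((k:ℕ):ℝ)
        else if j' ∈ Jp then ((⌊((k:ℝ) * c j / R) * q j'⌋ : ℤ):ℝ) else 0) := fun j => rfl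
  have hwsum : ∑ o : Option (Fin n), wt o = 1 := by
    rw [Fintype.sum_option]
    have hsome : ∑ j : Fin n, wt (some j) = (∑ j ∈ Jp, π j / (Kk j : ℝ)) + W := by
      rw [← Finset.sum_add_sum_compl Jp (fun j => wt (some j))]
      congr 1
      · exact Finset.sum_congr rfl fun j hj => by rw [hwtsome, if_pos hj]
      · rw [hWdef]
        exact Finset.sum_congr rfl fun j hj => by
          rw [hwtsome, if_neg (Finset.mem_compl.mp hj)]
    rw [hwtnone, hsome, hwNdef]; ring
  have hwt0 : ∀ o ∈ (Finset.univ : Finset (Option (Fin n))), 0 ≤ wt o := by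
    intro o _
    match o with
    | none => rw [hwtnone]; exact hwN0
    | some j =>
      rw [hwtsome]
      split_ifs with hj
      · exact div_nonneg (hπ0 j) (hKpos j hj).le
      · exact div_nonneg (hu j) hk0.le
  -- all points lie in the integer feasible set
  have hmemS : ∀ o ∈ (Finset.univ : Finset (Option (Fin n))),
      pt o ∈ {x : Fin n → ℝ | (∀ j, 0 ≤ x j) ∧ (∀ j, ∃ z : ℤ, x j = (z : ℝ)) ∧
        ∑ j, (if j ∈ Jp then c j else -c j) * x j ≤ d} := by
    intro o _
    match o with
    | none =>
      have hz0 : ∀ j' : Fin n, pt none j' = 0 := fun j' => rfl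
      refine ⟨fun j => by rw [hz0 j], fun j => ⟨0, by rw [hz0 j]; norm_num⟩, ?_⟩
      have : ∀ j' : Fin n, (if j' ∈ Jp then c j' else -c j') * pt none j' = 0 := by
        intro j'; rw [show pt none j' = 0 from rfl, mul_zero]
      rw [Finset.sum_congr rfl (fun j' _ => this j'), Finset.sum_const_zero]
      exact hd
    | some j =>
      by_cases hj : j ∈ Jp
      · -- packer point
        have hpt : ∀ j', pt (some j) j' = if j' = j then ((Kk j : ℝ)) else 0 := by
          intro j'
          show (if j ∈ Jp then (if j' = j then ((Kk j : ℝ)) else 0)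
            else (if j' = j then ((k:ℕ):ℝ)
              else if j' ∈ Jp then ((⌊((k:ℝ) * c j / R) * q j'⌋ : ℤ):ℝ) else 0)) = _
          rw [if_pos hj]
        refine ⟨?_, ?_, ?_⟩
        · intro j'; rw [hpt j']
          split_ifs
          · exact (hKpos j hj).le
          · exact le_refl 0
        · intro j'; rw [hpt j']
          split_ifs
          · exact ⟨Kk j, rfl⟩
          · exact ⟨0, by norm_num⟩
        · have hterm : ∀ j' : Fin n,
              (if j' ∈ Jp then c j' else -c j') * pt (some j) j'
              = if j' = j then c j' * (Kk j : ℝ) else 0 := by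
            intro j'
            rw [hpt j']
            by_cases h1 : j' = j
            · subst h1; rw [if_pos rfl, if_pos rfl, if_pos hj]
            · rw [if_neg h1, if_neg h1, mul_zero]
          rw [Finset.sum_congr rfl (fun j' _ => hterm j')]
          rw [Finset.sum_ite_eq' Finset.univ j (fun j' => c j' * (Kk j : ℝ)),
            if_pos (Finset.mem_univ j)]
          exact hKd j hj
      · -- carrier point
        have hpt : ∀ j', pt (some j) j' = (if j' = j then ((k:ℕ):ℝ)
            else if j' ∈ Jp then ((⌊((k:ℝ) * c j / R) * q j'⌋ : ℤ):ℝ) else 0) := by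
          intro j'
          show (if j ∈ Jp then (if j' = j then ((Kk j : ℝ)) else 0)
            else (if j' = j then ((k:ℕ):ℝ)
              else if j' ∈ Jp then ((⌊((k:ℝ) * c j / R) * q j'⌋ : ℤ):ℝ) else 0)) = _
          rw [if_neg hj]
        refine ⟨?_, ?_, ?_⟩
        · intro j'; rw [hpt j']
          split_ifs
          · positivity
          · exact hfl0 j j'
          · exact le_refl 0
        · intro j'; rw [hpt j']
          split_ifs
          · exact ⟨(k:ℤ), by push_cast; ring⟩
          · exact ⟨⌊((k:ℝ) * c j / R) * q j'⌋, rfl⟩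
          · exact ⟨0, by norm_num⟩
        · have hterm : ∀ j' : Fin n,
              (if j' ∈ Jp then c j' else -c j') * pt (some j) j'
              = if j' = j then -(c j * ((k:ℕ):ℝ))
                else if j' ∈ Jp then c j' * ((⌊((k:ℝ) * c j / R) * q j'⌋ : ℤ):ℝ) else 0 := by
            intro j'
            rw [hpt j']
            by_cases h1 : j' = j
            · subst h1; rw [if_pos rfl, if_pos rfl, if_neg hj]; ring
            · rw [if_neg h1, if_neg h1]
              by_cases h2 : j' ∈ Jp
              · rw [if_pos h2, if_pos h2, if_pos h2]
              · rw [if_neg h2, if_neg h2, if_neg h2, mul_zero]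
          rw [Finset.sum_congr rfl (fun j' _ => hterm j')]
          rw [← Finset.sum_erase_add Finset.univ _ (Finset.mem_univ j)]
          rw [if_pos rfl]
          have herase : ∑ j' ∈ Finset.univ.erase j,
              (if j' = j then -(c j * ((k:ℕ):ℝ))
                else if j' ∈ Jp then c j' * ((⌊((k:ℝ) * c j / R) * q j'⌋ : ℤ):ℝ) else 0)
              = ∑ j' ∈ Jp, c j' * ((⌊((k:ℝ) * c j / R) * q j'⌋ : ℤ):ℝ) := by
            rw [Finset.sum_congr rfl (fun j' hj' => if_neg (Finset.mem_erase.mp hj').1)]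
            rw [← Finset.sum_filter]
            congr 1
            ext x
            simp only [Finset.mem_filter, Finset.mem_erase, Finset.mem_univ, true_and,
              and_true]
            constructor
            · exact fun h => h.2
            · exact fun h => ⟨fun he => hj (he ▸ h), h⟩
          rw [herase]
          have hbound : ∑ j' ∈ Jp, c j' * ((⌊((k:ℝ) * c j / R) * q j'⌋ : ℤ):ℝ)
              ≤ c j * ((k:ℕ):ℝ) := by
            by_cases hR : R = 0
            · have hz : ∀ j' ∈ Jp, c j' * ((⌊((k:ℝ) * c j / R) * q j'⌋ : ℤ):ℝ) = 0 := by
                intro j' _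
                rw [hR, div_zero, zero_mul, Int.floor_zero]
                simp
              rw [Finset.sum_congr rfl hz, Finset.sum_const_zero]
              exact mul_nonneg (hc j) (by positivity)
            · have h1 : ∑ j' ∈ Jp, c j' * ((⌊((k:ℝ) * c j / R) * q j'⌋ : ℤ):ℝ)
                  ≤ ∑ j' ∈ Jp, ((k:ℝ) * c j / R) * (c j' * q j') := by
                refine Finset.sum_le_sum fun j' _ => ?_
                have := mul_le_mul_of_nonneg_left
                  (Int.floor_le (((k:ℝ) * c j / R) * q j')) (hc j')
                calc c j' * ((⌊((k:ℝ) * c j / R) * q j'⌋ : ℤ):ℝ)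
                    ≤ c j' * (((k:ℝ) * c j / R) * q j') := this
                _ = ((k:ℝ) * c j / R) * (c j' * q j') := by ring
              have h2 : ∑ j' ∈ Jp, ((k:ℝ) * c j / R) * (c j' * q j')
                  = ((k:ℝ) * c j / R) * (β * G) := by
                rw [← Finset.mul_sum, hcq]
              have h3 : ((k:ℝ) * c j / R) * (β * G) ≤ ((k:ℝ) * c j / R) * R :=
                mul_le_mul_of_nonneg_left hβGR
                  (div_nonneg (mul_nonneg hk0.le (hc j)) hR0)
              have h4 : ((k:ℝ) * c j / R) * R = (k:ℝ) * c j := div_mul_cancel₀ _ hR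
              calc ∑ j' ∈ Jp, c j' * ((⌊((k:ℝ) * c j / R) * q j'⌋ : ℤ):ℝ)
                  ≤ ((k:ℝ) * c j / R) * (β * G) := h2 ▸ h1
              _ ≤ ((k:ℝ) * c j / R) * R := h3
              _ = (k:ℝ) * c j := h4
              _ = c j * ((k:ℕ):ℝ) := by push_cast; ring
          linarith
  -- the convex combination represents u
  have hrep : ∑ o : Option (Fin n), wt o • pt o = u := by
    funext j₀
    have happ : (∑ o : Option (Fin n), wt o • pt o) j₀
        = ∑ o : Option (Fin n), wt o * pt o j₀ := by
      rw [Finset.sum_apply]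
      exact Finset.sum_congr rfl fun o _ => rfl
    rw [happ, Fintype.sum_option]
    have hnone : wt none * pt none j₀ = 0 := by
      rw [show pt none j₀ = 0 from rfl, mul_zero]
    rw [hnone, zero_add]
    rw [← Finset.sum_add_sum_compl Jp (fun j => wt (some j) * pt (some j) j₀)]
    by_cases hj₀ : j₀ ∈ Jp
    · have hJp : ∑ j ∈ Jp, wt (some j) * pt (some j) j₀ = π j₀ := by
        have hterm : ∀ j ∈ Jp, wt (some j) * pt (some j) j₀
            = if j₀ = j then (π j / (Kk j : ℝ)) * (Kk j : ℝ) else 0 := by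
          intro j hj
          rw [hwtsome, if_pos hj]
          rw [show pt (some j) j₀ = (if j ∈ Jp then (if j₀ = j then ((Kk j : ℝ)) else 0)
            else (if j₀ = j then ((k:ℕ):ℝ)
              else if j₀ ∈ Jp then ((⌊((k:ℝ) * c j / R) * q j₀⌋ : ℤ):ℝ) else 0)) from rfl]
          rw [if_pos hj, mul_ite, mul_zero]
        rw [Finset.sum_congr rfl hterm,
          Finset.sum_ite_eq Jp j₀ (fun j => (π j / (Kk j : ℝ)) * (Kk j : ℝ)), if_pos hj₀]
        exact div_mul_cancel₀ _ (hKpos j₀ hj₀).ne'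
      have hJm : ∑ j ∈ Jpᶜ, wt (some j) * pt (some j) j₀ = cov j₀ := by
        rw [hcovdef]
        refine Finset.sum_congr rfl fun j hj => ?_
        have hjn : j ∉ Jp := Finset.mem_compl.mp hj
        rw [hwtsome, if_neg hjn]
        rw [show pt (some j) j₀ = (if j ∈ Jp then (if j₀ = j then ((Kk j : ℝ)) else 0)
          else (if j₀ = j then ((k:ℕ):ℝ)
            else if j₀ ∈ Jp then ((⌊((k:ℝ) * c j / R) * q j₀⌋ : ℤ):ℝ) else 0)) from rfl]
        rw [if_neg hjn, if_neg (fun he : j₀ = j => hjn (he ▸ hj₀)), if_pos hj₀]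
      rw [hJp, hJm, hπdef]
      ring
    · have hJp : ∑ j ∈ Jp, wt (some j) * pt (some j) j₀ = 0 := by
        have hterm : ∀ j ∈ Jp, wt (some j) * pt (some j) j₀
            = if j₀ = j then (π j / (Kk j : ℝ)) * (Kk j : ℝ) else 0 := by
          intro j hj
          rw [hwtsome, if_pos hj]
          rw [show pt (some j) j₀ = (if j ∈ Jp then (if j₀ = j then ((Kk j : ℝ)) else 0)
            else (if j₀ = j then ((k:ℕ):ℝ)
              else if j₀ ∈ Jp then ((⌊((k:ℝ) * c j / R) * q j₀⌋ : ℤ):ℝ) else 0)) from rfl]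
          rw [if_pos hj, mul_ite, mul_zero]
        rw [Finset.sum_congr rfl hterm,
          Finset.sum_ite_eq Jp j₀ (fun j => (π j / (Kk j : ℝ)) * (Kk j : ℝ)), if_neg hj₀]
      have hJm : ∑ j ∈ Jpᶜ, wt (some j) * pt (some j) j₀ = u j₀ := by
        have hterm : ∀ j ∈ Jpᶜ, wt (some j) * pt (some j) j₀
            = if j₀ = j then (u j / (k:ℝ)) * ((k:ℕ):ℝ) else 0 := by
          intro j hj
          have hjn : j ∉ Jp := Finset.mem_compl.mp hj
          rw [hwtsome, if_neg hjn]
          rw [show pt (some j) j₀ = (if j ∈ Jp then (if j₀ = j then ((Kk j : ℝ)) else 0)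
            else (if j₀ = j then ((k:ℕ):ℝ)
              else if j₀ ∈ Jp then ((⌊((k:ℝ) * c j / R) * q j₀⌋ : ℤ):ℝ) else 0)) from rfl]
          rw [if_neg hjn, if_neg hj₀, mul_ite, mul_zero]
        rw [Finset.sum_congr rfl hterm,
          Finset.sum_ite_eq Jpᶜ j₀ (fun j => (u j / (k:ℝ)) * ((k:ℕ):ℝ)),
          if_pos (Finset.mem_compl.mpr hj₀)]
        exact div_mul_cancel₀ _ hk0.ne'
      rw [hJp, hJm]
      ring
  have h01 : (0:ℝ) < ∑ o : Option (Fin n), wt o := by rw [hwsum]; norm_num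
  have hmem := Finset.centerMass_mem_convexHull (Finset.univ : Finset (Option (Fin n)))
    hwt0 h01 hmemS
  rwa [Finset.centerMass_eq_of_sum_1 _ _ hwsum, hrep] at hmem

private lemma sum_single_mul {m : ℕ} (i : Fin m) (g : Fin m → ℝ) :
    ∑ i', (Pi.single i (1:ℝ) : Fin m → ℝ) i' * g i' = g i := by
  have h : ∀ i', (Pi.single i (1:ℝ) : Fin m → ℝ) i' * g i' = if i' = i then g i' else 0 := by
    intro i'
    rw [Pi.single_apply]
    split_ifs <;> ring
  rw [Finset.sum_congr rfl (fun i' _ => h i'),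
    Finset.sum_ite_eq' Finset.univ i g, if_pos (Finset.mem_univ i)]

private lemma sum_swap_signed {m n : ℕ} (A : Matrix (Fin m) (Fin n) ℚ)
    (Jp : Finset (Fin n)) (lam : Fin m → ℝ) (x : Fin n → ℝ) :
    ∑ i, lam i * ∑ j, signedRow A Jp i j * x j
      = ∑ j, (if j ∈ Jp then (∑ i, lam i * (A i j : ℝ)) else -(∑ i, lam i * (A i j : ℝ))) * x j := by
  have h1 : ∀ i, lam i * ∑ j, signedRow A Jp i j * x j
      = ∑ j, lam i * (signedRow A Jp i j * x j) := fun i => Finset.mul_sum _ _ _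
  rw [Finset.sum_congr rfl (fun i _ => h1 i), Finset.sum_comm]
  refine Finset.sum_congr rfl fun j _ => ?_
  have h2 : ∀ i, lam i * (signedRow A Jp i j * x j)
      = (if j ∈ Jp then lam i * (A i j : ℝ) else -(lam i * (A i j : ℝ))) * x j := by
    intro i
    unfold signedRow
    split_ifs <;> ring
  rw [Finset.sum_congr rfl (fun i _ => h2 i), ← Finset.sum_mul]
  congr 1
  split_ifs
  · rfl
  · rw [Finset.sum_neg_distrib]

/-- For a `(J⁺,J⁻)` sign-pattern polyhedron `P` with rational data,
`1-𝒜(P) ⊆ 2 · 𝒜(P)`: the aggregation closure is 2-approximated by the original 1-row closure. -/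
theorem row1Closure_subset_two_smul_aggClosure
    {m n : ℕ} (hm : 0 < m) (hn : 0 < n)
    (Jp Jn : Finset (Fin n)) (hdisj : Disjoint Jp Jn) (hunion : Jp ∪ Jn = Finset.univ)
    (A : Matrix (Fin m) (Fin n) ℚ) (b : Fin m → ℚ)
    (hA : ∀ i j, 0 ≤ A i j) (hb : ∀ i, 0 ≤ b i)
    (hAb : ∀ i, ∀ j ∈ Jp, A i j ≤ b i) :
    row1Closure A b Jp ⊆ (2 : ℝ) • aggClosure A b Jp := by
  classical
  intro x hx
  -- Step 1: x lies in the LP relaxation P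
  have hxP : (∀ j, 0 ≤ x j) ∧ ∀ i, ∑ j, signedRow A Jp i j * x j ≤ (b i : ℝ) := by
    have hx' : ∀ i : Fin m, x ∈ aggIntHull A b Jp (Pi.single i 1) := by
      intro i
      exact Set.mem_iInter.mp hx i
    have hsub : ∀ i : Fin m, x ∈ {v : Fin n → ℝ | (∀ j, 0 ≤ v j) ∧
        ∑ j, signedRow A Jp i j * v j ≤ (b i : ℝ)} := by
      intro i
      refine convexHull_min ?_ ?_ (hx' i)
      · intro z hz
        obtain ⟨hz1, _, hz3⟩ := hz
        refine ⟨hz1, ?_⟩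
        have h1 : ∑ i', (Pi.single i (1:ℝ) : Fin m → ℝ) i' * ∑ j, signedRow A Jp i' j * z j
            = ∑ j, signedRow A Jp i j * z j :=
          sum_single_mul i (fun i' => ∑ j, signedRow A Jp i' j * z j)
        have h2 : ∑ i', (Pi.single i (1:ℝ) : Fin m → ℝ) i' * ((b i' : ℝ))
            = (b i : ℝ) := sum_single_mul i (fun i' => (b i' : ℝ))
        rw [← h1, ← h2]
        exact hz3
      · have hT : {v : Fin n → ℝ | (∀ j, 0 ≤ v j) ∧
            ∑ j, signedRow A Jp i j * v j ≤ (b i : ℝ)}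
            = {v : Fin n → ℝ | ∀ j, 0 ≤ v j} ∩
              {v : Fin n → ℝ | ∑ j, signedRow A Jp i j * v j ≤ (b i : ℝ)} := rfl
        rw [hT]
        refine Convex.inter ?_ ?_
        · intro v hv w hw a b' ha hb' hab j
          have h1 := hv j
          have h2 := hw j
          simp only [Pi.add_apply, Pi.smul_apply, smul_eq_mul]
          nlinarith
        · refine convex_halfSpace_le ?_ _
          constructor
          · intro v w
            rw [← Finset.sum_add_distrib]
            refine Finset.sum_congr rfl fun j _ => ?_
            simp only [Pi.add_apply]
            ring
          · intro a v
            rw [Finset.smul_sum]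
            refine Finset.sum_congr rfl fun j _ => ?_
            simp only [Pi.smul_apply, smul_eq_mul]
            ring
    exact ⟨(hsub ⟨0, hm⟩).1, fun i => (hsub i).2⟩
  -- Step 2: x/2 is in every aggregated integer hull
  have hhalf : (fun j => x j / 2) ∈ aggClosure A b Jp := by
    rw [aggClosure]
    refine Set.mem_iInter₂.mpr fun lam hlam => ?_
    have hlam' : ∀ i, 0 ≤ lam i := hlam
    set C : Fin n → ℝ := fun j => ∑ i, lam i * (A i j : ℝ) with hCdef
    set D : ℝ := ∑ i, lam i * (b i : ℝ) with hDdef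
    have hC0 : ∀ j, 0 ≤ C j := fun j =>
      Finset.sum_nonneg fun i _ => mul_nonneg (hlam' i) (by exact_mod_cast hA i j)
    have hD0 : 0 ≤ D :=
      Finset.sum_nonneg fun i _ => mul_nonneg (hlam' i) (by exact_mod_cast hb i)
    have hCD : ∀ j ∈ Jp, C j ≤ D := by
      intro j hj
      refine Finset.sum_le_sum fun i _ => ?_
      exact mul_le_mul_of_nonneg_left (by exact_mod_cast hAb i j hj) (hlam' i)
    have hxD : ∑ j, (if j ∈ Jp then C j else -C j) * x j ≤ D := by
      rw [← sum_swap_signed A Jp lam x]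
      refine Finset.sum_le_sum fun i _ => ?_
      exact mul_le_mul_of_nonneg_left (hxP.2 i) (hlam' i)
    have hkey := key_lemma Jp C D hC0 hD0 hCD (fun j => x j / 2)
      (fun j => by have := hxP.1 j; positivity)
      (by
        have h1 : ∑ j, (if j ∈ Jp then C j else -C j) * (x j / 2)
            = (∑ j, (if j ∈ Jp then C j else -C j) * x j) / 2 := by
          rw [Finset.sum_div]
          exact Finset.sum_congr rfl fun j _ => by ring
        rw [h1]
        linarith)
    rw [aggIntHull]
    have hseteq : {v : Fin n → ℝ | (∀ j, 0 ≤ v j) ∧ (∀ j, ∃ z : ℤ, v j = (z : ℝ)) ∧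
        ∑ i, lam i * ∑ j, signedRow A Jp i j * v j ≤ ∑ i, lam i * (b i : ℝ)}
        = {v : Fin n → ℝ | (∀ j, 0 ≤ v j) ∧ (∀ j, ∃ z : ℤ, v j = (z : ℝ)) ∧
        ∑ j, (if j ∈ Jp then C j else -C j) * v j ≤ D} := by
      ext v
      simp only [Set.mem_setOf_eq]
      rw [sum_swap_signed A Jp lam v, hCdef, hDdef]
    rw [hseteq]
    exact hkey
  -- Step 3: conclude
  refine Set.mem_smul_set.mpr ⟨fun j => x j / 2, hhalf, ?_⟩
  funext j
  show (2:ℝ) * (x j / 2) = x j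
  ring
end

section
/- For every real α ≥ 1 there exists a (J⁺,J⁻) sign-pattern polyhedron P (with rational data) such that 𝒜(P) is not contained in α·𝒜₂(P); that is, the aggregation closure can be an arbitrarily bad approximation of the 2-aggregation closure for sign-pattern polyhedra. -/
open scoped Pointwise

/-- `P^I(λ₁,λ₂)`: the convex hull of the nonnegative integer points satisfying both
aggregated constraints `λ₁ᵀAx ≤ λ₁ᵀb` and `λ₂ᵀAx ≤ λ₂ᵀb`. -/
noncomputable def aggIntHull2 {m n : ℕ} (A : Matrix (Fin m) (Fin n) ℚ) (b : Fin m → ℚ)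
    (Jp : Finset (Fin n)) (l1 l2 : Fin m → ℝ) : Set (Fin n → ℝ) :=
  convexHull ℝ {x | (∀ j, 0 ≤ x j) ∧ (∀ j, ∃ z : ℤ, x j = (z : ℝ)) ∧
    (∑ i, l1 i * ∑ j, signedRow A Jp i j * x j ≤ ∑ i, l1 i * (b i : ℝ)) ∧
    (∑ i, l2 i * ∑ j, signedRow A Jp i j * x j ≤ ∑ i, l2 i * (b i : ℝ))}

/-- The 2-aggregation closure `𝒜₂(P) = ∩_{λ₁,λ₂ ≥ 0} P^I(λ₁,λ₂)`. -/
noncomputable def agg2Closure {m n : ℕ} (A : Matrix (Fin m) (Fin n) ℚ) (b : Fin m → ℚ)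
    (Jp : Finset (Fin n)) : Set (Fin n → ℝ) :=
  ⋂ l1 ∈ {l : Fin m → ℝ | ∀ i, 0 ≤ l i}, ⋂ l2 ∈ {l : Fin m → ℝ | ∀ i, 0 ≤ l i},
    aggIntHull2 A b Jp l1 l2

lemma sr_sum (K : ℕ) (lam x : Fin 2 → ℝ) :
    ∑ i, lam i * ∑ j, signedRow !![1, (K:ℚ)^2; 1, 0] {0} i j * x j
      = lam 0 * (x 0 - (K:ℝ)^2 * x 1) + lam 1 * (x 0) := by
  have h00 : signedRow !![1, (K:ℚ)^2; 1, 0] {0} 0 0 = 1 := by simp [signedRow]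
  have h01 : signedRow !![1, (K:ℚ)^2; 1, 0] {0} 0 1 = -((K:ℝ)^2) := by simp [signedRow]
  have h10 : signedRow !![1, (K:ℚ)^2; 1, 0] {0} 1 0 = 1 := by simp [signedRow]
  have h11 : signedRow !![1, (K:ℚ)^2; 1, 0] {0} 1 1 = 0 := by simp [signedRow]
  rw [Fin.sum_univ_two, Fin.sum_univ_two, Fin.sum_univ_two, h00, h01, h10, h11]
  ring

lemma b_sum (K : ℕ) (lam : Fin 2 → ℝ) :
    ∑ i, lam i * (((![1, (K:ℚ)+1] : Fin 2 → ℚ) i : ℝ)) = lam 0 * 1 + lam 1 * ((K:ℝ)+1) := by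
  rw [Fin.sum_univ_two]; norm_num

/-- The key choice of integer points for each aggregation multiplier. -/

lemma exists_good_ints (K : ℕ) (hK : 4 ≤ K) (L1 L2 : ℝ) (hL1 : 0 ≤ L1) (hL2 : 0 ≤ L2) :
    ∃ x0 x1 : ℤ, (1:ℤ) ≤ x0 ∧ (x0:ℝ) ≤ (K:ℝ) ∧ (0:ℤ) ≤ x1 ∧
      ((K:ℝ) - 1) * (x0:ℝ) + (x1:ℝ) = (K:ℝ) * ((K:ℝ) - 1) ∧
      (L1 + L2) * (x0:ℝ) ≤ L1 + L2 * ((K:ℝ) + 1) ∧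
      (L1 + L2) * (x1:ℝ) ≤ L1 + L2 * ((K:ℝ) + 1) + L1 * (K:ℝ)^2 := by
  have hKr : (4:ℝ) ≤ (K:ℝ) := by exact_mod_cast hK
  set Kr : ℝ := (K:ℝ) with hKrdef
  by_cases hc : (Kr - 1) * L1 ≤ L2
  · refine ⟨(K:ℤ), 0, by omega, by push_cast; linarith,
      le_refl 0, by push_cast; ring, ?_, ?_⟩
    · push_cast; nlinarith
    · push_cast; nlinarith
  · push_neg at hc
    have hL1pos : 0 < L1 := by nlinarith
    set T : ℝ := L1 + L2 with hTdef
    have hT : 0 < T := by positivity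
    set β : ℝ := (L1 + L2 * (Kr + 1)) / T with hβdef
    have hTβ : T * β = L1 + L2 * (Kr + 1) := by
      rw [hβdef]; field_simp
    have hβ1 : (1:ℝ) ≤ β := by
      rw [hβdef, le_div_iff₀ hT]; nlinarith
    have hβK : β < Kr := by
      rw [hβdef, div_lt_iff₀ hT]; nlinarith
    have hfl : ((⌊β⌋:ℝ)) ≤ β := Int.floor_le β
    have hfl1 : β < (⌊β⌋:ℝ) + 1 := Int.lt_floor_add_one β
    have hx0l : (1:ℤ) ≤ ⌊β⌋ := by
      rw [Int.le_floor]; exact_mod_cast hβ1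
    have hfltK : ⌊β⌋ < (K:ℤ) := by
      rw [Int.floor_lt]; exact_mod_cast hβK
    refine ⟨⌊β⌋, ((K:ℤ) - 1) * ((K:ℤ) - ⌊β⌋), hx0l, by push_cast; linarith, ?_, ?_, ?_, ?_⟩
    · have h1 : (0:ℤ) ≤ (K:ℤ) - ⌊β⌋ := by omega
      have h2 : (0:ℤ) ≤ (K:ℤ) - 1 := by omega
      exact mul_nonneg h2 h1
    · push_cast; ring
    · nlinarith
    · -- T * x1 ≤ L1 + L2*(Kr+1) + L1*Kr^2
      have h5 : T * (Kr - (⌊β⌋:ℝ)) ≤ L1 * Kr := by nlinarith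
      have h6 : (0:ℝ) ≤ Kr - (⌊β⌋:ℝ) := by
        have : ((⌊β⌋:ℝ)) < Kr := lt_of_le_of_lt hfl hβK
        linarith
      have h7 : T * ((Kr - 1) * (Kr - (⌊β⌋:ℝ))) ≤ (Kr - 1) * (L1 * Kr) := by
        have := mul_le_mul_of_nonneg_left h5 (show (0:ℝ) ≤ Kr - 1 by linarith)
        nlinarith
      push_cast
      nlinarith

lemma v_mem_aggIntHull (K : ℕ) (hK : 4 ≤ K) (lam : Fin 2 → ℝ) (hlam : ∀ i, 0 ≤ lam i) :
    ![(K:ℝ)-1, 1/(K:ℝ)] ∈ aggIntHull !![1, (K:ℚ)^2; 1, 0] ![1, (K:ℚ)+1] {0} lam := by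
  have hKr : (4:ℝ) ≤ (K:ℝ) := by exact_mod_cast hK
  have hK0 : (0:ℝ) < (K:ℝ) := by linarith
  obtain ⟨x0, x1, hx0l, hx0u, hx1nn, hcomb, hfp, hfq⟩ :=
    exists_good_ints K hK (lam 0) (lam 1) (hlam 0) (hlam 1)
  have hx0r : (0:ℝ) ≤ (x0:ℝ) := by exact_mod_cast le_trans zero_le_one hx0l
  have hx1r : (0:ℝ) ≤ (x1:ℝ) := by exact_mod_cast hx1nn
  rw [aggIntHull]
  have hp : (![(x0:ℝ), 0] : Fin 2 → ℝ) ∈ {x : Fin 2 → ℝ | (∀ j, 0 ≤ x j) ∧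
      (∀ j, ∃ z : ℤ, x j = (z : ℝ)) ∧
      ∑ i, lam i * ∑ j, signedRow !![1, (K:ℚ)^2; 1, 0] {0} i j * x j
        ≤ ∑ i, lam i * ((![1, (K:ℚ)+1] : Fin 2 → ℚ) i : ℝ)} := by
    refine ⟨?_, ?_, ?_⟩
    · intro j; fin_cases j
      · simpa using hx0r
      · simp
    · intro j; fin_cases j
      · exact ⟨x0, by simp⟩
      · exact ⟨0, by simp⟩
    · rw [sr_sum, b_sum]
      simp only [Matrix.cons_val_zero, Matrix.cons_val_one, Matrix.head_cons]
      linarith [hfp]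
  have hq : (![(x1:ℝ), 1] : Fin 2 → ℝ) ∈ {x : Fin 2 → ℝ | (∀ j, 0 ≤ x j) ∧
      (∀ j, ∃ z : ℤ, x j = (z : ℝ)) ∧
      ∑ i, lam i * ∑ j, signedRow !![1, (K:ℚ)^2; 1, 0] {0} i j * x j
        ≤ ∑ i, lam i * ((![1, (K:ℚ)+1] : Fin 2 → ℚ) i : ℝ)} := by
    refine ⟨?_, ?_, ?_⟩
    · intro j; fin_cases j
      · simpa using hx1r
      · simp
    · intro j; fin_cases j
      · exact ⟨x1, by simp⟩
      · exact ⟨1, by simp⟩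
    · rw [sr_sum, b_sum]
      simp only [Matrix.cons_val_zero, Matrix.cons_val_one, Matrix.head_cons]
      linarith [hfq]
  have hcv := (convex_convexHull ℝ _) (subset_convexHull ℝ _ hp) (subset_convexHull ℝ _ hq)
    (show (0:ℝ) ≤ 1 - 1/(K:ℝ) by
      have h1 : 1/(K:ℝ) ≤ 1 := by rw [div_le_one hK0]; linarith
      linarith)
    (show (0:ℝ) ≤ 1/(K:ℝ) by positivity)
    (by ring)
  have hx1e : (x1:ℝ) = (K:ℝ) * ((K:ℝ) - 1) - ((K:ℝ) - 1) * (x0:ℝ) := by linarith [hcomb]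
  have hv : (1 - 1/(K:ℝ)) • (![(x0:ℝ), 0] : Fin 2 → ℝ) + (1/(K:ℝ)) • (![(x1:ℝ), 1] : Fin 2 → ℝ)
      = ![(K:ℝ)-1, 1/(K:ℝ)] := by
    funext j; fin_cases j
    · simp only [Pi.add_apply, Pi.smul_apply, smul_eq_mul, Fin.zero_eta, Matrix.cons_val_zero]
      rw [hx1e]
      field_simp
      ring
    · simp
  rw [hv] at hcv
  exact hcv

lemma hull2_subset (K : ℕ) (hK : 4 ≤ K) :
    aggIntHull2 !![1, (K:ℚ)^2; 1, 0] ![1, (K:ℚ)+1] {0} ![1,0] ![0,1]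
      ⊆ {x : Fin 2 → ℝ | x 0 - (K:ℝ) * x 1 ≤ 1} := by
  have hKr : (4:ℝ) ≤ (K:ℝ) := by exact_mod_cast hK
  rw [aggIntHull2]
  apply convexHull_min
  · rintro x ⟨hx0, hxz, h1, h2⟩
    rw [sr_sum, b_sum] at h1 h2
    simp only [Matrix.cons_val_zero, Matrix.cons_val_one, Matrix.head_cons] at h1 h2
    -- h1 : 1 * (x 0 - K^2 * x 1) + 0 * x 0 ≤ 1 * 1 + 0 * (K+1)
    -- h2 : 0 * (...) + 1 * x 0 ≤ 0 * 1 + 1 * (K+1)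
    obtain ⟨z, hz⟩ := hxz 1
    have hz0 : (0:ℤ) ≤ z := by
      have := hx0 1
      rw [hz] at this
      exact_mod_cast this
    rcases eq_or_lt_of_le hz0 with h | h
    · have hx1 : x 1 = 0 := by rw [hz, ← h]; norm_num
      simp only [Set.mem_setOf_eq]
      rw [hx1] at h1 ⊢
      nlinarith
    · have hx1 : (1:ℝ) ≤ x 1 := by
        rw [hz]; exact_mod_cast h
      simp only [Set.mem_setOf_eq]
      nlinarith
  · intro x hx y hy a c ha hc hac
    simp only [Set.mem_setOf_eq] at hx hy ⊢
    have e0 : (a • x + c • y) 0 = a * x 0 + c * y 0 := rfl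
    have e1 : (a • x + c • y) 1 = a * x 1 + c * y 1 := rfl
    rw [e0, e1]
    nlinarith [mul_le_mul_of_nonneg_left hx ha, mul_le_mul_of_nonneg_left hy hc]

/-- For every `α ≥ 1` there is a `(J⁺,J⁻)` sign-pattern polyhedron `P`
(with rational data) such that `𝒜(P) ⊄ α · 𝒜₂(P)`: the aggregation closure can be an
arbitrarily bad approximation of the 2-aggregation closure. -/
theorem exists_signPattern_aggClosure_not_subset_smul_agg2Closure
    (α : ℝ) (hα : 1 ≤ α) :
    ∃ (m n : ℕ) (Jp Jn : Finset (Fin n)) (A : Matrix (Fin m) (Fin n) ℚ) (b : Fin m → ℚ),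
      0 < m ∧ 0 < n ∧ Disjoint Jp Jn ∧ Jp ∪ Jn = Finset.univ ∧
      (∀ i j, 0 ≤ A i j) ∧ (∀ i, 0 ≤ b i) ∧ (∀ i, ∀ j ∈ Jp, A i j ≤ b i) ∧
      ¬ (aggClosure A b Jp ⊆ α • agg2Closure A b Jp) := by
  obtain ⟨K, hK4, hKα⟩ : ∃ K : ℕ, 4 ≤ K ∧ α + 2 < (K : ℝ) := by
    refine ⟨⌈α⌉₊ + 3, ?_, ?_⟩
    · have : 1 ≤ ⌈α⌉₊ := Nat.one_le_ceil_iff.mpr (by linarith)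
      omega
    · have h := Nat.le_ceil α
      push_cast
      linarith
  have hKr : (4:ℝ) ≤ (K:ℝ) := by exact_mod_cast hK4
  have hK0 : (0:ℝ) < (K:ℝ) := by linarith
  have hα0 : (0:ℝ) < α := by linarith
  refine ⟨2, 2, {0}, {1}, !![1, (K:ℚ)^2; 1, 0], ![1, (K:ℚ)+1],
    by norm_num, by norm_num, by decide, by decide, ?_, ?_, ?_, ?_⟩
  · intro i j; fin_cases i <;> fin_cases j <;> simp <;> positivity
  · intro i; fin_cases i <;> simp <;> positivity
  · intro i j hj
    have hj0 : j = 0 := by simpa using hj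
    subst hj0
    fin_cases i <;> simp <;> positivity
  · intro hsub
    have hvA : ![(K:ℝ)-1, 1/(K:ℝ)] ∈
        aggClosure !![1, (K:ℚ)^2; 1, 0] ![1, (K:ℚ)+1] ({0} : Finset (Fin 2)) := by
      rw [aggClosure]
      simp only [Set.mem_iInter, Set.mem_setOf_eq]
      intro lam hlam
      exact v_mem_aggIntHull K hK4 lam hlam
    have hv2 := hsub hvA
    rw [Set.mem_smul_set] at hv2
    obtain ⟨w, hw, hws⟩ := hv2
    have hw2 : w ∈ aggIntHull2 !![1, (K:ℚ)^2; 1, 0] ![1, (K:ℚ)+1] {0}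
        (![1,0] : Fin 2 → ℝ) (![0,1] : Fin 2 → ℝ) := by
      rw [agg2Closure] at hw
      simp only [Set.mem_iInter, Set.mem_setOf_eq] at hw
      exact hw ![1,0] (by intro i; fin_cases i <;> norm_num)
        ![0,1] (by intro i; fin_cases i <;> norm_num)
    have hw3 := hull2_subset K hK4 hw2
    simp only [Set.mem_setOf_eq] at hw3
    have c0 : α * w 0 = (K:ℝ) - 1 := congrFun hws 0
    have c1 : α * w 1 = 1/(K:ℝ) := congrFun hws 1
    have hw0 : w 0 = ((K:ℝ) - 1)/α := by
      rw [eq_div_iff hα0.ne']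
      linarith [c0]
    have hw1 : w 1 = (1/(K:ℝ))/α := by
      rw [eq_div_iff hα0.ne']
      linarith [c1]
    rw [hw0, hw1] at hw3
    have lhs : α * (((K:ℝ) - 1)/α - (K:ℝ) * ((1/(K:ℝ))/α)) = (K:ℝ) - 2 := by
      field_simp
      ring
    have := mul_le_mul_of_nonneg_left hw3 hα0.le
    rw [lhs] at this
    linarith
end

section
/- Let P = {x ∈ ℝⁿ_+ : Ax ≤ b} be a packing polyhedron with rational data, i.e., A_{ij} ≥ 0, b_i ≥ 0 and A_{ij} ≤ b_i for all i ∈ [m], j ∈ [n]. Then 𝒜(P) ⊆ 3·𝒜₂(P): the aggregation closure of a packing polyhedron is contained in 3 times its 2-aggregation closure. -/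
open scoped Pointwise

/-- `P^I(λ)` for a packing system `Ax ≤ b, x ≥ 0`: the convex hull of the nonnegative
integer points satisfying the aggregated constraint `λᵀAx ≤ λᵀb`. -/
noncomputable def packAggIntHull {m n : ℕ} (A : Matrix (Fin m) (Fin n) ℚ) (b : Fin m → ℚ)
    (lam : Fin m → ℝ) : Set (Fin n → ℝ) :=
  convexHull ℝ {x | (∀ j, 0 ≤ x j) ∧ (∀ j, ∃ z : ℤ, x j = (z : ℝ)) ∧
    ∑ i, lam i * ∑ j, (A i j : ℝ) * x j ≤ ∑ i, lam i * (b i : ℝ)}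

/-- `P^I(λ₁,λ₂)` for a packing system. -/
noncomputable def packAggIntHull2 {m n : ℕ} (A : Matrix (Fin m) (Fin n) ℚ) (b : Fin m → ℚ)
    (l1 l2 : Fin m → ℝ) : Set (Fin n → ℝ) :=
  convexHull ℝ {x | (∀ j, 0 ≤ x j) ∧ (∀ j, ∃ z : ℤ, x j = (z : ℝ)) ∧
    (∑ i, l1 i * ∑ j, (A i j : ℝ) * x j ≤ ∑ i, l1 i * (b i : ℝ)) ∧
    (∑ i, l2 i * ∑ j, (A i j : ℝ) * x j ≤ ∑ i, l2 i * (b i : ℝ))}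

/-- The aggregation closure `𝒜(P) = ∩_{λ ≥ 0} P^I(λ)` of a packing polyhedron. -/
noncomputable def packAggClosure {m n : ℕ} (A : Matrix (Fin m) (Fin n) ℚ) (b : Fin m → ℚ) :
    Set (Fin n → ℝ) :=
  ⋂ lam ∈ {l : Fin m → ℝ | ∀ i, 0 ≤ l i}, packAggIntHull A b lam

/-- The 2-aggregation closure `𝒜₂(P) = ∩_{λ₁,λ₂ ≥ 0} P^I(λ₁,λ₂)` of a packing polyhedron. -/
noncomputable def packAgg2Closure {m n : ℕ} (A : Matrix (Fin m) (Fin n) ℚ) (b : Fin m → ℚ) :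
    Set (Fin n → ℝ) :=
  ⋂ l1 ∈ {l : Fin m → ℝ | ∀ i, 0 ≤ l i}, ⋂ l2 ∈ {l : Fin m → ℝ | ∀ i, 0 ≤ l i},
    packAggIntHull2 A b l1 l2

open Classical in
noncomputable def fracSet {n : ℕ} (y : Fin n → ℝ) : Finset (Fin n) :=
  Finset.univ.filter fun j => ¬ ∃ z : ℤ, y j = (z : ℝ)

lemma mem_fracSet {n : ℕ} {y : Fin n → ℝ} {j : Fin n} :
    j ∈ fracSet y ↔ ¬ ∃ z : ℤ, y j = (z : ℝ) := by
  simp [fracSet]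

lemma floor_lt_of_mem_fracSet {n : ℕ} {y : Fin n → ℝ} {j : Fin n} (h : j ∈ fracSet y) :
    ((⌊y j⌋ : ℝ) < y j) ∧ (y j < (⌈y j⌉ : ℝ)) := by
  rw [mem_fracSet] at h
  constructor
  · rcases lt_or_eq_of_le (Int.floor_le (y j)) with h' | h'
    · exact h'
    · exact absurd ⟨⌊y j⌋, h'.symm⟩ h
  · rcases lt_or_eq_of_le (Int.le_ceil (y j)) with h' | h'
    · exact h'
    · exact absurd ⟨⌈y j⌉, h'⟩ h

/-- A 2×3 homogeneous linear system has a nontrivial solution. -/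
lemma exists_kernel3 (u v : Fin 3 → ℝ) :
    ∃ w : Fin 3 → ℝ, w ≠ 0 ∧ (∑ i, u i * w i = 0) ∧ (∑ i, v i * w i = 0) := by
  classical
  let du : (Fin 3 → ℝ) →ₗ[ℝ] ℝ :=
    { toFun := fun w => ∑ i, u i * w i
      map_add' := by intro a b; simp [mul_add, Finset.sum_add_distrib]
      map_smul' := by
        intro r a; simp only [Pi.smul_apply, smul_eq_mul, RingHom.id_apply, Finset.mul_sum]
        exact Finset.sum_congr rfl fun i _ => by ring }
  let dv : (Fin 3 → ℝ) →ₗ[ℝ] ℝ :=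
    { toFun := fun w => ∑ i, v i * w i
      map_add' := by intro a b; simp [mul_add, Finset.sum_add_distrib]
      map_smul' := by
        intro r a; simp only [Pi.smul_apply, smul_eq_mul, RingHom.id_apply, Finset.mul_sum]
        exact Finset.sum_congr rfl fun i _ => by ring }
  let φ : (Fin 3 → ℝ) →ₗ[ℝ] (ℝ × ℝ) := du.prod dv
  by_contra hcon
  push_neg at hcon
  have hinj : Function.Injective φ := by
    rw [← LinearMap.ker_eq_bot, LinearMap.ker_eq_bot']
    intro w hw
    by_contra hw0
    have h1 : du w = 0 := congrArg Prod.fst hw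
    have h2 : dv w = 0 := congrArg Prod.snd hw
    exact (hcon w hw0 h1) h2
  have hle := LinearMap.finrank_le_finrank_of_injective hinj
  rw [Module.finrank_pi, Module.finrank_prod, Module.finrank_self] at hle
  simp [Fintype.card_fin] at hle

/-- Transport: a nonzero direction supported on three given distinct coordinates,
orthogonal to both constraint vectors. -/
lemma exists_direction {n : ℕ} (c1 c2 : Fin n → ℝ) {i j k : Fin n}
    (hij : i ≠ j) (hik : i ≠ k) (hjk : j ≠ k) :
    ∃ w : Fin n → ℝ, w ≠ 0 ∧ (∀ l, w l ≠ 0 → l = i ∨ l = j ∨ l = k) ∧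
      (∑ l, c1 l * w l = 0) ∧ (∑ l, c2 l * w l = 0) := by
  classical
  obtain ⟨w3, hw3, hu, hv⟩ := exists_kernel3 ![c1 i, c1 j, c1 k] ![c2 i, c2 j, c2 k]
  refine ⟨fun l => if l = i then w3 0 else if l = j then w3 1 else if l = k then w3 2 else 0,
    ?_, ?_, ?_, ?_⟩
  · intro h0
    apply hw3
    funext a
    fin_cases a
    · have := congrFun h0 i; simpa using this
    · have := congrFun h0 j; simp [hij.symm] at this; simpa using this
    · have := congrFun h0 k; simp [hik.symm, hjk.symm] at this; simpa using this
  · intro l hl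
    by_contra hc
    push_neg at hc
    simp [hc.1, hc.2.1, hc.2.2] at hl
  · have hsub : ∀ l ∈ Finset.univ \ ({i, j, k} : Finset (Fin n)),
        c1 l * (if l = i then w3 0 else if l = j then w3 1 else if l = k then w3 2 else 0) = 0 := by
      intro l hl
      simp only [Finset.mem_sdiff, Finset.mem_insert, Finset.mem_singleton] at hl
      push_neg at hl
      simp [hl.2.1, hl.2.2.1, hl.2.2.2]
    rw [← Finset.sum_subset (Finset.subset_univ ({i, j, k} : Finset (Fin n)))
      (fun l _ hl => by
        simp only [Finset.mem_insert, Finset.mem_singleton] at hl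
        push_neg at hl
        simp [hl.1, hl.2.1, hl.2.2])]
    rw [Finset.sum_insert (by simp [hij, hik]), Finset.sum_insert (by simp [hjk]),
      Finset.sum_singleton]
    have hu' : c1 i * w3 0 + c1 j * w3 1 + c1 k * w3 2 = 0 := by
      rw [Fin.sum_univ_three] at hu; simpa using hu
    simp [hij.symm, hik.symm, hjk.symm]
    linarith
  · have : ∀ l ∈ Finset.univ \ ({i, j, k} : Finset (Fin n)), True := fun _ _ => trivial
    rw [← Finset.sum_subset (Finset.subset_univ ({i, j, k} : Finset (Fin n)))
      (fun l _ hl => by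
        simp only [Finset.mem_insert, Finset.mem_singleton] at hl
        push_neg at hl
        simp [hl.1, hl.2.1, hl.2.2])]
    rw [Finset.sum_insert (by simp [hij, hik]), Finset.sum_insert (by simp [hjk]),
      Finset.sum_singleton]
    have hv' : c2 i * w3 0 + c2 j * w3 1 + c2 k * w3 2 = 0 := by
      rw [Fin.sum_univ_three] at hv; simpa using hv
    simp [hij.symm, hik.symm, hjk.symm]
    linarith

/-- Moving from `y` along direction `w` (orthogonal to both constraints, supported on
non-integer coordinates) until some coordinate becomes an integer. -/
lemma step_lemma {n : ℕ} (c1 c2 : Fin n → ℝ) (d1 d2 : ℝ)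
    (y : Fin n → ℝ) (hy0 : ∀ j, 0 ≤ y j)
    (hy1 : ∑ j, c1 j * y j ≤ d1) (hy2 : ∑ j, c2 j * y j ≤ d2)
    (w : Fin n → ℝ) (hw0 : w ≠ 0)
    (hsupp : ∀ j, w j ≠ 0 → j ∈ fracSet y)
    (hc1w : ∑ j, c1 j * w j = 0) (hc2w : ∑ j, c2 j * w j = 0) :
    ∃ t : ℝ, 0 < t ∧ (∀ j, 0 ≤ y j + t * w j) ∧
      (∑ j, c1 j * (y j + t * w j) ≤ d1) ∧ (∑ j, c2 j * (y j + t * w j) ≤ d2) ∧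
      fracSet (fun j => y j + t * w j) ⊂ fracSet y := by
  classical
  set T : Finset (Fin n) := Finset.univ.filter (fun j => w j ≠ 0) with hT
  have hTne : T.Nonempty := by
    obtain ⟨j, hj⟩ := Function.ne_iff.mp hw0
    exact ⟨j, by simp only [hT, Finset.mem_filter, Finset.mem_univ, true_and]; simpa using hj⟩
  set tstep : Fin n → ℝ := fun j =>
    if 0 < w j then ((⌈y j⌉ : ℝ) - y j) / w j else ((⌊y j⌋ : ℝ) - y j) / w j with htstep
  have hstep_pos : ∀ j ∈ T, 0 < tstep j := by
    intro j hj
    have hwj : w j ≠ 0 := by simpa [hT] using hj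
    have hfr := floor_lt_of_mem_fracSet (hsupp j hwj)
    rcases lt_or_gt_of_ne hwj with hneg | hpos
    · rw [htstep]
      simp only [if_neg (not_lt.mpr hneg.le)]
      exact div_pos_of_neg_of_neg (by linarith [hfr.1]) hneg
    · rw [htstep]
      simp only [if_pos hpos]
      exact div_pos (by linarith [hfr.2]) hpos
  set t : ℝ := T.inf' hTne tstep with ht
  have htpos : 0 < t := by
    rw [ht, Finset.lt_inf'_iff]
    exact hstep_pos
  -- coordinatewise bounds
  have hub : ∀ j, 0 < w j → y j + t * w j ≤ (⌈y j⌉ : ℝ) := by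
    intro j hpos
    have hjT : j ∈ T := by simp [hT, ne_of_gt hpos]
    have hle : t ≤ tstep j := Finset.inf'_le _ hjT
    have : t * w j ≤ (⌈y j⌉ : ℝ) - y j := by
      rw [htstep] at hle
      simp only [if_pos hpos] at hle
      calc t * w j ≤ (((⌈y j⌉ : ℝ) - y j) / w j) * w j := by
            exact mul_le_mul_of_nonneg_right hle hpos.le
        _ = (⌈y j⌉ : ℝ) - y j := div_mul_cancel₀ _ (ne_of_gt hpos)
    linarith
  have hlb : ∀ j, w j < 0 → (⌊y j⌋ : ℝ) ≤ y j + t * w j := by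
    intro j hneg
    have hjT : j ∈ T := by simp [hT, ne_of_lt hneg]
    have hle : t ≤ tstep j := Finset.inf'_le _ hjT
    have : (⌊y j⌋ : ℝ) - y j ≤ t * w j := by
      rw [htstep] at hle
      simp only [if_neg (not_lt.mpr hneg.le)] at hle
      calc (⌊y j⌋ : ℝ) - y j = (((⌊y j⌋ : ℝ) - y j) / w j) * w j :=
            (div_mul_cancel₀ _ (ne_of_lt hneg)).symm
        _ ≤ t * w j := by
            exact mul_le_mul_of_nonpos_right hle hneg.le
    linarith
  have hnn : ∀ j, 0 ≤ y j + t * w j := by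
    intro j
    rcases lt_trichotomy (w j) 0 with hneg | hzero | hpos
    · have := hlb j hneg
      have h0 : (0 : ℝ) ≤ (⌊y j⌋ : ℝ) := by
        exact_mod_cast Int.floor_nonneg.mpr (hy0 j)
      linarith
    · simp [hzero, hy0 j]
    · nlinarith [hy0 j, htpos]
  -- constraints preserved
  have hsum : ∀ c : Fin n → ℝ, ∑ j, c j * (y j + t * w j)
      = (∑ j, c j * y j) + t * ∑ j, c j * w j := by
    intro c
    rw [Finset.mul_sum, ← Finset.sum_add_distrib]
    exact Finset.sum_congr rfl fun j _ => by ring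
  refine ⟨t, htpos, hnn, ?_, ?_, ?_⟩
  · rw [hsum c1, hc1w]; simpa using hy1
  · rw [hsum c2, hc2w]; simpa using hy2
  -- strict subset of fractional coordinates
  have hsub : fracSet (fun j => y j + t * w j) ⊆ fracSet y := by
    intro j hj
    by_cases hwj : w j = 0
    · rw [mem_fracSet] at hj ⊢
      simpa [hwj] using hj
    · exact hsupp j hwj
  obtain ⟨j0, hj0T, hj0eq⟩ := Finset.exists_mem_eq_inf' hTne tstep
  have hwj0 : w j0 ≠ 0 := by simpa [hT] using hj0T
  have hj0int : ∃ z : ℤ, y j0 + t * w j0 = (z : ℝ) := by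
    rcases lt_or_gt_of_ne hwj0 with hneg | hpos
    · refine ⟨⌊y j0⌋, ?_⟩
      have hteq : t = tstep j0 := by rw [ht]; exact hj0eq
      rw [hteq, htstep]
      simp only [if_neg (not_lt.mpr hneg.le)]
      rw [div_mul_cancel₀ _ (ne_of_lt hneg)]
      ring
    · refine ⟨⌈y j0⌉, ?_⟩
      have hteq : t = tstep j0 := by rw [ht]; exact hj0eq
      rw [hteq, htstep]
      simp only [if_pos hpos]
      rw [div_mul_cancel₀ _ (ne_of_gt hpos)]
      ring
  refine Finset.ssubset_iff_of_subset hsub |>.mpr ⟨j0, hsupp j0 hwj0, ?_⟩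
  simp only [mem_fracSet, not_not]
  exact hj0int

/-- Every point of the 2-row packing LP is a convex combination of points of it having at
most two non-integer coordinates. -/
lemma frac_decomp {n : ℕ} (c1 c2 : Fin n → ℝ) (d1 d2 : ℝ) :
    ∀ (N : ℕ) (y : Fin n → ℝ), (∀ j, 0 ≤ y j) →
      (∑ j, c1 j * y j ≤ d1) → (∑ j, c2 j * y j ≤ d2) → (fracSet y).card ≤ N →
      y ∈ convexHull ℝ {v : Fin n → ℝ | ((∀ j, 0 ≤ v j) ∧
        (∑ j, c1 j * v j ≤ d1) ∧ (∑ j, c2 j * v j ≤ d2)) ∧ (fracSet v).card ≤ 2} := by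
  intro N
  induction N with
  | zero =>
    intro y hy0 hy1 hy2 hcard
    exact subset_convexHull ℝ _ ⟨⟨hy0, hy1, hy2⟩, by omega⟩
  | succ N ih =>
    intro y hy0 hy1 hy2 hcard
    by_cases hc2 : (fracSet y).card ≤ 2
    · exact subset_convexHull ℝ _ ⟨⟨hy0, hy1, hy2⟩, hc2⟩
    · have h3 : 3 ≤ (fracSet y).card := by omega
      obtain ⟨s, hs, hscard⟩ := Finset.exists_subset_card_eq h3
      obtain ⟨i, j, k, hij, hik, hjk, rfl⟩ := Finset.card_eq_three.mp hscard
      have hiF : i ∈ fracSet y := hs (by simp)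
      have hjF : j ∈ fracSet y := hs (by simp)
      have hkF : k ∈ fracSet y := hs (by simp)
      obtain ⟨w, hw0, hwsupp, hw1, hw2⟩ := exists_direction c1 c2 hij hik hjk
      have hsupp : ∀ l, w l ≠ 0 → l ∈ fracSet y := by
        intro l hl
        rcases hwsupp l hl with rfl | rfl | rfl <;> assumption
      -- step in direction w
      obtain ⟨t1, ht1pos, hp0, hp1, hp2, hpsub⟩ :=
        step_lemma c1 c2 d1 d2 y hy0 hy1 hy2 w hw0 hsupp hw1 hw2
      -- step in direction -w
      have hnw0 : (fun l => -w l) ≠ (0 : Fin n → ℝ) := by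
        intro h
        apply hw0
        funext l
        have := congrFun h l
        simp at this
        simpa using this
      have hnsupp : ∀ l, (fun l => -w l) l ≠ 0 → l ∈ fracSet y := by
        intro l hl
        exact hsupp l (by simpa using hl)
      have hnw1 : ∑ l, c1 l * (fun l => -w l) l = 0 := by
        simp only [mul_neg, Finset.sum_neg_distrib]
        simpa using hw1
      have hnw2 : ∑ l, c2 l * (fun l => -w l) l = 0 := by
        simp only [mul_neg, Finset.sum_neg_distrib]
        simpa using hw2
      obtain ⟨t2, ht2pos, hq0, hq1, hq2, hqsub⟩ :=
        step_lemma c1 c2 d1 d2 y hy0 hy1 hy2 (fun l => -w l) hnw0 hnsupp hnw1 hnw2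
      set p : Fin n → ℝ := fun l => y l + t1 * w l with hp
      set q : Fin n → ℝ := fun l => y l + t2 * (-w l) with hq
      have hpcard : (fracSet p).card ≤ N := by
        have := Finset.card_lt_card hpsub
        omega
      have hqcard : (fracSet q).card ≤ N := by
        have := Finset.card_lt_card hqsub
        omega
      have hpmem := ih p hp0 hp1 hp2 hpcard
      have hqmem := ih q hq0 hq1 hq2 hqcard
      have hsumt : 0 < t1 + t2 := by linarith
      have hcomb : y = (t2 / (t1 + t2)) • p + (t1 / (t1 + t2)) • q := by
        funext l
        simp only [Pi.add_apply, Pi.smul_apply, smul_eq_mul, hp, hq]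
        field_simp
        ring
      rw [hcomb]
      exact (convex_convexHull ℝ _) hpmem hqmem
        (div_nonneg ht2pos.le hsumt.le) (div_nonneg ht1pos.le hsumt.le)
        (by field_simp; ring)


lemma subset_pair {α : Type*} [DecidableEq α] (hne : Nonempty α) {s : Finset α}
    (h : s.card ≤ 2) : ∃ p q : α, s ⊆ {p, q} := by
  obtain ⟨a⟩ := hne
  interval_cases h' : s.card
  · rw [Finset.card_eq_zero] at h'
    exact ⟨a, a, by simp [h']⟩
  · obtain ⟨p, rfl⟩ := Finset.card_eq_one.mp h'
    exact ⟨p, p, by intro x hx; simp at hx; simp [hx]⟩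
  · obtain ⟨p, q, hpq, rfl⟩ := Finset.card_eq_two.mp h'
    exact ⟨p, q, le_refl _⟩

lemma fract_eq_zero_of_not_mem {n : ℕ} {v : Fin n → ℝ} {j : Fin n} (h : j ∉ fracSet v) :
    Int.fract (v j) = 0 := by
  rw [mem_fracSet, not_not] at h
  obtain ⟨z, hz⟩ := h
  rw [hz, Int.fract_intCast]

/-- A point of the 2-row packing LP with at most 2 non-integer coordinates, scaled by 1/3,
lies in the integer hull. -/
lemma third_mem {n : ℕ} (hn : 0 < n) (c1 c2 : Fin n → ℝ) (d1 d2 : ℝ)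
    (hc1 : ∀ j, 0 ≤ c1 j) (hc2 : ∀ j, 0 ≤ c2 j)
    (hc1d : ∀ j, c1 j ≤ d1) (hc2d : ∀ j, c2 j ≤ d2)
    (hd1 : 0 ≤ d1) (hd2 : 0 ≤ d2)
    (v : Fin n → ℝ) (hv0 : ∀ j, 0 ≤ v j)
    (hv1 : ∑ j, c1 j * v j ≤ d1) (hv2 : ∑ j, c2 j * v j ≤ d2)
    (hcard : (fracSet v).card ≤ 2) :
    (3⁻¹ : ℝ) • v ∈ convexHull ℝ {z : Fin n → ℝ | (∀ j, 0 ≤ z j) ∧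
      (∀ j, ∃ m : ℤ, z j = (m : ℝ)) ∧ (∑ j, c1 j * z j ≤ d1) ∧ (∑ j, c2 j * z j ≤ d2)} := by
  classical
  set S : Set (Fin n → ℝ) := {z : Fin n → ℝ | (∀ j, 0 ≤ z j) ∧
      (∀ j, ∃ m : ℤ, z j = (m : ℝ)) ∧ (∑ j, c1 j * z j ≤ d1) ∧ (∑ j, c2 j * z j ≤ d2)} with hS
  obtain ⟨p, q, hpq⟩ := subset_pair ⟨⟨0, hn⟩⟩ hcard
  set g : Fin n → ℝ := fun j => (⌊v j⌋ : ℝ) with hg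
  set ep : Fin n → ℝ := fun j => if j = p then 1 else 0 with hep
  set eq' : Fin n → ℝ := fun j => if j = q then 1 else 0 with heq'
  set lp : ℝ := Int.fract (v p) with hlp
  set lq : ℝ := if q = p then 0 else Int.fract (v q) with hlq
  have hlp0 : 0 ≤ lp := Int.fract_nonneg _
  have hlp1 : lp ≤ 1 := (Int.fract_lt_one _).le
  have hlq0 : 0 ≤ lq := by
    rw [hlq]
    split_ifs
    · exact le_refl 0
    · exact Int.fract_nonneg _
  have hlq1 : lq ≤ 1 := by
    rw [hlq]
    split_ifs
    · norm_num
    · exact (Int.fract_lt_one _).le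
  have hgS : g ∈ S := by
    refine ⟨fun j => ?_, fun j => ⟨⌊v j⌋, rfl⟩, ?_, ?_⟩
    · simp only [hg]
      exact_mod_cast Int.floor_nonneg.mpr (hv0 j)
    · exact le_trans (Finset.sum_le_sum fun j _ =>
        mul_le_mul_of_nonneg_left (Int.floor_le _) (hc1 j)) hv1
    · exact le_trans (Finset.sum_le_sum fun j _ =>
        mul_le_mul_of_nonneg_left (Int.floor_le _) (hc2 j)) hv2
  have hsum_ind : ∀ (c : Fin n → ℝ) (r : Fin n),
      ∑ j, c j * (if j = r then (1:ℝ) else 0) = c r := by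
    intro c r
    rw [Finset.sum_eq_single r]
    · simp
    · intro b _ hb; simp [hb]
    · intro h; exact absurd (Finset.mem_univ r) h
  have hepS : ep ∈ S := by
    refine ⟨fun j => ?_, fun j => ?_, ?_, ?_⟩
    · by_cases h : j = p <;> simp [hep, h]
    · exact ⟨if j = p then 1 else 0, by by_cases h : j = p <;> simp [hep, h]⟩
    · rw [hep, hsum_ind]; exact hc1d p
    · rw [hep, hsum_ind]; exact hc2d p
  have heqS : eq' ∈ S := by
    refine ⟨fun j => ?_, fun j => ?_, ?_, ?_⟩
    · by_cases h : j = q <;> simp [heq', h]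
    · exact ⟨if j = q then 1 else 0, by by_cases h : j = q <;> simp [heq', h]⟩
    · rw [heq', hsum_ind]; exact hc1d q
    · rw [heq', hsum_ind]; exact hc2d q
  have h0S : (0 : Fin n → ℝ) ∈ S := by
    refine ⟨fun j => le_refl 0, fun j => ⟨0, by simp⟩, ?_, ?_⟩
    · simpa using hd1
    · simpa using hd2
  set θ : ℝ := 1 - 3⁻¹ - lp/3 - lq/3 with hθ
  have hθ0 : 0 ≤ θ := by rw [hθ]; linarith
  have hw_nonneg : ∀ i ∈ (Finset.univ : Finset (Fin 4)), 0 ≤ (![3⁻¹, lp/3, lq/3, θ]) i := by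
    intro i _
    fin_cases i
    · norm_num
    · show (0:ℝ) ≤ lp/3; linarith
    · show (0:ℝ) ≤ lq/3; linarith
    · exact hθ0
  have hw_sum : ∑ i, (![3⁻¹, lp/3, lq/3, θ]) i = 1 := by
    rw [Fin.sum_univ_four]
    show (3⁻¹ : ℝ) + lp/3 + lq/3 + θ = 1
    rw [hθ]; ring
  have hz_mem : ∀ i ∈ (Finset.univ : Finset (Fin 4)),
      (![g, ep, eq', 0]) i ∈ convexHull ℝ S := by
    intro i _
    fin_cases i
    · exact subset_convexHull ℝ S hgS
    · exact subset_convexHull ℝ S hepS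
    · exact subset_convexHull ℝ S heqS
    · exact subset_convexHull ℝ S h0S
  have hmem := (convex_convexHull ℝ S).sum_mem hw_nonneg hw_sum hz_mem
  have hkey : (3⁻¹ : ℝ) • v = ∑ i, (![3⁻¹, lp/3, lq/3, θ]) i • (![g, ep, eq', 0]) i := by
    rw [Fin.sum_univ_four]
    show (3⁻¹ : ℝ) • v = (3⁻¹ : ℝ) • g + (lp/3) • ep + (lq/3) • eq' + θ • (0 : Fin n → ℝ)
    funext j
    have hfr : v j = (⌊v j⌋ : ℝ) + Int.fract (v j) := (Int.floor_add_fract (v j)).symm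
    simp only [Pi.add_apply, Pi.smul_apply, smul_eq_mul, Pi.zero_apply, mul_zero, add_zero]
    by_cases hjp : j = p
    · subst hjp
      by_cases hqp : q = j
      · subst hqp
        simp only [hg, hep, heq', hlq, hlp, if_pos rfl, eq_self_iff_true, if_true]
        linarith [hfr]
      · simp only [hg, hep, heq', hlp, if_pos rfl,
          if_neg (show ¬ j = q from fun h => hqp h.symm)]
        linarith [hfr]
    · by_cases hjq : j = q
      · subst hjq
        have hqp : ¬ (j = p) := hjp
        simp only [hg, hep, heq', hlq, if_neg hjp, if_pos rfl]
        linarith [hfr]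
      · have hjF : j ∉ fracSet v := by
          intro hmem'
          have := hpq hmem'
          simp only [Finset.mem_insert, Finset.mem_singleton] at this
          rcases this with h | h
          · exact hjp h
          · exact hjq h
        have h0 : Int.fract (v j) = 0 := fract_eq_zero_of_not_mem hjF
        simp only [hg, hep, heq', if_neg hjp, if_neg hjq]
        linarith [hfr, h0]
  rw [hkey]
  exact hmem

lemma agg_swap {m n : ℕ} (l : Fin m → ℝ) (a : Matrix (Fin m) (Fin n) ℚ) (x : Fin n → ℝ) :
    ∑ i, l i * ∑ j, (a i j : ℝ) * x j = ∑ j, (∑ i, l i * (a i j : ℝ)) * x j := by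
  simp only [Finset.mul_sum, Finset.sum_mul]
  rw [Finset.sum_comm]
  exact Finset.sum_congr rfl fun j _ => Finset.sum_congr rfl fun i _ => by ring

/-- Scaling a point of the 2-row packing LP by 1/3 lands in the integer hull. -/
lemma third_scale_mem {n : ℕ} (hn : 0 < n) (c1 c2 : Fin n → ℝ) (d1 d2 : ℝ)
    (hc1 : ∀ j, 0 ≤ c1 j) (hc2 : ∀ j, 0 ≤ c2 j)
    (hc1d : ∀ j, c1 j ≤ d1) (hc2d : ∀ j, c2 j ≤ d2)
    (hd1 : 0 ≤ d1) (hd2 : 0 ≤ d2)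
    (x : Fin n → ℝ) (hx0 : ∀ j, 0 ≤ x j)
    (hx1 : ∑ j, c1 j * x j ≤ d1) (hx2 : ∑ j, c2 j * x j ≤ d2) :
    (3⁻¹ : ℝ) • x ∈ convexHull ℝ {z : Fin n → ℝ | (∀ j, 0 ≤ z j) ∧
      (∀ j, ∃ m : ℤ, z j = (m : ℝ)) ∧ (∑ j, c1 j * z j ≤ d1) ∧ (∑ j, c2 j * z j ≤ d2)} := by
  have hA := frac_decomp c1 c2 d1 d2 (fracSet x).card x hx0 hx1 hx2 le_rfl
  have himg : (3⁻¹ : ℝ) • x ∈ (3⁻¹ : ℝ) • (convexHull ℝ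
      {v : Fin n → ℝ | ((∀ j, 0 ≤ v j) ∧
        (∑ j, c1 j * v j ≤ d1) ∧ (∑ j, c2 j * v j ≤ d2)) ∧ (fracSet v).card ≤ 2}) :=
    Set.smul_mem_smul_set hA
  rw [← convexHull_smul] at himg
  refine convexHull_min ?_ (convex_convexHull ℝ _) himg
  rintro z ⟨v, hv, rfl⟩
  exact third_mem hn c1 c2 d1 d2 hc1 hc2 hc1d hc2d hd1 hd2 v
    hv.1.1 hv.1.2.1 hv.1.2.2 hv.2

lemma hull_subset_halfspace {m n : ℕ} (A : Matrix (Fin m) (Fin n) ℚ) (b : Fin m → ℚ)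
    (l : Fin m → ℝ) :
    packAggIntHull A b l ⊆ {x : Fin n → ℝ | (∀ j, 0 ≤ x j) ∧
      ∑ i, l i * ∑ j, (A i j : ℝ) * x j ≤ ∑ i, l i * (b i : ℝ)} := by
  apply convexHull_min
  · rintro z ⟨h0, _, hle⟩
    exact ⟨h0, hle⟩
  · intro u hu v hv a a' ha ha' haa
    refine ⟨fun j => ?_, ?_⟩
    · have : (a • u + a' • v) j = a * u j + a' * v j := rfl
      rw [this]
      exact add_nonneg (mul_nonneg ha (hu.1 j)) (mul_nonneg ha' (hv.1 j))
    · have hu2 := hu.2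
      have hv2 := hv.2
      rw [agg_swap] at hu2 hv2 ⊢
      have hfun : ∀ j, (a • u + a' • v) j = a * u j + a' * v j := fun j => rfl
      have expand : ∑ j, (∑ i, l i * (A i j : ℝ)) * ((a • u + a' • v) j)
          = a * (∑ j, (∑ i, l i * (A i j : ℝ)) * u j)
            + a' * (∑ j, (∑ i, l i * (A i j : ℝ)) * v j) := by
        rw [Finset.mul_sum, Finset.mul_sum, ← Finset.sum_add_distrib]
        exact Finset.sum_congr rfl fun j _ => by rw [hfun j]; ring
      rw [expand]
      have h1 := mul_le_mul_of_nonneg_left hu2 ha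
      have h2 := mul_le_mul_of_nonneg_left hv2 ha'
      have h3 : a * (∑ i, l i * (b i : ℝ)) + a' * (∑ i, l i * (b i : ℝ))
          = ∑ i, l i * (b i : ℝ) := by rw [← add_mul, haa, one_mul]
      linarith


/-- For a packing polyhedron `P = {x ≥ 0 : Ax ≤ b}` with rational data
(`0 ≤ A_{ij}`, `0 ≤ b_i`, `A_{ij} ≤ b_i`), `𝒜(P) ⊆ 3 · 𝒜₂(P)`. -/
theorem packing_aggClosure_subset_three_smul_agg2Closure
    {m n : ℕ} (hm : 0 < m) (hn : 0 < n)
    (A : Matrix (Fin m) (Fin n) ℚ) (b : Fin m → ℚ)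
    (hA : ∀ i j, 0 ≤ A i j) (hb : ∀ i, 0 ≤ b i) (hAb : ∀ i j, A i j ≤ b i) :
    packAggClosure A b ⊆ (3 : ℝ) • packAgg2Closure A b := by
  intro x hx
  have hmem : ∀ l : Fin m → ℝ, (∀ i, 0 ≤ l i) → x ∈ packAggIntHull A b l := by
    intro l hl
    have := Set.mem_iInter₂.mp hx l hl
    exact this
  rw [Set.mem_smul_set]
  refine ⟨(3⁻¹ : ℝ) • x, ?_, ?_⟩
  · rw [packAgg2Closure]
    simp only [Set.mem_iInter, Set.mem_setOf_eq]
    intro l1 hl1 l2 hl2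
    have hx1 := hull_subset_halfspace A b l1 (hmem l1 hl1)
    have hx2 := hull_subset_halfspace A b l2 (hmem l2 hl2)
    set c1 : Fin n → ℝ := fun j => ∑ i, l1 i * (A i j : ℝ) with hc1def
    set c2 : Fin n → ℝ := fun j => ∑ i, l2 i * (A i j : ℝ) with hc2def
    set d1 : ℝ := ∑ i, l1 i * (b i : ℝ) with hd1def
    set d2 : ℝ := ∑ i, l2 i * (b i : ℝ) with hd2def
    have hc1 : ∀ j, 0 ≤ c1 j := fun j => Finset.sum_nonneg fun i _ =>
      mul_nonneg (hl1 i) (by exact_mod_cast (hA i j))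
    have hc2 : ∀ j, 0 ≤ c2 j := fun j => Finset.sum_nonneg fun i _ =>
      mul_nonneg (hl2 i) (by exact_mod_cast (hA i j))
    have hc1d : ∀ j, c1 j ≤ d1 := fun j => Finset.sum_le_sum fun i _ =>
      mul_le_mul_of_nonneg_left (by exact_mod_cast (hAb i j)) (hl1 i)
    have hc2d : ∀ j, c2 j ≤ d2 := fun j => Finset.sum_le_sum fun i _ =>
      mul_le_mul_of_nonneg_left (by exact_mod_cast (hAb i j)) (hl2 i)
    have hd1 : 0 ≤ d1 := Finset.sum_nonneg fun i _ =>
      mul_nonneg (hl1 i) (by exact_mod_cast (hb i))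
    have hd2 : 0 ≤ d2 := Finset.sum_nonneg fun i _ =>
      mul_nonneg (hl2 i) (by exact_mod_cast (hb i))
    have hxr1 : ∑ j, c1 j * x j ≤ d1 := by
      rw [hc1def, hd1def]
      have := hx1.2
      rw [agg_swap] at this
      exact this
    have hxr2 : ∑ j, c2 j * x j ≤ d2 := by
      rw [hc2def, hd2def]
      have := hx2.2
      rw [agg_swap] at this
      exact this
    have hkey := third_scale_mem hn c1 c2 d1 d2 hc1 hc2 hc1d hc2d hd1 hd2 x hx1.1 hxr1 hxr2
    rw [packAggIntHull2]
    have hsetEq : {z : Fin n → ℝ | (∀ j, 0 ≤ z j) ∧ (∀ j, ∃ zz : ℤ, z j = (zz : ℝ)) ∧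
        (∑ i, l1 i * ∑ j, (A i j : ℝ) * z j ≤ ∑ i, l1 i * (b i : ℝ)) ∧
        (∑ i, l2 i * ∑ j, (A i j : ℝ) * z j ≤ ∑ i, l2 i * (b i : ℝ))}
        = {z : Fin n → ℝ | (∀ j, 0 ≤ z j) ∧ (∀ j, ∃ mm : ℤ, z j = (mm : ℝ)) ∧
          (∑ j, c1 j * z j ≤ d1) ∧ (∑ j, c2 j * z j ≤ d2)} := by
      ext z
      simp only [Set.mem_setOf_eq]
      rw [agg_swap l1 A z, agg_swap l2 A z]
    rw [hsetEq]
    exact hkey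
  · funext j
    show (3 : ℝ) * ((3⁻¹ : ℝ) * x j) = x j
    rw [← mul_assoc]
    norm_num
end

section
/- Let P = {x ∈ ℝⁿ_+ : Ax ≤ b} be a packing polyhedron with rational data and m ≥ 2 constraints, i.e., A_{ij} ≥ 0, b_i ≥ 0 and A_{ij} ≤ b_i for all i ∈ [m], j ∈ [n]. Then 2-𝒜(P) ⊆ 3·𝒜₂(P): the original 2-row closure of a packing polyhedron is contained in 3 times its 2-aggregation closure. -/
open scoped Pointwise

/-- The original 2-row closure `2-𝒜(P) = ∩_{{i₁,i₂}⊆[m], i₁≠i₂} P^I(e_{i₁},e_{i₂})`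
of a packing polyhedron. -/
noncomputable def packRow2Closure {m n : ℕ} (A : Matrix (Fin m) (Fin n) ℚ) (b : Fin m → ℚ) :
    Set (Fin n → ℝ) :=
  ⋂ i1 : Fin m, ⋂ i2 : Fin m, ⋂ _ : i1 ≠ i2,
    packAggIntHull2 A b (Pi.single i1 1) (Pi.single i2 1)

open Finset
open scoped Pointwise

namespace PackAux

variable {n : ℕ}

/-- unit vector -/
def ee (j : Fin n) : Fin n → ℝ := fun j' => if j' = j then 1 else 0

/-- the integer feasible set for two aggregated knapsacks -/
def ZS (c1 c2 : Fin n → ℝ) (d1 d2 : ℝ) : Set (Fin n → ℝ) :=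
  {z | (∀ j, 0 ≤ z j) ∧ (∀ j, ∃ k : ℤ, z j = (k : ℝ)) ∧
    (∑ j, c1 j * z j ≤ d1) ∧ (∑ j, c2 j * z j ≤ d2)}

open Classical in
noncomputable def suppF (x : Fin n → ℝ) : Finset (Fin n) :=
  Finset.univ.filter (fun j => x j ≠ 0)

lemma mem_suppF {x : Fin n → ℝ} {j : Fin n} : j ∈ suppF x ↔ x j ≠ 0 := by
  classical
  simp [suppF]

lemma sum_ee (c : Fin n → ℝ) (j : Fin n) : ∑ j', c j' * ee j j' = c j := by
  simp [ee, mul_ite, Finset.sum_ite_eq']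

lemma zero_mem_ZS {c1 c2 : Fin n → ℝ} {d1 d2 : ℝ} (hd1 : 0 ≤ d1) (hd2 : 0 ≤ d2) :
    (0 : Fin n → ℝ) ∈ ZS c1 c2 d1 d2 := by
  refine ⟨fun j => le_refl 0, fun j => ⟨0, by simp⟩, by simpa using hd1, by simpa using hd2⟩

lemma ee_mem_ZS {c1 c2 : Fin n → ℝ} {d1 d2 : ℝ}
    (hcd1 : ∀ j, c1 j ≤ d1) (hcd2 : ∀ j, c2 j ≤ d2) (j : Fin n) :
    ee j ∈ ZS c1 c2 d1 d2 := by
  refine ⟨fun j' => ?_, fun j' => ?_, ?_, ?_⟩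
  · unfold ee; split <;> norm_num
  · unfold ee; split
    · exact ⟨1, by norm_num⟩
    · exact ⟨0, by norm_num⟩
  · rw [sum_ee]; exact hcd1 j
  · rw [sum_ee]; exact hcd2 j

lemma sum_linear (c x w : Fin n → ℝ) (t : ℝ) :
    ∑ j, c j * (x j + t * w j) = ∑ j, c j * x j + t * ∑ j, c j * w j := by
  rw [Finset.mul_sum, ← Finset.sum_add_distrib]
  exact Finset.sum_congr rfl fun j _ => by ring

lemma two_elems {α : Type*} (S : Finset α) (hS : S.card ≤ 2) (a0 : α) :
    ∃ a b, ∀ j ∈ S, j = a ∨ j = b := by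
  classical
  rcases S.eq_empty_or_nonempty with rfl | ⟨a, ha⟩
  · exact ⟨a0, a0, by simp⟩
  · have h1 : (S.erase a).card ≤ 1 := by
      have := Finset.card_erase_of_mem ha; omega
    rcases (S.erase a).eq_empty_or_nonempty with he | ⟨b, hb⟩
    · refine ⟨a, a, fun j hj => ?_⟩
      by_contra hne
      push_neg at hne
      have : j ∈ S.erase a := Finset.mem_erase.mpr ⟨hne.1, hj⟩
      simp [he] at this
    · refine ⟨a, b, fun j hj => ?_⟩
      by_cases hja : j = a
      · exact Or.inl hja
      · exact Or.inr (Finset.card_le_one.mp h1 j (Finset.mem_erase.mpr ⟨hja, hj⟩) b hb)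

lemma shrink (x w : Fin n → ℝ) (hx : ∀ j, 0 ≤ x j)
    (hwsupp : ∀ j, w j ≠ 0 → x j ≠ 0) (hneg : ∃ j, w j < 0) :
    ∃ t : ℝ, 0 < t ∧ (∀ j, 0 ≤ x j + t * w j) ∧ ∃ j0, x j0 ≠ 0 ∧ x j0 + t * w j0 = 0 := by
  classical
  obtain ⟨jn, hjn⟩ := hneg
  set T : Finset (Fin n) := Finset.univ.filter (fun j => w j < 0) with hT
  have hjnT : jn ∈ T := by simp [hT, hjn]
  have hTne : T.Nonempty := ⟨jn, hjnT⟩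
  set R : Finset ℝ := T.image (fun j => x j / (-w j)) with hR
  have hRne : R.Nonempty := hTne.image _
  set t : ℝ := R.min' hRne with htdef
  obtain ⟨j0, hj0T, hj0⟩ := Finset.mem_image.mp (R.min'_mem hRne)
  have hwj0 : w j0 < 0 := (Finset.mem_filter.mp hj0T).2
  have hxj0 : x j0 ≠ 0 := hwsupp j0 (ne_of_lt hwj0)
  have hxj0' : 0 < x j0 := lt_of_le_of_ne (hx j0) (Ne.symm hxj0)
  have ht0 : 0 < t := by
    rw [htdef, ← hj0]
    exact div_pos hxj0' (by linarith)
  refine ⟨t, ht0, fun j => ?_, j0, hxj0, ?_⟩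
  · by_cases hwj : w j < 0
    · have hjT : j ∈ T := by simp [hT, hwj]
      have hmem : x j / (-w j) ∈ R := Finset.mem_image_of_mem _ hjT
      have hle : t ≤ x j / (-w j) := Finset.min'_le R _ hmem
      have hwpos : 0 < -w j := by linarith
      have := (le_div_iff₀ hwpos).mp hle
      nlinarith
    · push_neg at hwj
      have h1' : 0 ≤ t * w j := mul_nonneg ht0.le hwj
      have := hx j
      linarith
  · have hw0 : -w j0 ≠ 0 := ne_of_gt (by linarith)
    have ht' : t = x j0 / -w j0 := by rw [htdef, hj0]
    rw [ht']
    field_simp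
    rw [div_self (ne_of_lt hwj0)]; ring


-- NEW PART:

lemma add_mem_ZS {c1 c2 : Fin n → ℝ} {d1 d2 : ℝ} (j : Fin n)
    (hj1 : c1 j = 0) (hj2 : c2 j = 0) (N : ℕ) {z : Fin n → ℝ} (hz : z ∈ ZS c1 c2 d1 d2) :
    z + (N:ℝ) • ee j ∈ ZS c1 c2 d1 d2 := by
  obtain ⟨hz0, hzint, hz1, hz2⟩ := hz
  have hsum1 : ∑ j', c1 j' * (z j' + (N:ℝ) * ee j j') = ∑ j', c1 j' * z j' := by
    rw [sum_linear, sum_ee, hj1]; ring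
  have hsum2 : ∑ j', c2 j' * (z j' + (N:ℝ) * ee j j') = ∑ j', c2 j' * z j' := by
    rw [sum_linear, sum_ee, hj2]; ring
  refine ⟨fun j' => ?_, fun j' => ?_, ?_, ?_⟩
  · simp only [Pi.add_apply, Pi.smul_apply, smul_eq_mul, ee]
    have := hz0 j'
    split <;> [linarith [Nat.cast_nonneg (α := ℝ) N]; linarith]
  · obtain ⟨k, hk⟩ := hzint j'
    simp only [Pi.add_apply, Pi.smul_apply, smul_eq_mul, ee]
    split
    · exact ⟨k + N, by push_cast [hk]; ring⟩
    · exact ⟨k, by simp [hk]⟩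
  · calc ∑ j', c1 j' * (z + (N:ℝ) • ee j) j' = ∑ j', c1 j' * (z j' + (N:ℝ) * ee j j') := by
          simp [Pi.add_apply]
      _ = ∑ j', c1 j' * z j' := hsum1
      _ ≤ d1 := hz1
  · calc ∑ j', c2 j' * (z + (N:ℝ) • ee j) j' = ∑ j', c2 j' * (z j' + (N:ℝ) * ee j j') := by
          simp [Pi.add_apply]
      _ = ∑ j', c2 j' * z j' := hsum2
      _ ≤ d2 := hz2

lemma absorb (c1 c2 : Fin n → ℝ) (d1 d2 : ℝ) (j : Fin n)
    (hj1 : c1 j = 0) (hj2 : c2 j = 0)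
    (y : Fin n → ℝ) (hy : y ∈ convexHull ℝ (ZS c1 c2 d1 d2)) (t : ℝ) (ht : 0 ≤ t) :
    y + t • ee j ∈ convexHull ℝ (ZS c1 c2 d1 d2) := by
  rcases eq_or_lt_of_le ht with h0 | htpos
  · simp [← h0, hy]
  · set N : ℕ := ⌈t⌉₊ with hN
    have hNpos : (0:ℝ) < N := by
      have : 0 < N := Nat.ceil_pos.mpr htpos
      exact_mod_cast this
    have htN : t ≤ (N:ℝ) := Nat.le_ceil t
    have hsub : ZS c1 c2 d1 d2 + ({0, (N:ℝ) • ee j} : Set (Fin n → ℝ)) ⊆ ZS c1 c2 d1 d2 := by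
      rintro u ⟨z, hz, v, hv, rfl⟩
      rcases hv with rfl | rfl
      · simpa using hz
      · exact add_mem_ZS j hj1 hj2 N hz
    have hseg : t • ee j ∈ convexHull ℝ ({0, (N:ℝ) • ee j} : Set (Fin n → ℝ)) := by
      have h0m : (0 : Fin n → ℝ) ∈ convexHull ℝ ({0, (N:ℝ) • ee j} : Set (Fin n → ℝ)) :=
        subset_convexHull _ _ (by simp)
      have h1m : (N:ℝ) • ee j ∈ convexHull ℝ ({0, (N:ℝ) • ee j} : Set (Fin n → ℝ)) :=
        subset_convexHull _ _ (by simp)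
      have hc := (convex_convexHull ℝ ({0, (N:ℝ) • ee j} : Set (Fin n → ℝ))) h0m h1m
        (a := 1 - t/N) (b := t/N)
        (by have : t/N ≤ 1 := by rw [div_le_one hNpos]; exact htN
            linarith)
        (by positivity) (by ring)
      have heq : (1 - t/N) • (0 : Fin n → ℝ) + (t/N) • ((N:ℝ) • ee j) = t • ee j := by
        rw [smul_zero, zero_add, smul_smul, div_mul_cancel₀]
        exact ne_of_gt hNpos
      rwa [heq] at hc
    have hmem2 : y + t • ee j ∈
        convexHull ℝ (ZS c1 c2 d1 d2) + convexHull ℝ ({0, (N:ℝ) • ee j} : Set (Fin n → ℝ)) :=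
      Set.add_mem_add hy hseg
    rw [← convexHull_add] at hmem2
    exact convexHull_mono hsub hmem2

lemma base (c1 c2 : Fin n → ℝ) (d1 d2 : ℝ)
    (hc1 : ∀ j, 0 ≤ c1 j) (hc2 : ∀ j, 0 ≤ c2 j)
    (hcd1 : ∀ j, c1 j ≤ d1) (hcd2 : ∀ j, c2 j ≤ d2)
    (hd1 : 0 ≤ d1) (hd2 : 0 ≤ d2)
    (x : Fin n → ℝ) (hx : ∀ j, 0 ≤ x j)
    (hx1 : ∑ j, c1 j * x j ≤ d1) (hx2 : ∑ j, c2 j * x j ≤ d2)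
    (a b : Fin n) (hsupp : ∀ j, j ≠ a → j ≠ b → x j = 0) :
    (3:ℝ)⁻¹ • x ∈ convexHull ℝ (ZS c1 c2 d1 d2) := by
  set p : Fin n → ℝ := fun j => (⌊x j⌋ : ℝ) with hp
  have hpmem : p ∈ ZS c1 c2 d1 d2 := by
    refine ⟨fun j => ?_, fun j => ⟨⌊x j⌋, rfl⟩, ?_, ?_⟩
    · have h0 : (0:ℤ) ≤ ⌊x j⌋ := Int.floor_nonneg.mpr (hx j)
      show (0:ℝ) ≤ (⌊x j⌋ : ℝ)
      exact_mod_cast h0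
    · refine le_trans (Finset.sum_le_sum fun j _ => ?_) hx1
      exact mul_le_mul_of_nonneg_left (Int.floor_le (x j)) (hc1 j)
    · refine le_trans (Finset.sum_le_sum fun j _ => ?_) hx2
      exact mul_le_mul_of_nonneg_left (Int.floor_le (x j)) (hc2 j)
  set fra : ℝ := Int.fract (x a) with hfra
  set frb : ℝ := if a = b then 0 else Int.fract (x b) with hfrb
  have hfra0 : 0 ≤ fra := Int.fract_nonneg _
  have hfra1 : fra ≤ 1 := le_of_lt (Int.fract_lt_one _)
  have hfrb0 : 0 ≤ frb := by
    rw [hfrb]; split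
    · exact le_rfl
    · exact Int.fract_nonneg _
  have hfrb1 : frb ≤ 1 := by
    rw [hfrb]; split
    · norm_num
    · exact le_of_lt (Int.fract_lt_one _)
  have key : (3:ℝ)⁻¹ • x =
      (1/3 : ℝ) • p + (fra/3) • ee a + (frb/3) • ee b + ((2 - fra - frb)/3) • (0 : Fin n → ℝ) := by
    funext j
    simp only [Pi.add_apply, Pi.smul_apply, smul_eq_mul, Pi.zero_apply, mul_zero, add_zero, ee]
    by_cases hja : j = a
    · subst hja
      by_cases hab : j = b
      · have hfrbz : frb = 0 := by rw [hfrb, if_pos hab]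
        rw [hfrbz, if_pos rfl]
        simp only [hp, hfra, mul_one, mul_zero]
        have h := Int.floor_add_fract (x j)
        linarith
      · rw [if_pos rfl, if_neg hab]
        simp only [hp, hfra, mul_one, mul_zero]
        have h := Int.floor_add_fract (x j)
        linarith
    · by_cases hjb : j = b
      · subst hjb
        have hab : ¬ (a = j) := fun h => hja h.symm
        have hfrbv : frb = Int.fract (x j) := by rw [hfrb, if_neg hab]
        rw [if_neg hja, if_pos rfl, hfrbv]
        simp only [hp, mul_one, mul_zero]
        have h := Int.floor_add_fract (x j)
        linarith
      · have hxj : x j = 0 := hsupp j hja hjb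
        rw [if_neg hja, if_neg hjb, hp]
        simp [hxj]
  rw [key]
  have hCvx : Convex ℝ (convexHull ℝ (ZS c1 c2 d1 d2)) := convex_convexHull ℝ _
  have m0 : p ∈ convexHull ℝ (ZS c1 c2 d1 d2) := subset_convexHull _ _ hpmem
  have m1 : ee a ∈ convexHull ℝ (ZS c1 c2 d1 d2) :=
    subset_convexHull _ _ (ee_mem_ZS hcd1 hcd2 a)
  have m2 : ee b ∈ convexHull ℝ (ZS c1 c2 d1 d2) :=
    subset_convexHull _ _ (ee_mem_ZS hcd1 hcd2 b)
  have m3 : (0 : Fin n → ℝ) ∈ convexHull ℝ (ZS c1 c2 d1 d2) :=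
    subset_convexHull _ _ (zero_mem_ZS hd1 hd2)
  have := hCvx.sum_mem (t := (Finset.univ : Finset (Fin 4)))
    (w := ![1/3, fra/3, frb/3, (2 - fra - frb)/3]) (z := ![p, ee a, ee b, 0])
    (fun i _ => by fin_cases i <;> simp <;> linarith)
    (by simp [Fin.sum_univ_four]; ring)
    (fun i _ => by fin_cases i <;> simpa)
  simpa [Fin.sum_univ_four] using this


lemma onesign (c1 c2 : Fin n → ℝ) (hc1 : ∀ j, 0 ≤ c1 j) (hc2 : ∀ j, 0 ≤ c2 j)
    (x w : Fin n → ℝ)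
    (h_nofree : ∀ j, x j ≠ 0 → ¬(c1 j = 0 ∧ c2 j = 0))
    (hwsupp : ∀ j, w j ≠ 0 → x j ≠ 0)
    (hw1 : ∑ j, c1 j * w j = 0) (hw2 : ∑ j, c2 j * w j = 0)
    (j0 : Fin n) (hj0 : w j0 ≠ 0) (hwpos : ∀ j, 0 ≤ w j) : False := by
  have hsum : ∑ j, (c1 j * w j + c2 j * w j) = 0 := by
    rw [Finset.sum_add_distrib, hw1, hw2]; ring
  have hterm : ∀ j ∈ Finset.univ, (0:ℝ) ≤ c1 j * w j + c2 j * w j := fun j _ =>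
    add_nonneg (mul_nonneg (hc1 j) (hwpos j)) (mul_nonneg (hc2 j) (hwpos j))
  have hz := (Finset.sum_eq_zero_iff_of_nonneg hterm).mp hsum j0 (Finset.mem_univ j0)
  have hwj0 : 0 < w j0 := lt_of_le_of_ne (hwpos j0) (Ne.symm hj0)
  have t1 : (0:ℝ) ≤ c1 j0 * w j0 := mul_nonneg (hc1 j0) (hwpos j0)
  have t2 : (0:ℝ) ≤ c2 j0 * w j0 := mul_nonneg (hc2 j0) (hwpos j0)
  have e1 : c1 j0 * w j0 = 0 := by linarith
  have e2 : c2 j0 * w j0 = 0 := by linarith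
  have hc10 : c1 j0 = 0 := by
    rcases mul_eq_zero.mp e1 with h | h
    · exact h
    · exact absurd h hj0
  have hc20 : c2 j0 = 0 := by
    rcases mul_eq_zero.mp e2 with h | h
    · exact h
    · exact absurd h hj0
  exact h_nofree j0 (hwsupp j0 hj0) ⟨hc10, hc20⟩

lemma core (hn : 0 < n) (c1 c2 : Fin n → ℝ) (d1 d2 : ℝ)
    (hc1 : ∀ j, 0 ≤ c1 j) (hc2 : ∀ j, 0 ≤ c2 j)
    (hcd1 : ∀ j, c1 j ≤ d1) (hcd2 : ∀ j, c2 j ≤ d2)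
    (hd1 : 0 ≤ d1) (hd2 : 0 ≤ d2) :
    ∀ (k : ℕ) (x : Fin n → ℝ), (suppF x).card ≤ k →
      (∀ j, 0 ≤ x j) → (∑ j, c1 j * x j ≤ d1) → (∑ j, c2 j * x j ≤ d2) →
      (3:ℝ)⁻¹ • x ∈ convexHull ℝ (ZS c1 c2 d1 d2) := by
  intro k
  induction k with
  | zero =>
    intro x hcard hx hx1 hx2
    have hempty : suppF x = ∅ := Finset.card_eq_zero.mp (Nat.le_zero.mp hcard)
    refine base c1 c2 d1 d2 hc1 hc2 hcd1 hcd2 hd1 hd2 x hx hx1 hx2 ⟨0, hn⟩ ⟨0, hn⟩ ?_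
    intro j _ _
    by_contra h
    have : j ∈ suppF x := mem_suppF.mpr h
    simp [hempty] at this
  | succ k ih =>
    intro x hcard hx hx1 hx2
    by_cases hsmall : (suppF x).card ≤ 2
    · obtain ⟨a, b, hab2⟩ := two_elems (suppF x) hsmall ⟨0, hn⟩
      refine base c1 c2 d1 d2 hc1 hc2 hcd1 hcd2 hd1 hd2 x hx hx1 hx2 a b ?_
      intro j hja hjb
      by_contra h
      rcases hab2 j (mem_suppF.mpr h) with h' | h'
      · exact hja h'
      · exact hjb h'
    · push_neg at hsmall
      have h3 : 3 ≤ (suppF x).card := hsmall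
      obtain ⟨t3, ht3sub, ht3card⟩ := Finset.exists_subset_card_eq h3
      obtain ⟨a, b, c, hab, hac, hbc, rfl⟩ := Finset.card_eq_three.mp ht3card
      have hax : x a ≠ 0 := mem_suppF.mp (ht3sub (by simp))
      have hbx : x b ≠ 0 := mem_suppF.mp (ht3sub (by simp))
      have hcx : x c ≠ 0 := mem_suppF.mp (ht3sub (by simp))
      by_cases hfree : ∃ j, x j ≠ 0 ∧ c1 j = 0 ∧ c2 j = 0
      · obtain ⟨j, hxj, hj1, hj2⟩ := hfree
        have hx'le : ∀ j', Function.update x j 0 j' ≤ x j' := by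
          intro j'
          rw [Function.update_apply]
          split
          · rename_i h; subst h; exact hx j'
          · exact le_rfl
        have hx'0 : ∀ j', 0 ≤ Function.update x j 0 j' := by
          intro j'
          rw [Function.update_apply]
          split
          · exact le_rfl
          · exact hx j'
        have hsupp' : suppF (Function.update x j 0) = (suppF x).erase j := by
          ext j'
          rw [mem_suppF, Finset.mem_erase, mem_suppF, Function.update_apply]
          constructor
          · intro h
            by_cases hjj : j' = j
            · rw [if_pos hjj] at h; exact absurd rfl h
            · rw [if_neg hjj] at h; exact ⟨hjj, h⟩
          · rintro ⟨h1, h2⟩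
            rw [if_neg h1]; exact h2
        have hcard' : (suppF (Function.update x j 0)).card ≤ k := by
          rw [hsupp', Finset.card_erase_of_mem (mem_suppF.mpr hxj)]
          omega
        have hx1' : ∑ j', c1 j' * Function.update x j 0 j' ≤ d1 :=
          le_trans (Finset.sum_le_sum fun j' _ =>
            mul_le_mul_of_nonneg_left (hx'le j') (hc1 j')) hx1
        have hx2' : ∑ j', c2 j' * Function.update x j 0 j' ≤ d2 :=
          le_trans (Finset.sum_le_sum fun j' _ =>
            mul_le_mul_of_nonneg_left (hx'le j') (hc2 j')) hx2
        have hy := ih (Function.update x j 0) hcard' hx'0 hx1' hx2'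
        have hxeq : (3:ℝ)⁻¹ • x =
            (3:ℝ)⁻¹ • Function.update x j 0 + ((3:ℝ)⁻¹ * x j) • ee j := by
          funext j'
          simp only [Pi.add_apply, Pi.smul_apply, smul_eq_mul, ee, Function.update_apply]
          by_cases h : j' = j
          · subst h; simp
          · rw [if_neg h, if_neg h]; ring
        rw [hxeq]
        exact absorb c1 c2 d1 d2 j hj1 hj2 _ hy _ (mul_nonneg (by norm_num) (hx j))
      · have h_nofree : ∀ j, x j ≠ 0 → ¬(c1 j = 0 ∧ c2 j = 0) := by
          intro j hxj hcc
          exact hfree ⟨j, hxj, hcc.1, hcc.2⟩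
        set v : Fin 3 → (Fin 2 → ℝ) := ![![c1 a, c2 a], ![c1 b, c2 b], ![c1 c, c2 c]] with hv
        have hdep : ¬ LinearIndependent ℝ v := by
          intro h
          have h1 := h.fintype_card_le_finrank
          rw [Module.finrank_fintype_fun_eq_card] at h1
          simp at h1
        obtain ⟨g, hg, i0, hgi0⟩ := Fintype.not_linearIndependent_iff.mp hdep
        set w : Fin n → ℝ :=
          fun j => if j = a then g 0 else if j = b then g 1 else if j = c then g 2 else 0 with hw
        have hwa : w a = g 0 := by simp [hw]
        have hwb : w b = g 1 := by simp [hw, Ne.symm hab]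
        have hwc : w c = g 2 := by simp [hw, Ne.symm hac, Ne.symm hbc]
        have hwsupp : ∀ j, w j ≠ 0 → x j ≠ 0 := by
          intro j hwj
          rw [hw] at hwj
          by_cases h1 : j = a
          · subst h1; exact hax
          by_cases h2 : j = b
          · subst h2; exact hbx
          by_cases h3 : j = c
          · subst h3; exact hcx
          simp [h1, h2, h3] at hwj
        have hsum3 : ∀ u : Fin n → ℝ, ∑ j, u j * w j = u a * g 0 + u b * g 1 + u c * g 2 := by
          intro u
          have h0 : ∑ j ∈ ({a, b, c} : Finset (Fin n)), u j * w j = ∑ j, u j * w j := by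
            apply Finset.sum_subset (Finset.subset_univ _)
            intro j _ hj
            simp only [Finset.mem_insert, Finset.mem_singleton, not_or] at hj
            obtain ⟨h1, h2, h3⟩ := hj
            simp [hw, h1, h2, h3]
          rw [← h0]
          rw [Finset.sum_insert (by simp [hab, hac]), Finset.sum_insert (by simp [hbc]),
            Finset.sum_singleton, hwa, hwb, hwc]
          ring
        have hgc : ∀ r : Fin 2, g 0 * v 0 r + g 1 * v 1 r + g 2 * v 2 r = 0 := by
          intro r
          have h := congrFun hg r
          rw [Finset.sum_apply] at h
          simpa [Fin.sum_univ_three] using h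
        have hv00 : v 0 0 = c1 a := by simp [hv]
        have hv01 : v 0 1 = c2 a := by simp [hv]
        have hv10 : v 1 0 = c1 b := by simp [hv]
        have hv11 : v 1 1 = c2 b := by simp [hv]
        have hv20 : v 2 0 = c1 c := by simp [hv]
        have hv21 : v 2 1 = c2 c := by simp [hv]
        have hw1 : ∑ j, c1 j * w j = 0 := by
          rw [hsum3]
          have h := hgc 0
          rw [hv00, hv10, hv20] at h
          linear_combination h
        have hw2 : ∑ j, c2 j * w j = 0 := by
          rw [hsum3]
          have h := hgc 1
          rw [hv01, hv11, hv21] at h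
          linear_combination h
        have hwne : ∃ j, w j ≠ 0 := by
          fin_cases i0
          · exact ⟨a, by rwa [hwa]⟩
          · exact ⟨b, by rwa [hwb]⟩
          · exact ⟨c, by rwa [hwc]⟩
        obtain ⟨j0, hj0⟩ := hwne
        have hneg : ∃ j, w j < 0 := by
          by_contra hcon
          push_neg at hcon
          exact onesign c1 c2 hc1 hc2 x w h_nofree hwsupp hw1 hw2 j0 hj0 hcon
        have hw1' : ∑ j, c1 j * -(w j) = 0 := by
          simp only [mul_neg, Finset.sum_neg_distrib, hw1, neg_zero]
        have hw2' : ∑ j, c2 j * -(w j) = 0 := by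
          simp only [mul_neg, Finset.sum_neg_distrib, hw2, neg_zero]
        have hpos : ∃ j, 0 < w j := by
          by_contra hcon
          push_neg at hcon
          refine onesign c1 c2 hc1 hc2 x (fun j => -(w j)) h_nofree
            (fun j hj => hwsupp j (by simpa using hj)) hw1' hw2' j0 (by simpa using hj0)
            (fun j => by simpa using hcon j)
        obtain ⟨tp, htp, hxp0, jp, hjpx, hjp0⟩ := shrink x w hx hwsupp hneg
        obtain ⟨tm, htm, hxm0, jm, hjmx, hjm0⟩ :=
          shrink x (fun j => -(w j)) hx (fun j hj => hwsupp j (by simpa using hj))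
            (by obtain ⟨j, hj⟩ := hpos; exact ⟨j, by simpa using hj⟩)
        -- the two shrunk points
        have hsuppP : suppF (fun j => x j + tp * w j) ⊆ (suppF x).erase jp := by
          intro j hj
          rw [mem_suppF] at hj
          rw [Finset.mem_erase, mem_suppF]
          constructor
          · intro hjj
            subst hjj
            exact hj hjp0
          · intro hx0
            have hw0 : w j = 0 := by
              by_contra hw'
              exact (hwsupp j hw') hx0
            exact hj (by rw [hx0, hw0]; ring)
        have hsuppM : suppF (fun j => x j + tm * -(w j)) ⊆ (suppF x).erase jm := by
          intro j hj
          rw [mem_suppF] at hj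
          rw [Finset.mem_erase, mem_suppF]
          constructor
          · intro hjj
            subst hjj
            exact hj hjm0
          · intro hx0
            have hw0 : w j = 0 := by
              by_contra hw'
              exact (hwsupp j hw') hx0
            exact hj (by rw [hx0, hw0]; ring)
        have hcardP : (suppF (fun j => x j + tp * w j)).card ≤ k := by
          have h1 := Finset.card_le_card hsuppP
          rw [Finset.card_erase_of_mem (mem_suppF.mpr hjpx)] at h1
          omega
        have hcardM : (suppF (fun j => x j + tm * -(w j))).card ≤ k := by
          have h1 := Finset.card_le_card hsuppM
          rw [Finset.card_erase_of_mem (mem_suppF.mpr hjmx)] at h1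
          omega
        have hxp1 : ∑ j, c1 j * (x j + tp * w j) ≤ d1 := by
          rw [sum_linear, hw1, mul_zero, add_zero]; exact hx1
        have hxp2 : ∑ j, c2 j * (x j + tp * w j) ≤ d2 := by
          rw [sum_linear, hw2, mul_zero, add_zero]; exact hx2
        have hxm1 : ∑ j, c1 j * (x j + tm * -(w j)) ≤ d1 := by
          rw [sum_linear, hw1', mul_zero, add_zero]; exact hx1
        have hxm2 : ∑ j, c2 j * (x j + tm * -(w j)) ≤ d2 := by
          rw [sum_linear, hw2', mul_zero, add_zero]; exact hx2
        have hmp := ih (fun j => x j + tp * w j) hcardP hxp0 hxp1 hxp2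
        have hmm := ih (fun j => x j + tm * -(w j)) hcardM hxm0 hxm1 hxm2
        have hsumt : 0 < tp + tm := by linarith
        have hcomb : (3:ℝ)⁻¹ • x =
            (tm / (tp + tm)) • ((3:ℝ)⁻¹ • (fun j => x j + tp * w j)) +
            (tp / (tp + tm)) • ((3:ℝ)⁻¹ • (fun j => x j + tm * -(w j))) := by
          funext j
          simp only [Pi.add_apply, Pi.smul_apply, smul_eq_mul]
          field_simp
          ring
        rw [hcomb]
        exact (convex_convexHull ℝ (ZS c1 c2 d1 d2)) hmp hmm
          (div_nonneg htm.le hsumt.le) (div_nonneg htp.le hsumt.le)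
          (by field_simp; ring)


lemma swap_sum {m n : ℕ} (A : Matrix (Fin m) (Fin n) ℚ) (l : Fin m → ℝ) (z : Fin n → ℝ) :
    ∑ i, l i * ∑ j, (A i j : ℝ) * z j = ∑ j, (∑ i, l i * (A i j : ℝ)) * z j := by
  simp only [Finset.mul_sum, Finset.sum_mul]
  rw [Finset.sum_comm]
  exact Finset.sum_congr rfl fun j _ => Finset.sum_congr rfl fun i _ => by ring

lemma single_sum {m : ℕ} (i0 : Fin m) (g : Fin m → ℝ) :
    ∑ i, (Pi.single i0 (1:ℝ) : Fin m → ℝ) i * g i = g i0 := by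
  have h : ∀ i, (Pi.single i0 (1:ℝ) : Fin m → ℝ) i * g i = if i = i0 then g i else 0 := by
    intro i
    rw [Pi.single_apply]
    split <;> simp
  rw [Finset.sum_congr rfl fun i _ => h i, Finset.sum_ite_eq' Finset.univ i0 g]
  simp

lemma hull_subset_Q {m n : ℕ} (A : Matrix (Fin m) (Fin n) ℚ) (b : Fin m → ℚ) (i1 i2 : Fin m) :
    packAggIntHull2 A b (Pi.single i1 1) (Pi.single i2 1) ⊆
      {y : Fin n → ℝ | (∀ j, 0 ≤ y j) ∧ ∑ j, (A i1 j : ℝ) * y j ≤ (b i1 : ℝ) ∧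
        ∑ j, (A i2 j : ℝ) * y j ≤ (b i2 : ℝ)} := by
  apply convexHull_min
  · intro y hy
    obtain ⟨h0, _, h1, h2⟩ := hy
    rw [single_sum, single_sum] at h1
    rw [single_sum, single_sum] at h2
    exact ⟨h0, h1, h2⟩
  · intro y hy z hz α β hα hβ hαβ
    have hexp : ∀ (i : Fin m),
        ∑ j, (A i j : ℝ) * (α • y + β • z) j =
          α * ∑ j, (A i j : ℝ) * y j + β * ∑ j, (A i j : ℝ) * z j := by
      intro i
      rw [Finset.mul_sum, Finset.mul_sum, ← Finset.sum_add_distrib]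
      refine Finset.sum_congr rfl fun j _ => ?_
      simp only [Pi.add_apply, Pi.smul_apply, smul_eq_mul]
      ring
    refine ⟨fun j => ?_, ?_, ?_⟩
    · simp only [Pi.add_apply, Pi.smul_apply, smul_eq_mul]
      exact add_nonneg (mul_nonneg hα (hy.1 j)) (mul_nonneg hβ (hz.1 j))
    · rw [hexp i1]
      have e1 := hy.2.1
      have e2 := hz.2.1
      have h1 : α * ∑ j, (A i1 j : ℝ) * y j ≤ α * (b i1 : ℝ) :=
        mul_le_mul_of_nonneg_left e1 hα
      have h2 : β * ∑ j, (A i1 j : ℝ) * z j ≤ β * (b i1 : ℝ) :=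
        mul_le_mul_of_nonneg_left e2 hβ
      have h3 : α * (b i1 : ℝ) + β * (b i1 : ℝ) = (b i1 : ℝ) := by
        rw [← add_mul, hαβ, one_mul]
      linarith
    · rw [hexp i2]
      have e1 := hy.2.2
      have e2 := hz.2.2
      have h1 : α * ∑ j, (A i2 j : ℝ) * y j ≤ α * (b i2 : ℝ) :=
        mul_le_mul_of_nonneg_left e1 hα
      have h2 : β * ∑ j, (A i2 j : ℝ) * z j ≤ β * (b i2 : ℝ) :=
        mul_le_mul_of_nonneg_left e2 hβ
      have h3 : α * (b i2 : ℝ) + β * (b i2 : ℝ) = (b i2 : ℝ) := by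
        rw [← add_mul, hαβ, one_mul]
      linarith


end PackAux

/-- For a packing polyhedron `P = {x ≥ 0 : Ax ≤ b}` with rational data
and `m ≥ 2` constraints, `2-𝒜(P) ⊆ 3 · 𝒜₂(P)`. -/
theorem packing_row2Closure_subset_three_smul_agg2Closure
    {m n : ℕ} (hm : 2 ≤ m) (hn : 0 < n)
    (A : Matrix (Fin m) (Fin n) ℚ) (b : Fin m → ℚ)
    (hA : ∀ i j, 0 ≤ A i j) (hb : ∀ i, 0 ≤ b i) (hAb : ∀ i j, A i j ≤ b i) :
    packRow2Closure A b ⊆ (3 : ℝ) • packAgg2Closure A b := by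
  intro x hx
  have hpair : ∀ i1 i2 : Fin m, i1 ≠ i2 →
      x ∈ packAggIntHull2 A b (Pi.single i1 1) (Pi.single i2 1) := by
    intro i1 i2 hne
    have h1 := Set.mem_iInter.mp hx i1
    have h2 := Set.mem_iInter.mp h1 i2
    exact Set.mem_iInter.mp h2 hne
  have h01 : (⟨0, by omega⟩ : Fin m) ≠ ⟨1, by omega⟩ := by
    simp [Fin.ext_iff]
  have hx0 : ∀ j, 0 ≤ x j :=
    fun j => (PackAux.hull_subset_Q A b _ _ (hpair _ _ h01)).1 j
  have hrow : ∀ i, ∑ j, (A i j : ℝ) * x j ≤ (b i : ℝ) := by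
    intro i
    by_cases h : i = ⟨0, by omega⟩
    · subst h
      exact (PackAux.hull_subset_Q A b _ _ (hpair _ _ h01)).2.1
    · exact (PackAux.hull_subset_Q A b _ _
        (hpair (⟨0, by omega⟩ : Fin m) i (fun he => h he.symm))).2.2
  rw [Set.mem_smul_set]
  refine ⟨(3:ℝ)⁻¹ • x, ?_, smul_inv_smul₀ (by norm_num : (3:ℝ) ≠ 0) x⟩
  rw [packAgg2Closure]
  refine Set.mem_iInter₂.mpr fun l1 hl1 => Set.mem_iInter₂.mpr fun l2 hl2 => ?_
  have hl1' : ∀ i, 0 ≤ l1 i := hl1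
  have hl2' : ∀ i, 0 ≤ l2 i := hl2
  have hseteq : {y : Fin n → ℝ | (∀ j, 0 ≤ y j) ∧ (∀ j, ∃ z : ℤ, y j = (z : ℝ)) ∧
      (∑ i, l1 i * ∑ j, (A i j : ℝ) * y j ≤ ∑ i, l1 i * (b i : ℝ)) ∧
      (∑ i, l2 i * ∑ j, (A i j : ℝ) * y j ≤ ∑ i, l2 i * (b i : ℝ))} =
      PackAux.ZS (fun j => ∑ i, l1 i * (A i j : ℝ)) (fun j => ∑ i, l2 i * (A i j : ℝ))
        (∑ i, l1 i * (b i : ℝ)) (∑ i, l2 i * (b i : ℝ)) := by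
    ext y
    simp only [PackAux.ZS, Set.mem_setOf_eq]
    rw [PackAux.swap_sum A l1 y, PackAux.swap_sum A l2 y]
  rw [packAggIntHull2, hseteq]
  have hA' : ∀ i j, (0:ℝ) ≤ (A i j : ℝ) := fun i j => by exact_mod_cast hA i j
  have hb' : ∀ i, (0:ℝ) ≤ (b i : ℝ) := fun i => by exact_mod_cast hb i
  have hAb' : ∀ i j, (A i j : ℝ) ≤ (b i : ℝ) := fun i j => by exact_mod_cast hAb i j
  refine PackAux.core hn _ _ _ _
    (fun j => Finset.sum_nonneg fun i _ => mul_nonneg (hl1' i) (hA' i j))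
    (fun j => Finset.sum_nonneg fun i _ => mul_nonneg (hl2' i) (hA' i j))
    (fun j => Finset.sum_le_sum fun i _ => mul_le_mul_of_nonneg_left (hAb' i j) (hl1' i))
    (fun j => Finset.sum_le_sum fun i _ => mul_le_mul_of_nonneg_left (hAb' i j) (hl2' i))
    (Finset.sum_nonneg fun i _ => mul_nonneg (hl1' i) (hb' i))
    (Finset.sum_nonneg fun i _ => mul_nonneg (hl2' i) (hb' i))
    ((PackAux.suppF x).card) x le_rfl hx0 ?_ ?_
  · rw [← PackAux.swap_sum A l1 x]
    exact Finset.sum_le_sum fun i _ => mul_le_mul_of_nonneg_left (hrow i) (hl1' i)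
  · rw [← PackAux.swap_sum A l2 x]
    exact Finset.sum_le_sum fun i _ => mul_le_mul_of_nonneg_left (hrow i) (hl2' i)
end

section
/- Let P = {x ∈ ℝⁿ_+ : Ax ≥ b} be a covering polyhedron with rational data and m ≥ 2 constraints, i.e., A_{ij} ≥ 0, b_i ≥ 0 and A_{ij} ≤ b_i for all i ∈ [m], j ∈ [n]. Then 2-𝒜(P) ⊆ (1/2.5)·𝒜₂(P): the original 2-row closure of a covering polyhedron is contained in (2/5) times its 2-aggregation closure. -/
open scoped Pointwise

/-- `P^I(λ)` for a covering system `Ax ≥ b, x ≥ 0`: the convex hull of the nonnegative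
integer points satisfying the aggregated constraint `λᵀAx ≥ λᵀb`. -/
noncomputable def coverAggIntHull {m n : ℕ} (A : Matrix (Fin m) (Fin n) ℚ) (b : Fin m → ℚ)
    (lam : Fin m → ℝ) : Set (Fin n → ℝ) :=
  convexHull ℝ {x | (∀ j, 0 ≤ x j) ∧ (∀ j, ∃ z : ℤ, x j = (z : ℝ)) ∧
    ∑ i, lam i * ∑ j, (A i j : ℝ) * x j ≥ ∑ i, lam i * (b i : ℝ)}

/-- `P^I(λ₁,λ₂)` for a covering system. -/
noncomputable def coverAggIntHull2 {m n : ℕ} (A : Matrix (Fin m) (Fin n) ℚ) (b : Fin m → ℚ)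
    (l1 l2 : Fin m → ℝ) : Set (Fin n → ℝ) :=
  convexHull ℝ {x | (∀ j, 0 ≤ x j) ∧ (∀ j, ∃ z : ℤ, x j = (z : ℝ)) ∧
    (∑ i, l1 i * ∑ j, (A i j : ℝ) * x j ≥ ∑ i, l1 i * (b i : ℝ)) ∧
    (∑ i, l2 i * ∑ j, (A i j : ℝ) * x j ≥ ∑ i, l2 i * (b i : ℝ))}

/-- The aggregation closure `𝒜(P) = ∩_{λ ≥ 0} P^I(λ)` of a covering polyhedron. -/
noncomputable def coverAggClosure {m n : ℕ} (A : Matrix (Fin m) (Fin n) ℚ) (b : Fin m → ℚ) :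
    Set (Fin n → ℝ) :=
  ⋂ lam ∈ {l : Fin m → ℝ | ∀ i, 0 ≤ l i}, coverAggIntHull A b lam

/-- The 2-aggregation closure `𝒜₂(P) = ∩_{λ₁,λ₂ ≥ 0} P^I(λ₁,λ₂)` of a covering polyhedron. -/
noncomputable def coverAgg2Closure {m n : ℕ} (A : Matrix (Fin m) (Fin n) ℚ) (b : Fin m → ℚ) :
    Set (Fin n → ℝ) :=
  ⋂ l1 ∈ {l : Fin m → ℝ | ∀ i, 0 ≤ l i}, ⋂ l2 ∈ {l : Fin m → ℝ | ∀ i, 0 ≤ l i},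
    coverAggIntHull2 A b l1 l2

/-- The original 2-row closure `2-𝒜(P) = ∩_{{i₁,i₂}⊆[m], i₁≠i₂} P^I(e_{i₁},e_{i₂})`
of a covering polyhedron. -/
noncomputable def coverRow2Closure {m n : ℕ} (A : Matrix (Fin m) (Fin n) ℚ) (b : Fin m → ℚ) :
    Set (Fin n → ℝ) :=
  ⋂ i1 : Fin m, ⋂ i2 : Fin m, ⋂ _ : i1 ≠ i2,
    coverAggIntHull2 A b (Pi.single i1 1) (Pi.single i2 1)

set_option maxHeartbeats 1000000





lemma dot1 {n : ℕ} (c : Fin n → ℝ) (j : Fin n) (t : ℝ) :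
    ∑ l, c l * (if l = j then t else 0) = c j * t := by
  rw [Finset.sum_eq_single j]
  · simp
  · intro l _ hl; simp [hl]
  · intro h; exact absurd (Finset.mem_univ j) h

lemma failFacts (d a1 a2 S T : ℝ)
    (ha1 : 0 ≤ a1) (ha1' : a1 ≤ d) (ha2 : 0 ≤ a2) (ha2' : a2 ≤ d)
    (hS : 0 ≤ S) (hT : 0 ≤ T)
    (hA : 5/2 * d ≤ a1 * S + a2 * T)
    (hfail : a1 * ⌊S⌋₊ + a2 * ⌊T⌋₊ < d) :
    0 < d ∧ d/2 < a1 ∧ d/2 < a2 ∧ 1/2 < S - ⌊S⌋₊ ∧ 1/2 < T - ⌊T⌋₊ ∧ (⌊S⌋₊ + ⌊T⌋₊ = 1) := by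
  have hfS0 : (⌊S⌋₊ : ℝ) ≤ S := Nat.floor_le hS
  have hfT0 : (⌊T⌋₊ : ℝ) ≤ T := Nat.floor_le hT
  have hfS1 : S < ⌊S⌋₊ + 1 := Nat.lt_floor_add_one S
  have hfT1 : T < ⌊T⌋₊ + 1 := Nat.lt_floor_add_one T
  have hP0 : (0:ℝ) ≤ (⌊S⌋₊ : ℝ) := Nat.cast_nonneg _
  have hQ0 : (0:ℝ) ≤ (⌊T⌋₊ : ℝ) := Nat.cast_nonneg _
  have key1 : 3/2 * d < a1 * (S - ⌊S⌋₊) + a2 * (T - ⌊T⌋₊) := by nlinarith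
  have hb1 : a1 * (S - ⌊S⌋₊) ≤ a1 * 1 := by
    apply mul_le_mul_of_nonneg_left _ ha1; linarith
  have hb2 : a2 * (T - ⌊T⌋₊) ≤ a2 * 1 := by
    apply mul_le_mul_of_nonneg_left _ ha2; linarith
  have hnn1 : 0 ≤ a1 * (S - ⌊S⌋₊) := mul_nonneg ha1 (by linarith)
  have hnn2 : 0 ≤ a2 * (T - ⌊T⌋₊) := mul_nonneg ha2 (by linarith)
  have hd : 0 < d := by nlinarith
  have ha1big : d/2 < a1 := by nlinarith
  have ha2big : d/2 < a2 := by nlinarith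
  have ha1pos : 0 < a1 := by linarith
  have ha2pos : 0 < a2 := by linarith
  have hfS : 1/2 < S - ⌊S⌋₊ := by nlinarith
  have hfT : 1/2 < T - ⌊T⌋₊ := by nlinarith
  have hST : 5/2 ≤ S + T := by
    nlinarith [mul_le_mul_of_nonneg_right ha1' hS, mul_le_mul_of_nonneg_right ha2' hT]
  have hPQ2 : (⌊S⌋₊ : ℝ) + ⌊T⌋₊ < 2 := by
    nlinarith [mul_le_mul_of_nonneg_right ha1big.le hP0, mul_le_mul_of_nonneg_right ha2big.le hQ0]
  have hPQ1 : (1/2 : ℝ) < (⌊S⌋₊ : ℝ) + ⌊T⌋₊ := by linarith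
  have hlt : ⌊S⌋₊ + ⌊T⌋₊ < 2 := by
    exact_mod_cast (by push_cast; linarith : ((⌊S⌋₊ + ⌊T⌋₊ : ℕ) : ℝ) < 2)
  have hgt : 0 < ⌊S⌋₊ + ⌊T⌋₊ := by
    rcases Nat.eq_zero_or_pos (⌊S⌋₊ + ⌊T⌋₊) with h | h
    · exfalso
      have : ((⌊S⌋₊ + ⌊T⌋₊ : ℕ) : ℝ) = 0 := by rw [h]; norm_num
      push_cast at this; linarith
    · exact h
  exact ⟨hd, ha1big, ha2big, hfS, hfT, by omega⟩

lemma pick10 (d1 d2 a1 a2 b1 b2 S T q1 q2 : ℝ)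
    (h2a : d1 ≤ 2*a1) (h11a : d1 ≤ a1 + a2) (h2b : d2 ≤ 2*b1) (h11b : d2 ≤ b1 + b2)
    (hS : 3/2 ≤ S) (hT : 1/2 ≤ T) (hq1 : 0 ≤ q1) (hq2 : 0 ≤ q2) :
    ∃ p q : ℕ, d1 ≤ a1 * p + a2 * q ∧ d2 ≤ b1 * p + b2 * q ∧
      q1 * p + q2 * q ≤ q1 * S + q2 * T := by
  have hS' : q1 * (3/2) ≤ q1 * S := mul_le_mul_of_nonneg_left hS hq1
  have hT' : q2 * (1/2) ≤ q2 * T := mul_le_mul_of_nonneg_left hT hq2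
  by_cases hq : q1 ≤ q2
  · exact ⟨2, 0, by push_cast; linarith, by push_cast; linarith, by push_cast; linarith⟩
  · exact ⟨1, 1, by push_cast; linarith, by push_cast; linarith, by push_cast; linarith⟩

lemma round2 (d1 d2 a1 a2 b1 b2 S T q1 q2 : ℝ)
    (ha1 : 0 ≤ a1) (ha1' : a1 ≤ d1) (ha2 : 0 ≤ a2) (ha2' : a2 ≤ d1)
    (hb1 : 0 ≤ b1) (hb1' : b1 ≤ d2) (hb2 : 0 ≤ b2) (hb2' : b2 ≤ d2)
    (hS : 0 ≤ S) (hT : 0 ≤ T)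
    (hA : 5/2 * d1 ≤ a1 * S + a2 * T) (hB : 5/2 * d2 ≤ b1 * S + b2 * T)
    (hq1 : 0 ≤ q1) (hq2 : 0 ≤ q2) :
    ∃ p q : ℕ, d1 ≤ a1 * p + a2 * q ∧ d2 ≤ b1 * p + b2 * q ∧
      q1 * p + q2 * q ≤ q1 * S + q2 * T := by
  have hfS0 : (⌊S⌋₊ : ℝ) ≤ S := Nat.floor_le hS
  have hfT0 : (⌊T⌋₊ : ℝ) ≤ T := Nat.floor_le hT
  by_cases hfa : d1 ≤ a1 * ⌊S⌋₊ + a2 * ⌊T⌋₊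
  · by_cases hfb : d2 ≤ b1 * ⌊S⌋₊ + b2 * ⌊T⌋₊
    · refine ⟨⌊S⌋₊, ⌊T⌋₊, hfa, hfb, ?_⟩
      have := mul_le_mul_of_nonneg_left hfS0 hq1
      have := mul_le_mul_of_nonneg_left hfT0 hq2
      linarith
    · -- a passes at floors, b fails
      push_neg at hfb
      obtain ⟨hd2, hB1, hB2, hfS, hfT, hPQ⟩ :=
        failFacts d2 b1 b2 S T hb1 hb1' hb2 hb2' hS hT hB hfb
      rcases (by omega : (⌊S⌋₊ = 1 ∧ ⌊T⌋₊ = 0) ∨ (⌊S⌋₊ = 0 ∧ ⌊T⌋₊ = 1)) with ⟨h1, h2⟩ | ⟨h1, h2⟩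
      · rw [h1] at hfa hfS; rw [h2] at hfa hfT
        push_cast at hfa hfS hfT
        exact pick10 d1 d2 a1 a2 b1 b2 S T q1 q2 (by linarith) (by linarith)
          (by linarith) (by linarith) (by linarith) (by linarith) hq1 hq2
      · rw [h1] at hfa hfS; rw [h2] at hfa hfT
        push_cast at hfa hfS hfT
        obtain ⟨p, q, hh1, hh2, hh3⟩ := pick10 d1 d2 a2 a1 b2 b1 T S q2 q1 (by linarith)
          (by linarith) (by linarith) (by linarith) (by linarith) (by linarith) hq2 hq1
        exact ⟨q, p, by linarith, by linarith, by linarith⟩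
  · -- a fails
    push_neg at hfa
    obtain ⟨hd1, hA1, hA2, hfS, hfT, hPQ⟩ :=
      failFacts d1 a1 a2 S T ha1 ha1' ha2 ha2' hS hT hA hfa
    rcases (by omega : (⌊S⌋₊ = 1 ∧ ⌊T⌋₊ = 0) ∨ (⌊S⌋₊ = 0 ∧ ⌊T⌋₊ = 1)) with ⟨h1, h2⟩ | ⟨h1, h2⟩
    · rw [h1] at hfS; rw [h2] at hfT
      push_cast at hfS hfT
      have hbf : d2 ≤ 2*b1 ∧ d2 ≤ b1 + b2 := by
        by_cases hfb : d2 ≤ b1 * ⌊S⌋₊ + b2 * ⌊T⌋₊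
        · rw [h1] at hfb; rw [h2] at hfb; push_cast at hfb
          exact ⟨by linarith, by linarith⟩
        · push_neg at hfb
          obtain ⟨hd2, hB1, hB2, _, _, _⟩ :=
            failFacts d2 b1 b2 S T hb1 hb1' hb2 hb2' hS hT hB hfb
          exact ⟨by linarith, by linarith⟩
      exact pick10 d1 d2 a1 a2 b1 b2 S T q1 q2 (by linarith) (by linarith)
        hbf.1 hbf.2 (by linarith) (by linarith) hq1 hq2
    · rw [h1] at hfS; rw [h2] at hfT
      push_cast at hfS hfT
      have hbf : d2 ≤ 2*b2 ∧ d2 ≤ b1 + b2 := by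
        by_cases hfb : d2 ≤ b1 * ⌊S⌋₊ + b2 * ⌊T⌋₊
        · rw [h1] at hfb; rw [h2] at hfb; push_cast at hfb
          exact ⟨by linarith, by linarith⟩
        · push_neg at hfb
          obtain ⟨hd2, hB1, hB2, _, _, _⟩ :=
            failFacts d2 b1 b2 S T hb1 hb1' hb2 hb2' hS hT hB hfb
          exact ⟨by linarith, by linarith⟩
      obtain ⟨p, q, hh1, hh2, hh3⟩ := pick10 d1 d2 a2 a1 b2 b1 T S q2 q1 (by linarith)
        (by linarith) hbf.1 (by linarith) (by linarith) (by linarith) hq2 hq1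
      exact ⟨q, p, by linarith, by linarith, by linarith⟩

lemma dot3 {n : ℕ} (c : Fin n → ℝ) (i j k : Fin n) (hij : i ≠ j) (hik : i ≠ k) (hjk : j ≠ k)
    (g1 g2 g3 : ℝ) :
    ∑ l, c l * (if l = i then g1 else if l = j then g2 else if l = k then g3 else 0)
      = c i * g1 + c j * g2 + c k * g3 := by
  have hpt : ∀ l, (if l = i then g1 else if l = j then g2 else if l = k then g3 else 0)
      = (if l = i then g1 else 0) + ((if l = j then g2 else 0) + (if l = k then g3 else 0)) := by
    intro l
    by_cases h1 : l = i
    · subst h1; simp [hij, hik]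
    · by_cases h2 : l = j
      · subst h2; simp [h1, hjk]
      · by_cases h3 : l = k
        · subst h3; simp [h1, h2]
        · simp [h1, h2, h3]
  calc ∑ l, c l * (if l = i then g1 else if l = j then g2 else if l = k then g3 else 0)
      = ∑ l, (c l * (if l = i then g1 else 0) + (c l * (if l = j then g2 else 0)
          + c l * (if l = k then g3 else 0))) := by
        apply Finset.sum_congr rfl; intro l _; rw [hpt l]; ring
    _ = c i * g1 + c j * g2 + c k * g3 := by
        rw [Finset.sum_add_distrib, Finset.sum_add_distrib, dot1, dot1, dot1]; ring

lemma supportReduce {n : ℕ} (hn : 0 < n) (c1 c2 al : Fin n → ℝ) (d1 d2 : ℝ)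
    (hc1 : ∀ j, 0 ≤ c1 j) (hc2 : ∀ j, 0 ≤ c2 j) (hal : ∀ j, 0 ≤ al j) :
    ∀ (x : Fin n → ℝ), (∀ j, 0 ≤ x j) → d1 ≤ ∑ j, c1 j * x j → d2 ≤ ∑ j, c2 j * x j →
    ∃ (j k : Fin n) (s t : ℝ), 0 ≤ s ∧ 0 ≤ t ∧ d1 ≤ c1 j * s + c1 k * t ∧
      d2 ≤ c2 j * s + c2 k * t ∧ al j * s + al k * t ≤ ∑ j, al j * x j := by
  suffices H : ∀ (N : ℕ) (x : Fin n → ℝ), (∀ j, 0 ≤ x j) → d1 ≤ ∑ j, c1 j * x j →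
      d2 ≤ ∑ j, c2 j * x j → (Finset.univ.filter (fun j => x j ≠ 0)).card ≤ N →
      ∃ (j k : Fin n) (s t : ℝ), 0 ≤ s ∧ 0 ≤ t ∧ d1 ≤ c1 j * s + c1 k * t ∧
        d2 ≤ c2 j * s + c2 k * t ∧ al j * s + al k * t ≤ ∑ j, al j * x j by
    intro x hx h1 h2
    exact H _ x hx h1 h2 le_rfl
  intro N
  induction N with
  | zero =>
    intro x hx h1 h2 hcard
    have hsupp : (Finset.univ.filter (fun j => x j ≠ 0)) = ∅ := Finset.card_eq_zero.mp (by omega)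
    have hx0 : ∀ j, x j = 0 := by
      intro j
      by_contra hj
      have : j ∈ Finset.univ.filter (fun j => x j ≠ 0) :=
        Finset.mem_filter.mpr ⟨Finset.mem_univ _, hj⟩
      rw [hsupp] at this; exact absurd this (Finset.notMem_empty _)
    have hz1 : ∑ j, c1 j * x j = 0 := Finset.sum_eq_zero (fun j _ => by rw [hx0 j]; ring)
    have hz2 : ∑ j, c2 j * x j = 0 := Finset.sum_eq_zero (fun j _ => by rw [hx0 j]; ring)
    refine ⟨⟨0, hn⟩, ⟨0, hn⟩, 0, 0, le_rfl, le_rfl, by rw [hz1] at h1; linarith,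
      by rw [hz2] at h2; linarith, ?_⟩
    have : 0 ≤ ∑ j, al j * x j := Finset.sum_nonneg (fun j _ => mul_nonneg (hal j) (hx j))
    linarith
  | succ N IH =>
    intro x hx h1 h2 hcard
    by_cases hNle : (Finset.univ.filter (fun j => x j ≠ 0)).card ≤ N
    · exact IH x hx h1 h2 hNle
    have hNlt : N < (Finset.univ.filter (fun j => x j ≠ 0)).card := not_le.mp hNle
    set supp := Finset.univ.filter (fun j => x j ≠ 0) with hsuppdef
    have hxsupp : ∀ l ∈ supp, x l ≠ 0 := fun l hl => (Finset.mem_filter.mp hl).2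
    have hsum_eq : ∀ c : Fin n → ℝ, ∑ j ∈ supp, c j * x j = ∑ j, c j * x j := by
      intro c
      apply Finset.sum_filter_of_ne
      intro j _ hj hxj
      exact hj (by rw [hxj]; ring)
    by_cases hsmall : supp.card ≤ 2
    · -- small support: read off witnesses directly
      have h12 : supp.card = 1 ∨ supp.card = 2 := by omega
      rcases h12 with hc1' | hc2'
      · obtain ⟨j, hj⟩ := Finset.card_eq_one.mp hc1'
        have hsum : ∀ c : Fin n → ℝ, ∑ l, c l * x l = c j * x j := by
          intro c
          rw [← hsum_eq c, hj, Finset.sum_singleton]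
        refine ⟨j, j, x j, 0, hx j, le_rfl, ?_, ?_, ?_⟩
        · rw [hsum c1] at h1; linarith
        · rw [hsum c2] at h2; linarith
        · rw [hsum al]; linarith [le_refl (al j * x j)]
      · obtain ⟨j, k, hjk, hjkset⟩ := Finset.card_eq_two.mp hc2'
        have hsum : ∀ c : Fin n → ℝ, ∑ l, c l * x l = c j * x j + c k * x k := by
          intro c
          rw [← hsum_eq c, hjkset, Finset.sum_pair hjk]
        refine ⟨j, k, x j, x k, hx j, hx k, ?_, ?_, ?_⟩
        · rw [hsum c1] at h1; linarith
        · rw [hsum c2] at h2; linarith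
        · rw [hsum al]
    · -- big support: reduce support by one
      push_neg at hsmall
      obtain ⟨i, j, k, hi, hj, hk, hij, hik, hjk⟩ := Finset.two_lt_card_iff.mp hsmall
      -- find a kernel vector
      obtain ⟨g1, g2, g3, hker1, hker2, hgne⟩ : ∃ g1 g2 g3 : ℝ,
          c1 i * g1 + c1 j * g2 + c1 k * g3 = 0 ∧ c2 i * g1 + c2 j * g2 + c2 k * g3 = 0 ∧
          ¬(g1 = 0 ∧ g2 = 0 ∧ g3 = 0) := by
        by_cases hui : c1 i = 0 ∧ c2 i = 0
        · exact ⟨1, 0, 0, by rw [hui.1]; ring, by rw [hui.2]; ring, fun h => one_ne_zero h.1⟩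
        · by_cases hcross : c1 i * c2 j - c2 i * c1 j = 0
          · refine ⟨c1 j + c2 j, -(c1 i + c2 i), 0, by linear_combination hcross,
              by linear_combination -hcross, fun h => ?_⟩
            have h2 := h.2.1
            have hip : 0 < c1 i + c2 i := by
              rcases (not_and_or.mp hui) with h' | h'
              · have := lt_of_le_of_ne (hc1 i) (Ne.symm h'); linarith [hc2 i]
              · have := lt_of_le_of_ne (hc2 i) (Ne.symm h'); linarith [hc1 i]
            linarith [neg_eq_zero.mp h2 ▸ hip]
          · exact ⟨c1 j * c2 k - c2 j * c1 k, c1 k * c2 i - c2 k * c1 i,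
              c1 i * c2 j - c2 i * c1 j, by ring, by ring, fun h => hcross h.2.2⟩
      set v : Fin n → ℝ :=
        fun l => if l = i then g1 else if l = j then g2 else if l = k then g3 else 0 with hvdef
      have hv1 : ∑ l, c1 l * v l = 0 := by rw [hvdef]; rw [dot3 c1 i j k hij hik hjk]; exact hker1
      have hv2 : ∑ l, c2 l * v l = 0 := by rw [hvdef]; rw [dot3 c2 i j k hij hik hjk]; exact hker2
      have hvsupp : ∀ l, v l ≠ 0 → (l = i ∨ l = j ∨ l = k) := by
        intro l hl
        by_contra hcon
        push_neg at hcon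
        simp only [hvdef] at hl
        rw [if_neg hcon.1, if_neg hcon.2.1, if_neg hcon.2.2] at hl
        exact hl rfl
      have hvne : ∃ l, v l ≠ 0 := by
        rcases not_and_or.mp hgne with h' | h'
        · exact ⟨i, by simp [hvdef, h']⟩
        · rcases not_and_or.mp h' with h'' | h''
          · exact ⟨j, by simp [hvdef, Ne.symm hij, h'']⟩
          · exact ⟨k, by simp [hvdef, Ne.symm hik, Ne.symm hjk, h'']⟩
      -- get a direction w with nonpositive cost and a negative coordinate
      obtain ⟨w, hw1, hw2, hwsupp, hwneg, hwal⟩ : ∃ w : Fin n → ℝ,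
          (∑ l, c1 l * w l = 0) ∧ (∑ l, c2 l * w l = 0) ∧
          (∀ l, w l ≠ 0 → (l = i ∨ l = j ∨ l = k)) ∧ (∃ l, w l < 0) ∧
          (∑ l, al l * w l ≤ 0) := by
        have hnegsum : ∀ u : Fin n → ℝ, ∀ c : Fin n → ℝ,
            ∑ l, c l * (-u) l = -∑ l, c l * u l := by
          intro u c
          rw [← Finset.sum_neg_distrib]
          apply Finset.sum_congr rfl
          intro l _; simp [mul_neg]
        by_cases hneg : ∃ l, v l < 0
        · by_cases hsal : ∑ l, al l * v l ≤ 0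
          · exact ⟨v, hv1, hv2, hvsupp, hneg, hsal⟩
          · push_neg at hsal
            obtain ⟨l, hl⟩ : ∃ l, 0 < al l * v l := by
              by_contra hcon
              push_neg at hcon
              have : ∑ l, al l * v l ≤ 0 := Finset.sum_nonpos (fun l _ => hcon l)
              linarith
            have hvl : 0 < v l := by
              rcases lt_trichotomy (v l) 0 with h' | h' | h'
              · nlinarith [hal l]
              · rw [h'] at hl; simp at hl
              · exact h'
            refine ⟨-v, by rw [hnegsum v c1, hv1]; ring, by rw [hnegsum v c2, hv2]; ring,
              fun l' hl' => hvsupp l' (by simpa using hl'), ⟨l, by simpa using hvl⟩, ?_⟩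
            rw [hnegsum v al]; linarith
        · push_neg at hneg
          obtain ⟨l, hl⟩ := hvne
          have hvl : 0 < v l := lt_of_le_of_ne (hneg l) (Ne.symm hl)
          have hsal : 0 ≤ ∑ l, al l * v l :=
            Finset.sum_nonneg (fun l' _ => mul_nonneg (hal l') (hneg l'))
          refine ⟨-v, by rw [hnegsum v c1, hv1]; ring, by rw [hnegsum v c2, hv2]; ring,
            fun l' hl' => hvsupp l' (by simpa using hl'), ⟨l, by simpa using hvl⟩, ?_⟩
          rw [hnegsum v al]; linarith
      -- move along w until a coordinate of the support hits zero
      have hwsuppx : ∀ l, w l ≠ 0 → x l ≠ 0 := by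
        intro l hl
        rcases hwsupp l hl with h' | h' | h' <;> subst h'
        · exact hxsupp _ hi
        · exact hxsupp _ hj
        · exact hxsupp _ hk
      obtain ⟨lneg, hlneg⟩ := hwneg
      have hmemNeg : lneg ∈ Finset.univ.filter (fun l => w l < 0) :=
        Finset.mem_filter.mpr ⟨Finset.mem_univ _, hlneg⟩
      obtain ⟨l0, hl0mem, hl0min⟩ := Finset.exists_min_image
        (Finset.univ.filter (fun l => w l < 0)) (fun l => x l / (-w l)) ⟨lneg, hmemNeg⟩
      have hwl0 : w l0 < 0 := (Finset.mem_filter.mp hl0mem).2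
      set tstar := x l0 / (-w l0) with htstardef
      have htstar : 0 ≤ tstar := div_nonneg (hx l0) (by linarith)
      set x' : Fin n → ℝ := fun l => x l + tstar * w l with hx'def
      have hx' : ∀ l, 0 ≤ x' l := by
        intro l
        by_cases hwl : w l < 0
        · have hmin : tstar ≤ x l / (-w l) :=
            hl0min l (Finset.mem_filter.mpr ⟨Finset.mem_univ _, hwl⟩)
          have : (x l / (-w l)) * w l ≤ tstar * w l :=
            mul_le_mul_of_nonpos_right hmin (by linarith)
          have hne : (-w l) ≠ 0 := by intro h; rw [neg_eq_zero] at h; linarith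
          have heq : (x l / (-w l)) * w l = -x l := by
            rw [show x l / (-w l) * w l = -(x l / (-w l) * (-w l)) from by ring,
              div_mul_cancel₀ _ hne]
          simp only [hx'def]
          rw [heq] at this
          linarith
        · push_neg at hwl
          simp only [hx'def]
          have : 0 ≤ tstar * w l := mul_nonneg htstar hwl
          linarith [hx l]
      have hx'l0 : x' l0 = 0 := by
        have hne : (-w l0) ≠ 0 := by intro h; rw [neg_eq_zero] at h; linarith
        have heq : (x l0 / (-w l0)) * w l0 = -x l0 := by
          rw [show x l0 / (-w l0) * w l0 = -(x l0 / (-w l0) * (-w l0)) from by ring,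
            div_mul_cancel₀ _ hne]
        simp only [hx'def, htstardef]
        rw [heq]; ring
      have hzero : ∀ l, x l = 0 → x' l = 0 := by
        intro l hl
        have hwzl : w l = 0 := by
          by_contra hcon
          exact (hwsuppx l hcon) hl
        simp only [hx'def]
        rw [hl, hwzl]; ring
      have hl0supp : l0 ∈ supp := by
        apply Finset.mem_filter.mpr
        exact ⟨Finset.mem_univ _, hwsuppx l0 (by linarith)⟩
      have hsubset : (Finset.univ.filter (fun l => x' l ≠ 0)) ⊆ supp.erase l0 := by
        intro l hl
        have hxl' : x' l ≠ 0 := (Finset.mem_filter.mp hl).2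
        apply Finset.mem_erase.mpr
        constructor
        · intro hcon; subst hcon; exact hxl' hx'l0
        · apply Finset.mem_filter.mpr
          refine ⟨Finset.mem_univ _, ?_⟩
          intro hcon
          exact hxl' (hzero l hcon)
      have hcard' : (Finset.univ.filter (fun l => x' l ≠ 0)).card ≤ N := by
        have h1' := Finset.card_le_card hsubset
        have h2' := Finset.card_erase_of_mem hl0supp
        omega
      have hshift : ∀ c : Fin n → ℝ, ∑ l, c l * x' l = ∑ l, c l * x l + tstar * ∑ l, c l * w l := by
        intro c
        rw [Finset.mul_sum, ← Finset.sum_add_distrib]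
        apply Finset.sum_congr rfl
        intro l _
        simp only [hx'def]; ring
      have h1' : d1 ≤ ∑ l, c1 l * x' l := by rw [hshift c1, hw1, mul_zero]; linarith
      have h2' : d2 ≤ ∑ l, c2 l * x' l := by rw [hshift c2, hw2, mul_zero]; linarith
      obtain ⟨j', k', s, t, hs, ht, hh1, hh2, hh3⟩ := IH x' hx' h1' h2' hcard'
      refine ⟨j', k', s, t, hs, ht, hh1, hh2, ?_⟩
      have hcost : ∑ l, al l * x' l ≤ ∑ l, al l * x l := by
        rw [hshift al]
        nlinarith [mul_nonpos_of_nonneg_of_nonpos htstar hwal]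
      linarith



lemma descend {n : ℕ} (c1 c2 : Fin n → ℝ) (d1 d2 : ℝ)
    (hc1 : ∀ j, 0 ≤ c1 j) (hc2 : ∀ j, 0 ≤ c2 j) :
    ∃ B : ℕ, ∀ g : Fin n → ℕ,
      d1 ≤ ∑ j, c1 j * g j → d2 ≤ ∑ j, c2 j * g j →
      ∃ h : Fin n → ℕ, (∀ j, h j ≤ g j) ∧ (∀ j, h j ≤ B) ∧
        d1 ≤ ∑ j, c1 j * h j ∧ d2 ≤ ∑ j, c2 j * h j := by
  classical
  set Nj : Fin n → ℕ := fun j =>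
    ⌈max (if 0 < c1 j then d1 / c1 j else 0) (if 0 < c2 j then d2 / c2 j else 0)⌉₊ + 1 with hNj
  set B : ℕ := Finset.univ.sup Nj with hB
  have hkey : ∀ (j : Fin n) (M : ℕ), B < M →
      (c1 j = 0 ∨ d1 ≤ c1 j * ((M - 1 : ℕ) : ℝ)) ∧
      (c2 j = 0 ∨ d2 ≤ c2 j * ((M - 1 : ℕ) : ℝ)) := by
    intro j M hM
    have hNjB : Nj j ≤ B := Finset.le_sup (Finset.mem_univ j)
    have hM1 : Nj j ≤ M - 1 := by omega
    have hcast : (Nj j : ℝ) ≤ ((M - 1 : ℕ) : ℝ) := Nat.cast_le.mpr hM1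
    constructor
    · rcases eq_or_lt_of_le (hc1 j) with h | h
      · exact Or.inl h.symm
      · right
        have h1 : d1 / c1 j ≤ (Nj j : ℝ) := by
          rw [hNj]
          push_cast
          have := Nat.le_ceil (max (if 0 < c1 j then d1 / c1 j else 0)
            (if 0 < c2 j then d2 / c2 j else 0))
          have hle : d1 / c1 j ≤ max (if 0 < c1 j then d1 / c1 j else 0)
              (if 0 < c2 j then d2 / c2 j else 0) := by
            rw [if_pos h]; exact le_max_left _ _
          linarith
        have h2 : d1 / c1 j ≤ ((M - 1 : ℕ) : ℝ) := le_trans h1 hcast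
        calc d1 = c1 j * (d1 / c1 j) := by field_simp
          _ ≤ c1 j * ((M - 1 : ℕ) : ℝ) := mul_le_mul_of_nonneg_left h2 (hc1 j)
    · rcases eq_or_lt_of_le (hc2 j) with h | h
      · exact Or.inl h.symm
      · right
        have h1 : d2 / c2 j ≤ (Nj j : ℝ) := by
          rw [hNj]
          push_cast
          have := Nat.le_ceil (max (if 0 < c1 j then d1 / c1 j else 0)
            (if 0 < c2 j then d2 / c2 j else 0))
          have hle : d2 / c2 j ≤ max (if 0 < c1 j then d1 / c1 j else 0)
              (if 0 < c2 j then d2 / c2 j else 0) := by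
            rw [if_pos h]; exact le_max_right _ _
          linarith
        have h2 : d2 / c2 j ≤ ((M - 1 : ℕ) : ℝ) := le_trans h1 hcast
        calc d2 = c2 j * (d2 / c2 j) := by field_simp
          _ ≤ c2 j * ((M - 1 : ℕ) : ℝ) := mul_le_mul_of_nonneg_left h2 (hc2 j)
  refine ⟨B, ?_⟩
  suffices H : ∀ (s : ℕ) (g : Fin n → ℕ), ∑ j, g j ≤ s →
      d1 ≤ ∑ j, c1 j * g j → d2 ≤ ∑ j, c2 j * g j →
      ∃ h : Fin n → ℕ, (∀ j, h j ≤ g j) ∧ (∀ j, h j ≤ B) ∧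
        d1 ≤ ∑ j, c1 j * h j ∧ d2 ≤ ∑ j, c2 j * h j by
    intro g h1 h2
    exact H (∑ j, g j) g le_rfl h1 h2
  intro s
  induction s with
  | zero =>
    intro g hs h1 h2
    refine ⟨g, fun j => le_rfl, fun j => ?_, h1, h2⟩
    have h := Finset.single_le_sum (f := fun j => g j) (fun j _ => Nat.zero_le _) (Finset.mem_univ j)
    exact le_trans (le_trans h hs) (Nat.zero_le B)
  | succ s IH =>
    intro g hs h1 h2
    by_cases hbig : ∀ j, g j ≤ B
    · exact ⟨g, fun j => le_rfl, hbig, h1, h2⟩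
    push_neg at hbig
    obtain ⟨j0, hj0⟩ := hbig
    have hj0lt : B < g j0 := hj0
    have hgpos : 1 ≤ g j0 := by omega
    set g' : Fin n → ℕ := Function.update g j0 (g j0 - 1) with hg'
    have hshift : ∀ c : Fin n → ℝ, ∑ j, c j * (g' j : ℝ) = (∑ j, c j * (g j : ℝ)) - c j0 := by
      intro c
      have expand : ∀ j, c j * (g' j : ℝ) = c j * (g j : ℝ) - (if j = j0 then c j0 else 0) := by
        intro j
        by_cases h : j = j0
        · subst h
          rw [hg', Function.update_self]
          rw [Nat.cast_sub hgpos]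
          push_cast
          simp
          ring
        · rw [hg', Function.update_of_ne h]
          simp [h]
      rw [Finset.sum_congr rfl (fun j _ => expand j), Finset.sum_sub_distrib]
      congr 1
      rw [Finset.sum_ite_eq' Finset.univ j0 (fun _ => c j0)]
      simp
    have hterm : ∀ (c : Fin n → ℝ), (∀ j, 0 ≤ c j) → c j0 * (g' j0 : ℝ) ≤ ∑ j, c j * (g' j : ℝ) :=
      fun c hc => Finset.single_le_sum (f := fun j => c j * (g' j : ℝ))
        (fun j _ => mul_nonneg (hc j) (Nat.cast_nonneg _)) (Finset.mem_univ j0)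
    have hg'j0 : g' j0 = g j0 - 1 := by rw [hg', Function.update_self]
    have h1' : d1 ≤ ∑ j, c1 j * (g' j : ℝ) := by
      rcases (hkey j0 (g j0) hj0lt).1 with h | h
      · rw [hshift c1, h]; linarith
      · have := hterm c1 hc1
        rw [hg'j0] at this
        linarith
    have h2' : d2 ≤ ∑ j, c2 j * (g' j : ℝ) := by
      rcases (hkey j0 (g j0) hj0lt).2 with h | h
      · rw [hshift c2, h]; linarith
      · have := hterm c2 hc2
        rw [hg'j0] at this
        linarith
    have hsum' : ∑ j, g' j ≤ s := by
      have hsplit : ∑ j, g' j = (g j0 - 1) + ∑ j ∈ Finset.univ.erase j0, g j := by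
        rw [hg', Finset.sum_update_of_mem (Finset.mem_univ j0)]
        congr 1
        apply Finset.sum_congr
        · rw [Finset.erase_eq]
        · intros; rfl
      have hsplit2 : ∑ j, g j = g j0 + ∑ j ∈ Finset.univ.erase j0, g j :=
        (Finset.add_sum_erase Finset.univ g (Finset.mem_univ j0)).symm
      omega
    obtain ⟨h, hh1, hh2, hh3, hh4⟩ := IH g' hsum' h1' h2'
    refine ⟨h, fun j => le_trans (hh1 j) ?_, hh2, hh3, hh4⟩
    by_cases hj : j = j0
    · subst hj; rw [hg'j0]; omega
    · rw [hg', Function.update_of_ne hj]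

def SrealSet {n : ℕ} (c1 c2 : Fin n → ℝ) (d1 d2 : ℝ) : Set (Fin n → ℝ) :=
  {x | (∀ j, 0 ≤ x j) ∧ (∀ j, ∃ z : ℤ, x j = (z : ℝ)) ∧
    d1 ≤ ∑ j, c1 j * x j ∧ d2 ≤ ∑ j, c2 j * x j}

lemma shift_mem_Sreal {n : ℕ} (c1 c2 : Fin n → ℝ) (d1 d2 : ℝ)
    (hc1 : ∀ j, 0 ≤ c1 j) (hc2 : ∀ j, 0 ≤ c2 j)
    {z : Fin n → ℝ} (hz : z ∈ SrealSet c1 c2 d1 d2) (j : Fin n) (m : ℕ) :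
    (z + (m : ℝ) • (fun l => if l = j then (1:ℝ) else 0)) ∈ SrealSet c1 c2 d1 d2 := by
  obtain ⟨hz0, hzint, hz1, hz2⟩ := hz
  have happ : ∀ l, (z + (m : ℝ) • (fun l => if l = j then (1:ℝ) else 0)) l
      = z l + (if l = j then (m:ℝ) else 0) := by
    intro l
    simp only [Pi.add_apply, Pi.smul_apply, smul_eq_mul]
    split_ifs <;> ring
  have hsum : ∀ c : Fin n → ℝ,
      ∑ l, c l * (z + (m : ℝ) • (fun l => if l = j then (1:ℝ) else 0)) l
        = (∑ l, c l * z l) + c j * m := by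
    intro c
    rw [← dot1 c j (m : ℝ), ← Finset.sum_add_distrib]
    apply Finset.sum_congr rfl
    intro l _
    rw [happ l]; ring
  refine ⟨?_, ?_, ?_, ?_⟩
  · intro l
    rw [happ l]
    split_ifs
    · have := hz0 l; positivity
    · simpa using hz0 l
  · intro l
    obtain ⟨w, hw⟩ := hzint l
    rw [happ l]
    split_ifs
    · exact ⟨w + m, by rw [hw]; push_cast; ring⟩
    · exact ⟨w, by rw [hw]; ring⟩
  · rw [hsum c1]
    have : 0 ≤ c1 j * m := mul_nonneg (hc1 j) (Nat.cast_nonneg m)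
    linarith
  · rw [hsum c2]
    have : 0 ≤ c2 j * m := mul_nonneg (hc2 j) (Nat.cast_nonneg m)
    linarith

lemma point_add_single_mem {n : ℕ} (c1 c2 : Fin n → ℝ) (d1 d2 : ℝ)
    (hc1 : ∀ j, 0 ≤ c1 j) (hc2 : ∀ j, 0 ≤ c2 j)
    {z : Fin n → ℝ} (hz : z ∈ SrealSet c1 c2 d1 d2) (j : Fin n) {t : ℝ} (ht : 0 ≤ t) :
    (z + t • (fun l => if l = j then (1:ℝ) else 0)) ∈ convexHull ℝ (SrealSet c1 c2 d1 d2) := by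
  set m : ℕ := ⌊t⌋₊ with hm
  set θ : ℝ := t - m with hθ
  have hθ0 : 0 ≤ θ := by
    have := Nat.floor_le ht; rw [hθ]; linarith
  have hθ1 : θ ≤ 1 := by
    have := Nat.lt_floor_add_one t; rw [hθ]; push_cast at this ⊢; linarith
  have hz0 := shift_mem_Sreal c1 c2 d1 d2 hc1 hc2 hz j m
  have hz1 := shift_mem_Sreal c1 c2 d1 d2 hc1 hc2 hz j (m + 1)
  have hconv := convex_convexHull ℝ (SrealSet c1 c2 d1 d2)
  have hmem := hconv (subset_convexHull ℝ _ hz0) (subset_convexHull ℝ _ hz1)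
    (by linarith : (0:ℝ) ≤ 1 - θ) hθ0 (by ring)
  convert hmem using 1
  funext l
  simp only [Pi.add_apply, Pi.smul_apply, smul_eq_mul, Pi.add_apply]
  push_cast
  split_ifs <;> ring

lemma hull_add_single_mem {n : ℕ} (c1 c2 : Fin n → ℝ) (d1 d2 : ℝ)
    (hc1 : ∀ j, 0 ≤ c1 j) (hc2 : ∀ j, 0 ≤ c2 j)
    {u : Fin n → ℝ} (hu : u ∈ convexHull ℝ (SrealSet c1 c2 d1 d2)) (j : Fin n) {t : ℝ}
    (ht : 0 ≤ t) :
    (u + t • (fun l => if l = j then (1:ℝ) else 0)) ∈ convexHull ℝ (SrealSet c1 c2 d1 d2) := by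
  rw [convexHull_eq] at hu
  obtain ⟨ι, tf, w, zf, hw0, hw1, hzf, hcm⟩ := hu
  have hrep : u = ∑ i ∈ tf, w i • zf i := by
    rw [← hcm, Finset.centerMass_eq_of_sum_1 _ _ hw1]
  have hident : u + t • (fun l => if l = j then (1:ℝ) else 0)
      = ∑ i ∈ tf, w i • (zf i + t • (fun l => if l = j then (1:ℝ) else 0)) := by
    rw [hrep]
    rw [Finset.sum_congr rfl (fun i _ => smul_add (w i) (zf i)
      (t • (fun l => if l = j then (1:ℝ) else 0)))]
    rw [Finset.sum_add_distrib, ← Finset.sum_smul, hw1, one_smul]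
  rw [hident]
  exact (convex_convexHull ℝ (SrealSet c1 c2 d1 d2)).sum_mem hw0 hw1
    (fun i hi => point_add_single_mem c1 c2 d1 d2 hc1 hc2 (hzf i hi) j ht)

lemma hull_add_nonneg_mem {n : ℕ} (c1 c2 : Fin n → ℝ) (d1 d2 : ℝ)
    (hc1 : ∀ j, 0 ≤ c1 j) (hc2 : ∀ j, 0 ≤ c2 j)
    {u v : Fin n → ℝ} (hu : u ∈ convexHull ℝ (SrealSet c1 c2 d1 d2)) (hv : ∀ j, 0 ≤ v j) :
    (u + v) ∈ convexHull ℝ (SrealSet c1 c2 d1 d2) := by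
  classical
  suffices H : ∀ (fs : Finset (Fin n)) (u : Fin n → ℝ),
      u ∈ convexHull ℝ (SrealSet c1 c2 d1 d2) →
      (u + fun l => if l ∈ fs then v l else 0) ∈ convexHull ℝ (SrealSet c1 c2 d1 d2) by
    have := H Finset.univ u hu
    simpa using this
  intro fs
  induction fs using Finset.induction with
  | empty =>
    intro u hu
    convert hu using 1
    funext l
    simp
  | @insert a fs ha IH =>
    intro u hu
    have hstep := hull_add_single_mem c1 c2 d1 d2 hc1 hc2 hu a (hv a)
    have := IH _ hstep
    convert this using 1
    funext l
    simp only [Pi.add_apply, Pi.smul_apply, smul_eq_mul]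
    by_cases h1 : l = a
    · subst h1
      rw [if_pos (Finset.mem_insert_self _ _), if_neg ha]
      ring_nf
      simp
    · by_cases h2 : l ∈ fs
      · rw [if_pos (Finset.mem_insert_of_mem h2), if_pos h2, if_neg h1]
        ring
      · rw [if_neg (by simp [h1, h2]), if_neg h2, if_neg h1]
        ring

open Pointwise in
lemma cheap_int_point {n : ℕ} (hn : 0 < n) (c1 c2 alf : Fin n → ℝ) (d1 d2 : ℝ)
    (hc1 : ∀ j, 0 ≤ c1 j) (hc2 : ∀ j, 0 ≤ c2 j)
    (hcd1 : ∀ j, c1 j ≤ d1) (hcd2 : ∀ j, c2 j ≤ d2)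
    (half : ∀ j, 0 ≤ alf j)
    (x : Fin n → ℝ) (hx : ∀ j, 0 ≤ x j)
    (h1 : d1 ≤ ∑ j, c1 j * x j) (h2 : d2 ≤ ∑ j, c2 j * x j) :
    ∃ g : Fin n → ℕ, d1 ≤ ∑ j, c1 j * (g j : ℝ) ∧ d2 ≤ ∑ j, c2 j * (g j : ℝ) ∧
      ∑ j, alf j * (g j : ℝ) ≤ 5/2 * ∑ j, alf j * x j := by
  obtain ⟨j, k, s, t, hs, ht, hj1, hj2, hcost⟩ :=
    supportReduce hn c1 c2 alf d1 d2 hc1 hc2 half x hx h1 h2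
  obtain ⟨p, q, hp1, hp2, hp3⟩ := round2 d1 d2 (c1 j) (c1 k) (c2 j) (c2 k)
    (5/2*s) (5/2*t) (alf j) (alf k) (hc1 j) (hcd1 j) (hc1 k) (hcd1 k)
    (hc2 j) (hcd2 j) (hc2 k) (hcd2 k) (by linarith) (by linarith)
    (by linarith) (by linarith) (half j) (half k)
  refine ⟨fun l => (if l = j then p else 0) + (if l = k then q else 0), ?_, ?_, ?_⟩
  all_goals {
    have hcast : ∀ (c : Fin n → ℝ),
        ∑ l, c l * ((((if l = j then p else 0) + (if l = k then q else 0)) : ℕ) : ℝ)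
          = c j * p + c k * q := by
      intro c
      have hpt : ∀ l, c l * ((((if l = j then p else 0) + (if l = k then q else 0)) : ℕ) : ℝ)
          = c l * (if l = j then (p:ℝ) else 0) + c l * (if l = k then (q:ℝ) else 0) := by
        intro l
        push_cast
        split_ifs <;> ring
      rw [Finset.sum_congr rfl fun l _ => hpt l, Finset.sum_add_distrib, dot1, dot1]
    rw [hcast]
    first
      | exact hp1
      | exact hp2
      | linarith
  }

open Pointwise in
lemma main2row {n : ℕ} (hn : 0 < n) (c1 c2 : Fin n → ℝ) (d1 d2 : ℝ)
    (hc1 : ∀ j, 0 ≤ c1 j) (hc2 : ∀ j, 0 ≤ c2 j)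
    (hcd1 : ∀ j, c1 j ≤ d1) (hcd2 : ∀ j, c2 j ≤ d2)
    (x : Fin n → ℝ) (hx : ∀ j, 0 ≤ x j)
    (h1 : d1 ≤ ∑ j, c1 j * x j) (h2 : d2 ≤ ∑ j, c2 j * x j) :
    (5/2 : ℝ) • x ∈ convexHull ℝ (SrealSet c1 c2 d1 d2) := by
  classical
  obtain ⟨B, hB⟩ := descend c1 c2 d1 d2 hc1 hc2
  set toR : (Fin n → ℕ) → (Fin n → ℝ) := fun g => (fun j => (g j : ℝ)) with htoR
  set F : Set (Fin n → ℝ) :=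
    toR '' {g | (∀ j, g j ≤ B) ∧ d1 ≤ ∑ j, c1 j * (g j:ℝ) ∧ d2 ≤ ∑ j, c2 j * (g j:ℝ)} with hF
  have hFfin : F.Finite := by
    apply Set.Finite.image
    apply Set.Finite.subset (Set.Finite.pi (fun j : Fin n => Set.finite_Iic B))
    intro g hg
    simp only [Set.mem_pi, Set.mem_univ, Set.mem_Iic, forall_true_left]
    intro j
    exact hg.1 j
  have hFS : F ⊆ SrealSet c1 c2 d1 d2 := by
    rintro w ⟨g, hg, rfl⟩
    exact ⟨fun j => Nat.cast_nonneg _, fun j => ⟨(g j : ℤ), by push_cast; rfl⟩, hg.2.1, hg.2.2⟩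
  set Orth : Set (Fin n → ℝ) := {v | ∀ j, 0 ≤ v j} with hOrthdef
  set C : Set (Fin n → ℝ) := convexHull ℝ F + Orth with hC
  have hOrthConvex : Convex ℝ Orth := by
    intro a ha b hb μ ν hμ hν hμν
    intro j
    exact add_nonneg (mul_nonneg hμ (ha j)) (mul_nonneg hν (hb j))
  have hOrthClosed : IsClosed Orth := by
    have : Orth = ⋂ j, {v : Fin n → ℝ | 0 ≤ v j} := by
      ext v; simp [hOrthdef, Set.mem_iInter]
    rw [this]
    exact isClosed_iInter fun j => isClosed_le continuous_const (continuous_apply j)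
  have hCconvex : Convex ℝ C := (convex_convexHull ℝ F).add hOrthConvex
  have hCclosed : IsClosed C := hOrthClosed.add_left_of_isCompact (hFfin.isCompact_convexHull (𝕜 := ℝ))
  have hCsub : C ⊆ convexHull ℝ (SrealSet c1 c2 d1 d2) := by
    rintro w hw
    obtain ⟨u, hu, v, hv, rfl⟩ := Set.mem_add.mp hw
    exact hull_add_nonneg_mem c1 c2 d1 d2 hc1 hc2 (convexHull_mono hFS hu) hv
  have hCup : ∀ w ∈ C, ∀ v : Fin n → ℝ, (∀ j, 0 ≤ v j) → w + v ∈ C := by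
    rintro w hw v hv
    obtain ⟨u, hu, v0, hv0, rfl⟩ := Set.mem_add.mp hw
    exact Set.mem_add.mpr ⟨u, hu, v0 + v, fun j => add_nonneg (hv0 j) (hv j), by abel⟩
  have hgmemC : ∀ g : Fin n → ℕ, d1 ≤ ∑ j, c1 j * (g j:ℝ) → d2 ≤ ∑ j, c2 j * (g j:ℝ) →
      toR g ∈ C := by
    intro g hg1 hg2
    obtain ⟨h, hh1, hh2, hh3, hh4⟩ := hB g hg1 hg2
    refine Set.mem_add.mpr ⟨toR h, subset_convexHull ℝ F ⟨h, ⟨hh2, hh3, hh4⟩, rfl⟩,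
      (fun j => (g j : ℝ) - h j), fun j => sub_nonneg.mpr (Nat.cast_le.mpr (hh1 j)), ?_⟩
    funext j
    simp [htoR]
  suffices hmemC : (5/2:ℝ) • x ∈ C from hCsub hmemC
  by_contra hyC
  obtain ⟨f, u, hfy, hfC⟩ := geometric_hahn_banach_point_closed hCconvex hCclosed hyC
  set alf : Fin n → ℝ := fun i => f (fun l => if i = l then (1:ℝ) else 0) with halfdef
  have hf_eq : ∀ w : Fin n → ℝ, f w = ∑ l, alf l * w l := by
    intro w
    have hlin := LinearMap.pi_apply_eq_sum_univ (f.toLinearMap) w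
    have : f w = ∑ l, w l * alf l := by
      simpa [smul_eq_mul, halfdef] using hlin
    rw [this]
    exact Finset.sum_congr rfl fun l _ => mul_comm _ _
  obtain ⟨g0, hg01, hg02, _⟩ := cheap_int_point hn c1 c2 (fun _ => 0) d1 d2 hc1 hc2 hcd1 hcd2
    (fun _ => le_rfl) x hx h1 h2
  have hw0 : toR g0 ∈ C := hgmemC g0 hg01 hg02
  have halfpos : ∀ i, 0 ≤ alf i := by
    intro i
    by_contra hneg
    push_neg at hneg
    have hfw0 : u < f (toR g0) := hfC _ hw0
    set T : ℝ := (f (toR g0) - u) / (-alf i) + 1 with hT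
    have hTpos : 0 ≤ T := by
      have h0 : 0 ≤ (f (toR g0) - u) / (-alf i) := div_nonneg (by linarith) (by linarith)
      rw [hT]
      linarith
    have hmem : toR g0 + T • (fun l => if i = l then (1:ℝ) else 0) ∈ C := by
      apply hCup _ hw0
      intro j
      simp only [Pi.smul_apply, smul_eq_mul]
      split_ifs
      · simpa using hTpos
      · simp
    have hval : f (toR g0 + T • (fun l => if i = l then (1:ℝ) else 0))
        = f (toR g0) + T * alf i := by
      rw [map_add, map_smul, smul_eq_mul, halfdef]
    have hcontr := hfC _ hmem
    rw [hval] at hcontr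
    have hne : (-alf i) ≠ 0 := by intro h; rw [neg_eq_zero] at h; linarith
    have h' : (f (toR g0) - u) / (-alf i) * alf i = -(f (toR g0) - u) := by
      rw [show (f (toR g0) - u) / (-alf i) * alf i
          = -((f (toR g0) - u) / (-alf i) * (-alf i)) from by ring, div_mul_cancel₀ _ hne]
    have hTalf : T * alf i = -(f (toR g0) - u) + alf i := by
      rw [hT, add_mul, one_mul, h']
    linarith
  obtain ⟨g, hg1, hg2, hg3⟩ := cheap_int_point hn c1 c2 alf d1 d2 hc1 hc2 hcd1 hcd2
    halfpos x hx h1 h2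
  have hgC := hfC _ (hgmemC g hg1 hg2)
  have h6 : f (toR g) = ∑ l, alf l * (g l : ℝ) := hf_eq (toR g)
  have h5 : f ((5/2:ℝ) • x) = 5/2 * ∑ l, alf l * x l := by
    rw [hf_eq, Finset.mul_sum]
    apply Finset.sum_congr rfl
    intro l _
    simp only [Pi.smul_apply, smul_eq_mul]
    ring
  rw [h6] at hgC
  rw [h5] at hfy
  linarith

lemma sumsingle {m : ℕ} (i : Fin m) (R : Fin m → ℝ) :
    ∑ i', (Pi.single i 1 : Fin m → ℝ) i' * R i' = R i := by
  rw [Finset.sum_eq_single i]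
  · simp
  · intro i' _ hne; simp [Pi.single_apply, hne]
  · intro h; exact absurd (Finset.mem_univ i) h

lemma aggswap {m n : ℕ} (A : Matrix (Fin m) (Fin n) ℚ) (l : Fin m → ℝ) (w : Fin n → ℝ) :
    ∑ j, (∑ i, l i * (A i j : ℝ)) * w j = ∑ i, l i * ∑ j, (A i j : ℝ) * w j := by
  calc ∑ j, (∑ i, l i * (A i j : ℝ)) * w j = ∑ j, ∑ i, l i * (A i j : ℝ) * w j := by
        apply Finset.sum_congr rfl; intro j _; rw [Finset.sum_mul]
    _ = ∑ i, ∑ j, l i * (A i j : ℝ) * w j := Finset.sum_comm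
    _ = ∑ i, l i * ∑ j, (A i j : ℝ) * w j := by
        apply Finset.sum_congr rfl; intro i _
        rw [Finset.mul_sum]
        apply Finset.sum_congr rfl; intro j _; ring

lemma row_facts {m n : ℕ} (hm : 2 ≤ m) (A : Matrix (Fin m) (Fin n) ℚ) (b : Fin m → ℚ)
    {x : Fin n → ℝ} (hx : x ∈ coverRow2Closure A b) :
    (∀ j, 0 ≤ x j) ∧ ∀ i, (b i : ℝ) ≤ ∑ j, (A i j : ℝ) * x j := by
  simp only [coverRow2Closure, Set.mem_iInter] at hx
  have h0 : (0:ℕ) < m := by omega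
  have h1m : (1:ℕ) < m := by omega
  have key : ∀ i : Fin m, (∀ j, 0 ≤ x j) ∧ (b i : ℝ) ≤ ∑ j, (A i j : ℝ) * x j := by
    intro i
    obtain ⟨i2, hne⟩ : ∃ i2 : Fin m, i ≠ i2 := by
      by_cases hi : i = ⟨0, h0⟩
      · exact ⟨⟨1, h1m⟩, by rw [hi]; simp [Fin.ext_iff]⟩
      · exact ⟨⟨0, h0⟩, hi⟩
    have hmem := hx i i2 hne
    rw [coverAggIntHull2] at hmem
    set H : Set (Fin n → ℝ) := {w | (∀ j, 0 ≤ w j) ∧ (b i : ℝ) ≤ ∑ j, (A i j : ℝ) * w j} with hH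
    have hsub : {w : Fin n → ℝ | (∀ j, 0 ≤ w j) ∧ (∀ j, ∃ z : ℤ, w j = (z : ℝ)) ∧
        (∑ i', (Pi.single i 1 : Fin m → ℝ) i' * ∑ j, (A i' j : ℝ) * w j
          ≥ ∑ i', (Pi.single i 1 : Fin m → ℝ) i' * (b i' : ℝ)) ∧
        (∑ i', (Pi.single i2 1 : Fin m → ℝ) i' * ∑ j, (A i' j : ℝ) * w j ≥
          ∑ i', (Pi.single i2 1 : Fin m → ℝ) i' * (b i' : ℝ))} ⊆ H := by
      intro w ⟨hw0, _, hw1, _⟩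
      rw [sumsingle i (fun i' => ∑ j, (A i' j : ℝ) * w j),
        sumsingle i (fun i' => (b i' : ℝ))] at hw1
      exact ⟨hw0, hw1⟩
    have hHconv : Convex ℝ H := by
      intro w1 hw1 w2 hw2 aa bb ha hb hab
      constructor
      · intro j
        exact add_nonneg (mul_nonneg ha (hw1.1 j)) (mul_nonneg hb (hw2.1 j))
      · have hsum : ∑ j, (A i j : ℝ) * (aa • w1 + bb • w2) j
            = aa * (∑ j, (A i j : ℝ) * w1 j) + bb * (∑ j, (A i j : ℝ) * w2 j) := by
          rw [Finset.mul_sum, Finset.mul_sum, ← Finset.sum_add_distrib]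
          apply Finset.sum_congr rfl; intro j _
          simp only [Pi.add_apply, Pi.smul_apply, smul_eq_mul]
          ring
        rw [hsum]
        have hb1 := mul_le_mul_of_nonneg_left hw1.2 ha
        have hb2 := mul_le_mul_of_nonneg_left hw2.2 hb
        have hsum1 : aa * (b i : ℝ) + bb * (b i : ℝ) = (b i : ℝ) := by
          rw [← add_mul, hab, one_mul]
        linarith
    have := convexHull_min hsub hHconv hmem
    exact ⟨this.1, this.2⟩
  exact ⟨(key ⟨0, h0⟩).1, fun i => (key i).2⟩

/-- For a covering polyhedron `P = {x ≥ 0 : Ax ≥ b}` with rational data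
and `m ≥ 2` constraints, `2-𝒜(P) ⊆ (1/2.5) · 𝒜₂(P)`. -/
theorem covering_row2Closure_subset_smul_agg2Closure
    {m n : ℕ} (hm : 2 ≤ m) (hn : 0 < n)
    (A : Matrix (Fin m) (Fin n) ℚ) (b : Fin m → ℚ)
    (hA : ∀ i j, 0 ≤ A i j) (hb : ∀ i, 0 ≤ b i) (hAb : ∀ i j, A i j ≤ b i) :
    coverRow2Closure A b ⊆ (1 / 2.5 : ℝ) • coverAgg2Closure A b := by
  intro x hx
  obtain ⟨hx0, hrows⟩ := row_facts hm A b hx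
  rw [Set.mem_smul_set]
  refine ⟨(5/2 : ℝ) • x, ?_, ?_⟩
  · rw [coverAgg2Closure]
    refine Set.mem_iInter₂.mpr fun l1 hl1 => Set.mem_iInter₂.mpr fun l2 hl2 => ?_
    have hl1' : ∀ i, 0 ≤ l1 i := hl1
    have hl2' : ∀ i, 0 ≤ l2 i := hl2
    have hc1 : ∀ j, 0 ≤ ∑ i, l1 i * (A i j : ℝ) := fun j =>
      Finset.sum_nonneg fun i _ => mul_nonneg (hl1' i) (by exact_mod_cast hA i j)
    have hc2 : ∀ j, 0 ≤ ∑ i, l2 i * (A i j : ℝ) := fun j =>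
      Finset.sum_nonneg fun i _ => mul_nonneg (hl2' i) (by exact_mod_cast hA i j)
    have hcd1 : ∀ j, ∑ i, l1 i * (A i j : ℝ) ≤ ∑ i, l1 i * (b i : ℝ) := fun j =>
      Finset.sum_le_sum fun i _ =>
        mul_le_mul_of_nonneg_left (by exact_mod_cast hAb i j) (hl1' i)
    have hcd2 : ∀ j, ∑ i, l2 i * (A i j : ℝ) ≤ ∑ i, l2 i * (b i : ℝ) := fun j =>
      Finset.sum_le_sum fun i _ =>
        mul_le_mul_of_nonneg_left (by exact_mod_cast hAb i j) (hl2' i)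
    have h1 : ∑ i, l1 i * (b i : ℝ) ≤ ∑ j, (∑ i, l1 i * (A i j : ℝ)) * x j := by
      rw [aggswap]
      exact Finset.sum_le_sum fun i _ => mul_le_mul_of_nonneg_left (hrows i) (hl1' i)
    have h2 : ∑ i, l2 i * (b i : ℝ) ≤ ∑ j, (∑ i, l2 i * (A i j : ℝ)) * x j := by
      rw [aggswap]
      exact Finset.sum_le_sum fun i _ => mul_le_mul_of_nonneg_left (hrows i) (hl2' i)
    have hmain := main2row hn (fun j => ∑ i, l1 i * (A i j : ℝ))
      (fun j => ∑ i, l2 i * (A i j : ℝ)) (∑ i, l1 i * (b i : ℝ)) (∑ i, l2 i * (b i : ℝ))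
      hc1 hc2 hcd1 hcd2 x hx0 h1 h2
    have hseteq : SrealSet (fun j => ∑ i, l1 i * (A i j : ℝ))
        (fun j => ∑ i, l2 i * (A i j : ℝ)) (∑ i, l1 i * (b i : ℝ)) (∑ i, l2 i * (b i : ℝ))
        = {w : Fin n → ℝ | (∀ j, 0 ≤ w j) ∧ (∀ j, ∃ z : ℤ, w j = (z : ℝ)) ∧
          (∑ i, l1 i * ∑ j, (A i j : ℝ) * w j ≥ ∑ i, l1 i * (b i : ℝ)) ∧
          (∑ i, l2 i * ∑ j, (A i j : ℝ) * w j ≥ ∑ i, l2 i * (b i : ℝ))} := by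
      ext w
      simp only [SrealSet, Set.mem_setOf_eq, ge_iff_le]
      rw [← aggswap A l1 w, ← aggswap A l2 w]
    rw [coverAggIntHull2, ← hseteq]
    exact hmain
  · rw [smul_smul, show (1 / 2.5 : ℝ) * (5/2) = 1 by norm_num, one_smul]
end

section
/- Let J⁺, J⁻ be a partition of [n] with J⁺ nonempty, let a ∈ ℝⁿ with a_j > 0 for all j, let b ≥ 0 with a_j ≤ b for all j ∈ J⁺, and let P = {x ∈ ℝⁿ_+ : Σ_{j∈J⁺} a_j x_j − Σ_{j∈J⁻} a_j x_j ≤ b}. Let c ∈ ℝⁿ satisfy c_j ≥ 0 for j ∈ J⁺ and c_j ≤ 0 for j ∈ J⁻, and suppose z^{LP} := sup{cᵀx : x ∈ P} is finite. Then z^{LP} ≤ 2·z^{IP}, where z^{IP} := sup{cᵀx : x ∈ P ∩ ℤⁿ}. -/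
/-- The sign-pattern polyhedron defined by a single non-trivial constraint
`Σ_{j∈J⁺} a_j x_j − Σ_{j∈J⁻} a_j x_j ≤ b` together with `x ≥ 0`. -/
def oneRowPoly {n : ℕ} (Jp Jn : Finset (Fin n)) (a : Fin n → ℝ) (b : ℝ) :
    Set (Fin n → ℝ) :=
  {x | (∀ j, 0 ≤ x j) ∧ ∑ j ∈ Jp, a j * x j - ∑ j ∈ Jn, a j * x j ≤ b}

private lemma sum_mul_point_mem {n : ℕ} (s : Finset (Fin n)) (g : Fin n → ℝ)
    (j0 k : Fin n) (v w : ℝ) (hj0 : j0 ∈ s) (hk : k ∉ s) :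
    ∑ j ∈ s, g j * (if j = j0 then v else if j = k then w else 0) = g j0 * v := by
  rw [Finset.sum_eq_single j0]
  · simp
  · intro j hj hne
    have hjk : j ≠ k := fun h => hk (h ▸ hj)
    simp [hne, hjk]
  · intro h; exact absurd hj0 h

private lemma sum_mul_point_notMem {n : ℕ} (s : Finset (Fin n)) (g : Fin n → ℝ)
    (j0 k : Fin n) (v w : ℝ) (hj0 : j0 ∉ s) (hk : k ∈ s) (hne : k ≠ j0) :
    ∑ j ∈ s, g j * (if j = j0 then v else if j = k then w else 0) = g k * w := by
  rw [Finset.sum_eq_single k]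
  · simp [hne]
  · intro j hj hjne
    have hjj0 : j ≠ j0 := fun h => hj0 (h ▸ hj)
    simp [hjne, hjj0]
  · intro h; exact absurd hk h

/-- For a one-constraint sign-pattern polyhedron (with `J⁺ ≠ ∅`, `a_j > 0`,
`0 ≤ b`, `a_j ≤ b` on `J⁺`) and a sign-pattern objective `c` whose supremum `z^LP` over `P`
is finite, `z^LP ≤ 2 · z^IP`, where `z^IP` is the supremum of the objective over the integer
points of `P`. -/
theorem oneRow_lp_le_two_mul_ip {n : ℕ}
    (Jp Jn : Finset (Fin n)) (hdisj : Disjoint Jp Jn) (hunion : Jp ∪ Jn = Finset.univ)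
    (hJp : Jp.Nonempty)
    (a : Fin n → ℝ) (ha : ∀ j, 0 < a j) (b : ℝ) (hb : 0 ≤ b) (hab : ∀ j ∈ Jp, a j ≤ b)
    (c : Fin n → ℝ) (hcp : ∀ j ∈ Jp, 0 ≤ c j) (hcn : ∀ j ∈ Jn, c j ≤ 0)
    (hbdd : BddAbove ((fun x => ∑ j, c j * x j) '' oneRowPoly Jp Jn a b)) :
    sSup ((fun x => ∑ j, c j * x j) '' oneRowPoly Jp Jn a b) ≤
      2 * sSup ((fun x => ∑ j, c j * x j) ''
        {x ∈ oneRowPoly Jp Jn a b | ∀ j, ∃ z : ℤ, x j = (z : ℝ)}) := by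
  classical
  -- split sums over univ into Jp and Jn
  have hsplit : ∀ g : Fin n → ℝ, ∑ j, g j = ∑ j ∈ Jp, g j + ∑ j ∈ Jn, g j := by
    intro g
    rw [← Finset.sum_union hdisj, hunion]
  -- maximizer of c j / a j over Jp
  obtain ⟨j0, hj0, hmax⟩ := Jp.exists_max_image (fun j => c j / a j) hJp
  set M : ℝ := c j0 / a j0 with hMdef
  have hM0 : 0 ≤ M := div_nonneg (hcp j0 hj0) (ha j0).le
  have hcj0 : c j0 = M * a j0 := (div_mul_cancel₀ (c j0) (ha j0).ne').symm
  have hcM : ∀ j ∈ Jp, c j ≤ M * a j := fun j hj =>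
    (div_le_iff₀ (ha j)).mp (hmax j hj)
  have hj0n : j0 ∉ Jn := Finset.disjoint_left.mp hdisj hj0
  -- from boundedness: M * a k ≤ -c k on Jn
  have hcnM : ∀ k ∈ Jn, c k ≤ -(M * a k) := by
    intro k hk
    by_contra hcon
    push_neg at hcon
    have hε : 0 < M * a k + c k := by linarith
    set ε := M * a k + c k with hεdef
    obtain ⟨ub, hub⟩ := hbdd
    set t : ℝ := max 0 ((ub - M * b) / ε + 1) with htdef
    have ht0 : 0 ≤ t := le_max_left _ _
    have hkp : k ∉ Jp := Finset.disjoint_right.mp hdisj hk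
    have hkj0 : k ≠ j0 := fun h => hj0n (h ▸ hk)
    set v : ℝ := (b + a k * t) / a j0 with hvdef
    have hv0 : 0 ≤ v := div_nonneg (add_nonneg hb (mul_nonneg (ha k).le ht0)) (ha j0).le
    have hv : a j0 * v = b + a k * t := by
      rw [hvdef, mul_comm, div_mul_cancel₀ _ (ha j0).ne']
    set x : Fin n → ℝ := fun j => if j = j0 then v else if j = k then t else 0 with hxdef
    have hxP : x ∈ oneRowPoly Jp Jn a b := by
      constructor
      · intro j
        by_cases h1 : j = j0
        · simp [hxdef, h1, hv0]
        · by_cases h2 : j = k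
          · simp [hxdef, h1, h2, hkj0, ht0]
          · simp [hxdef, h1, h2]
      · have h1 : ∑ j ∈ Jp, a j * x j = a j0 * v :=
          sum_mul_point_mem Jp a j0 k v t hj0 hkp
        have h2 : ∑ j ∈ Jn, a j * x j = a k * t :=
          sum_mul_point_notMem Jn a j0 k v t hj0n hk hkj0
        rw [h1, h2, hv]
        linarith
    have hobj : ∑ j, c j * x j = M * b + ε * t := by
      rw [hsplit (fun j => c j * x j)]
      have h1 : ∑ j ∈ Jp, c j * x j = c j0 * v :=
        sum_mul_point_mem Jp c j0 k v t hj0 hkp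
      have h2 : ∑ j ∈ Jn, c j * x j = c k * t :=
        sum_mul_point_notMem Jn c j0 k v t hj0n hk hkj0
      rw [h1, h2, hcj0, mul_assoc, hv, hεdef]
      ring
    have hle : M * b + ε * t ≤ ub := by
      have := hub ⟨x, hxP, hobj⟩
      linarith [this]
    have htbig : (ub - M * b) / ε + 1 ≤ t := le_max_right _ _
    have : ub - M * b + ε ≤ ε * t := by
      have := mul_le_mul_of_nonneg_left htbig hε.le
      calc ub - M * b + ε = ε * ((ub - M * b) / ε + 1) := by field_simp
        _ ≤ ε * t := this
    linarith
  -- every point of P has objective ≤ M * b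
  have hub : ∀ x ∈ oneRowPoly Jp Jn a b, ∑ j, c j * x j ≤ M * b := by
    intro x hx
    obtain ⟨hx0, hxc⟩ := hx
    rw [hsplit (fun j => c j * x j)]
    have h1 : ∑ j ∈ Jp, c j * x j ≤ ∑ j ∈ Jp, M * (a j * x j) := by
      apply Finset.sum_le_sum
      intro j hj
      have := mul_le_mul_of_nonneg_right (hcM j hj) (hx0 j)
      linarith [this]
    have h2 : ∑ j ∈ Jn, c j * x j ≤ ∑ j ∈ Jn, -(M * (a j * x j)) := by
      apply Finset.sum_le_sum
      intro j hj
      have := mul_le_mul_of_nonneg_right (hcnM j hj) (hx0 j)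
      nlinarith [this]
    have h3 : ∑ j ∈ Jp, M * (a j * x j) = M * ∑ j ∈ Jp, a j * x j := by
      rw [Finset.mul_sum]
    have h4 : ∑ j ∈ Jn, -(M * (a j * x j)) = -(M * ∑ j ∈ Jn, a j * x j) := by
      rw [Finset.sum_neg_distrib, Finset.mul_sum]
    have h5 : M * ∑ j ∈ Jp, a j * x j - M * ∑ j ∈ Jn, a j * x j ≤ M * b := by
      have := mul_le_mul_of_nonneg_left hxc hM0
      nlinarith [this]
    linarith
  -- the integer point
  set r : ℝ := b / a j0 with hrdef
  have hr1 : 1 ≤ r := (one_le_div (ha j0)).mpr (hab j0 hj0)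
  set m : ℕ := ⌊r⌋₊ with hmdef
  have hm1 : (1 : ℝ) ≤ (m : ℝ) := by
    have : 1 ≤ m := Nat.le_floor (by exact_mod_cast hr1)
    exact_mod_cast this
  have hmr : (m : ℝ) ≤ r := Nat.floor_le (by linarith)
  have hm_half : r / 2 ≤ (m : ℝ) := by
    have := Nat.sub_one_lt_floor r
    rcases le_total r 2 with h | h
    · linarith
    · push_cast at this ⊢
      linarith
  set y : Fin n → ℝ := fun j => if j = j0 then (m : ℝ) else 0 with hydef
  have hyP : y ∈ oneRowPoly Jp Jn a b := by
    constructor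
    · intro j
      by_cases h : j = j0 <;> simp [hydef, h] <;> linarith
    · have h1 : ∑ j ∈ Jp, a j * y j = a j0 * (m : ℝ) := by
        · rw [Finset.sum_eq_single j0]
          · simp [hydef]
          · intro j hj hne; simp [hydef, hne]
          · intro h; exact absurd hj0 h
      have h2 : ∑ j ∈ Jn, a j * y j = 0 := by
        apply Finset.sum_eq_zero
        intro j hj
        have : j ≠ j0 := fun h => hj0n (h ▸ hj)
        simp [hydef, this]
      rw [h1, h2, sub_zero]
      have : a j0 * (m : ℝ) ≤ a j0 * r := mul_le_mul_of_nonneg_left hmr (ha j0).le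
      have hbr : a j0 * r = b := by
        rw [hrdef, mul_comm, div_mul_cancel₀ _ (ha j0).ne']
      linarith
  have hyInt : ∀ j, ∃ z : ℤ, y j = (z : ℝ) := by
    intro j
    by_cases h : j = j0
    · exact ⟨(m : ℤ), by simp [hydef, h]⟩
    · exact ⟨0, by simp [hydef, h]⟩
  have hyObj : ∑ j, c j * y j = c j0 * (m : ℝ) := by
    rw [Finset.sum_eq_single j0]
    · simp [hydef]
    · intro j hj hne; simp [hydef, hne]
    · intro h; exact absurd (Finset.mem_univ j0) h
  -- assemble
  set IPset := ((fun x => ∑ j, c j * x j) ''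
      {x ∈ oneRowPoly Jp Jn a b | ∀ j, ∃ z : ℤ, x j = (z : ℝ)}) with hIP
  have hbddIP : BddAbove IPset := by
    apply hbdd.mono
    apply Set.image_mono
    exact Set.sep_subset _ _
  have hmem : c j0 * (m : ℝ) ∈ IPset := ⟨y, ⟨hyP, hyInt⟩, hyObj⟩
  have hIPge : c j0 * (m : ℝ) ≤ sSup IPset := le_csSup hbddIP hmem
  have hMb : M * b ≤ 2 * (c j0 * (m : ℝ)) := by
    have hbr : b = a j0 * r := by rw [hrdef, mul_comm, div_mul_cancel₀ _ (ha j0).ne']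
    rw [hcj0, hbr]
    nlinarith [hM0, (ha j0).le, hm_half, mul_nonneg hM0 (ha j0).le]
  have hne : ((fun x => ∑ j, c j * x j) '' oneRowPoly Jp Jn a b).Nonempty := by
    refine ⟨∑ j, c j * (0 : Fin n → ℝ) j, ⟨0, ⟨fun j => le_refl 0, ?_⟩, rfl⟩⟩
    simp [hb]
  apply csSup_le hne
  rintro v ⟨x, hx, rfl⟩
  calc ∑ j, c j * x j ≤ M * b := hub x hx
    _ ≤ 2 * (c j0 * (m : ℝ)) := hMb
    _ ≤ 2 * sSup IPset := by linarith
end
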